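/- arXiv:2002.04818 — 8 statements merged into one kernel-verified Lean document; each statement's English description precedes it below -/
import Mathlib

section
/- Let f ∈ K[x_1,...,x_s] and g ∈ K[y_1,...,y_t] be polynomials in disjoint sets of variables, viewed inside S = K[x_1,...,x_s,y_1,...,y_t], and let R, R_1, R_2 be the dual polynomial rings acting by partial differentiation. Then Ann_R(fg) = Ann_{R_1}(f)·R + Ann_{R_2}(g)·R, i.e., the apolar ideal of the product fg is generated by the apolar ideals of f and g in their respective variable sets. -/
set_option linter.unusedSectionVars false

open MvPolynomial

/-- The apolar action: `apol Φ f = Φ(∂/∂x₀,…,∂/∂xₙ) f`. -/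
noncomputable def apol {σ K : Type*} [CommRing K] (Φ f : MvPolynomial σ K) :
    MvPolynomial σ K :=
  (AddMonoidAlgebra.coeff Φ).sum fun m c =>
    (AddMonoidAlgebra.coeff f).sum fun n b =>
      if ∀ i ∈ m.support, m i ≤ n i then
        monomial (n - m) (c * b * ∏ i ∈ m.support, (Nat.descFactorial (n i) (m i) : K))
      else 0
namespace Apol

variable {K : Type*} [CommRing K] {σ : Type*} [Fintype σ]

def dfac (n m : σ →₀ ℕ) : ℕ := ∏ i, (n i).descFactorial (m i)

theorem dfac_support (n m : σ →₀ ℕ) :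
    (∏ i ∈ m.support, ((n i).descFactorial (m i) : K)) = (dfac n m : K) := by
  simp only [dfac, Nat.cast_prod]
  refine Finset.prod_subset (Finset.subset_univ _) ?_
  intro i _ hi
  rw [Finsupp.notMem_support_iff] at hi
  simp [hi]

theorem dfac_eq_zero {n m : σ →₀ ℕ} (h : ¬ ∀ i ∈ m.support, m i ≤ n i) : dfac n m = 0 := by
  push_neg at h
  obtain ⟨i, _, hi⟩ := h
  exact Finset.prod_eq_zero (Finset.mem_univ i) (Nat.descFactorial_eq_zero_iff_lt.2 hi)

theorem dfac_zero (n : σ →₀ ℕ) : dfac n 0 = 1 := by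
  simp [dfac]

theorem descFactorial_add_eq (N M' M : ℕ) :
    N.descFactorial (M + M') = N.descFactorial M' * (N - M').descFactorial M := by
  induction M with
  | zero => simp
  | succ M ih =>
    rw [show M + 1 + M' = (M + M') + 1 from by omega, Nat.descFactorial_succ, ih,
      Nat.descFactorial_succ, show N - (M + M') = N - M' - M from by omega]
    ring

theorem dfac_add (n m m' : σ →₀ ℕ) : dfac n (m + m') = dfac n m' * dfac (n - m') m := by
  simp only [dfac, ← Finset.prod_mul_distrib]
  refine Finset.prod_congr rfl fun i _ => ?_
  rw [Finsupp.add_apply, Finsupp.tsub_apply, descFactorial_add_eq]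

theorem apol_eq (Φ f : MvPolynomial σ K) :
    apol Φ f = (AddMonoidAlgebra.coeff Φ).sum fun m c => (AddMonoidAlgebra.coeff f).sum fun n b => monomial (n - m) (c * b * (dfac n m : K)) := by
  rw [apol]
  refine Finsupp.sum_congr fun m _ => Finsupp.sum_congr fun n _ => ?_
  split_ifs with h
  · rw [dfac_support]
  · rw [dfac_eq_zero h]; simp

noncomputable def dfacExp (m : σ →₀ ℕ) : MvPolynomial σ K →ₗ[K] MvPolynomial σ K :=
  Finsupp.lsum K (fun n => ((dfac n m : K)) • (monomial (n - m))) ∘ₗ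
    (AddMonoidAlgebra.coeffLinearEquiv K).toLinearMap

noncomputable def apolL : MvPolynomial σ K →ₗ[K] MvPolynomial σ K →ₗ[K] MvPolynomial σ K :=
  Finsupp.lsum K (fun m => LinearMap.toSpanSingleton K _ (dfacExp m)) ∘ₗ
    (AddMonoidAlgebra.coeffLinearEquiv K).toLinearMap

theorem apolL_apply (Φ f : MvPolynomial σ K) :
    apolL Φ f = (AddMonoidAlgebra.coeff Φ).sum fun m c => c • dfacExp m f := by
  rw [apolL, LinearMap.comp_apply]; erw [Finsupp.lsum_apply]
  rw [Finsupp.sum, Finsupp.sum, LinearMap.coe_sum, Finset.sum_apply]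
  rfl

theorem dfacExp_apply (m : σ →₀ ℕ) (f : MvPolynomial σ K) :
    dfacExp m f = (AddMonoidAlgebra.coeff f).sum fun n b => monomial (n - m) ((dfac n m : K) * b) := by
  rw [dfacExp, LinearMap.comp_apply]; erw [Finsupp.lsum_apply]
  refine Finsupp.sum_congr fun n _ => ?_
  simp [smul_monomial]

theorem apol_apolL (Φ f : MvPolynomial σ K) : apol Φ f = apolL Φ f := by
  rw [apol_eq, apolL_apply]
  refine Finsupp.sum_congr fun m _ => ?_
  rw [dfacExp_apply, Finsupp.smul_sum]
  refine Finsupp.sum_congr fun n _ => ?_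
  rw [smul_monomial, smul_eq_mul]
  congr 1
  ring

theorem apolL_monomial (m n : σ →₀ ℕ) (c b : K) :
    apolL (monomial m c) (monomial n b) = monomial (n - m) (c * ((dfac n m : K) * b)) := by
  rw [apolL_apply, sum_monomial_eq (by simp), dfacExp_apply,
    sum_monomial_eq (by simp), smul_monomial, smul_eq_mul]

theorem apolL_one (f : MvPolynomial σ K) : apolL 1 f = f := by
  induction f using MvPolynomial.induction_on' with
  | add p q hp hq => rw [map_add, hp, hq]
  | monomial n b =>
    rw [show (1 : MvPolynomial σ K) = monomial 0 1 from by rw [monomial_zero', C_1],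
      apolL_monomial, dfac_zero]
    simp

theorem apolL_mul (Φ Ψ f : MvPolynomial σ K) : apolL (Φ * Ψ) f = apolL Φ (apolL Ψ f) := by
  induction Φ using MvPolynomial.induction_on' with
  | add p q hp hq => simp only [add_mul, map_add, LinearMap.add_apply, hp, hq]
  | monomial m c =>
    induction Ψ using MvPolynomial.induction_on' with
    | add p q hp hq => simp only [mul_add, map_add, LinearMap.add_apply, hp, hq]
    | monomial m' c' =>
      induction f using MvPolynomial.induction_on' with
      | add p q hp hq => rw [map_add, map_add, hp, hq, map_add]
      | monomial n b =>
        rw [monomial_mul, apolL_monomial, apolL_monomial, apolL_monomial,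
          show n - (m + m') = n - m' - m from by
            ext i; simp only [Finsupp.tsub_apply, Finsupp.add_apply]; omega,
          dfac_add]
        push_cast
        congr 1
        ring

/-- The annihilator of `h` as an ideal. -/
noncomputable def ann (h : MvPolynomial σ K) : Ideal (MvPolynomial σ K) where
  carrier := {Φ | apolL Φ h = 0}
  add_mem' := by
    intro a b ha hb
    simp only [Set.mem_setOf_eq] at *
    rw [map_add, LinearMap.add_apply, ha, hb, add_zero]
  zero_mem' := by simp
  smul_mem' := by
    intro r Φ hΦ
    simp only [Set.mem_setOf_eq, smul_eq_mul] at *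
    rw [apolL_mul, hΦ, map_zero]

theorem mem_ann {h Φ : MvPolynomial σ K} : Φ ∈ ann h ↔ apolL Φ h = 0 := Iff.rfl


section Two

variable {K : Type*} [CommRing K] {σ₁ σ₂ : Type*} [Fintype σ₁] [Fintype σ₂]

theorem mapD_inl_inl (m : σ₁ →₀ ℕ) (i : σ₁) :
    Finsupp.mapDomain (Sum.inl : σ₁ → σ₁ ⊕ σ₂) m (Sum.inl i) = m i :=
  Finsupp.mapDomain_apply Sum.inl_injective m i

theorem mapD_inr_inr (m : σ₂ →₀ ℕ) (i : σ₂) :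
    Finsupp.mapDomain (Sum.inr : σ₂ → σ₁ ⊕ σ₂) m (Sum.inr i) = m i :=
  Finsupp.mapDomain_apply Sum.inr_injective m i

theorem mapD_inl_inr (m : σ₁ →₀ ℕ) (i : σ₂) :
    Finsupp.mapDomain (Sum.inl : σ₁ → σ₁ ⊕ σ₂) m (Sum.inr i) = 0 :=
  Finsupp.mapDomain_notin_range _ _ (by simp)

theorem mapD_inr_inl (m : σ₂ →₀ ℕ) (i : σ₁) :
    Finsupp.mapDomain (Sum.inr : σ₂ → σ₁ ⊕ σ₂) m (Sum.inl i) = 0 :=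
  Finsupp.mapDomain_notin_range _ _ (by simp)

noncomputable def mLeft (M : (σ₁ ⊕ σ₂) →₀ ℕ) : σ₁ →₀ ℕ :=
  M.comapDomain Sum.inl Sum.inl_injective.injOn

noncomputable def mRight (M : (σ₁ ⊕ σ₂) →₀ ℕ) : σ₂ →₀ ℕ :=
  M.comapDomain Sum.inr Sum.inr_injective.injOn

theorem mLeft_apply (M : (σ₁ ⊕ σ₂) →₀ ℕ) (i : σ₁) : mLeft M i = M (Sum.inl i) := rfl
theorem mRight_apply (M : (σ₁ ⊕ σ₂) →₀ ℕ) (i : σ₂) : mRight M i = M (Sum.inr i) := rfl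

theorem split_eq (M : (σ₁ ⊕ σ₂) →₀ ℕ) :
    M = Finsupp.mapDomain Sum.inl (mLeft M) + Finsupp.mapDomain Sum.inr (mRight M) := by
  ext x
  cases x with
  | inl i => rw [Finsupp.add_apply, mapD_inl_inl, mapD_inr_inl, mLeft_apply, add_zero]
  | inr i => rw [Finsupp.add_apply, mapD_inl_inr, mapD_inr_inr, mRight_apply, zero_add]

theorem mLeft_split (m₁ : σ₁ →₀ ℕ) (m₂ : σ₂ →₀ ℕ) :
    mLeft (Finsupp.mapDomain Sum.inl m₁ + Finsupp.mapDomain Sum.inr m₂) = m₁ := by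
  ext i
  rw [mLeft_apply, Finsupp.add_apply, mapD_inl_inl, mapD_inr_inl, add_zero]

theorem mRight_split (m₁ : σ₁ →₀ ℕ) (m₂ : σ₂ →₀ ℕ) :
    mRight (Finsupp.mapDomain Sum.inl m₁ + Finsupp.mapDomain Sum.inr m₂) = m₂ := by
  ext i
  rw [mRight_apply, Finsupp.add_apply, mapD_inl_inr, mapD_inr_inr, zero_add]

theorem sub_split (n₁ m₁ : σ₁ →₀ ℕ) (n₂ m₂ : σ₂ →₀ ℕ) :
    (Finsupp.mapDomain Sum.inl n₁ + Finsupp.mapDomain Sum.inr n₂)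
      - (Finsupp.mapDomain Sum.inl m₁ + Finsupp.mapDomain Sum.inr m₂)
    = Finsupp.mapDomain Sum.inl (n₁ - m₁) + Finsupp.mapDomain (Sum.inr : σ₂ → σ₁ ⊕ σ₂) (n₂ - m₂) := by
  ext x
  cases x with
  | inl i =>
    rw [Finsupp.tsub_apply]
    simp only [Finsupp.add_apply, mapD_inl_inl, mapD_inr_inl, add_zero, Finsupp.tsub_apply]
  | inr i =>
    rw [Finsupp.tsub_apply]
    simp only [Finsupp.add_apply, mapD_inl_inr, mapD_inr_inr, zero_add, Finsupp.tsub_apply]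

theorem dfac_split (n₁ m₁ : σ₁ →₀ ℕ) (n₂ m₂ : σ₂ →₀ ℕ) :
    dfac (Finsupp.mapDomain Sum.inl n₁ + Finsupp.mapDomain Sum.inr n₂)
      (Finsupp.mapDomain Sum.inl m₁ + Finsupp.mapDomain Sum.inr m₂)
    = dfac n₁ m₁ * dfac n₂ m₂ := by
  simp only [dfac]
  rw [Fintype.prod_sum_type]
  congr 1
  · refine Finset.prod_congr rfl fun i _ => ?_
    simp only [Finsupp.add_apply, mapD_inl_inl, mapD_inr_inl, add_zero]
  · refine Finset.prod_congr rfl fun i _ => ?_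
    simp only [Finsupp.add_apply, mapD_inl_inr, mapD_inr_inr, zero_add]

theorem apolL_rename_mul (Φ f : MvPolynomial σ₁ K) (Ψ g : MvPolynomial σ₂ K) :
    apolL (rename Sum.inl Φ * rename Sum.inr Ψ) (rename Sum.inl f * rename Sum.inr g)
      = rename Sum.inl (apolL Φ f) * rename Sum.inr (apolL Ψ g) := by
  induction Φ using MvPolynomial.induction_on' with
  | add p q hp hq => simp only [map_add, add_mul, LinearMap.add_apply, hp, hq]
  | monomial m₁ c₁ =>
    induction Ψ using MvPolynomial.induction_on' with
    | add p q hp hq => simp only [map_add, mul_add, LinearMap.add_apply, hp, hq]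
    | monomial m₂ c₂ =>
      induction f using MvPolynomial.induction_on' with
      | add p q hp hq => simp only [map_add, add_mul, hp, hq]
      | monomial n₁ b₁ =>
        induction g using MvPolynomial.induction_on' with
        | add p q hp hq => simp only [map_add, mul_add, hp, hq]
        | monomial n₂ b₂ =>
          rw [rename_monomial, rename_monomial, rename_monomial, rename_monomial,
            monomial_mul, monomial_mul, apolL_monomial, apolL_monomial, apolL_monomial,
            rename_monomial, rename_monomial, monomial_mul, sub_split, dfac_split]
          push_cast
          congr 1
          ring

open scoped Classical in
noncomputable def sliceMap (n : σ₂ →₀ ℕ) :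
    MvPolynomial (σ₁ ⊕ σ₂) K →ₗ[K] MvPolynomial σ₁ K :=
  Finsupp.lsum K (fun M =>
    if mRight M = n then (monomial (mLeft M) : K →ₗ[K] MvPolynomial σ₁ K) else 0) ∘ₗ
    (AddMonoidAlgebra.coeffLinearEquiv K).toLinearMap

theorem sliceMap_monomial (n : σ₂ →₀ ℕ) (M : (σ₁ ⊕ σ₂) →₀ ℕ) (α : K) :
    sliceMap n (monomial M α)
      = if mRight M = n then monomial (mLeft M) α else 0 := by
  classical
  rw [sliceMap, LinearMap.comp_apply]; erw [Finsupp.lsum_apply]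
  rw [LinearEquiv.coe_coe, AddMonoidAlgebra.coeffLinearEquiv_apply, sum_monomial_eq (by split_ifs <;> simp)]
  split_ifs <;> simp

theorem sliceMap_rename_mul (n : σ₂ →₀ ℕ) (a : MvPolynomial σ₁ K) (b : MvPolynomial σ₂ K) :
    sliceMap n (rename Sum.inl a * rename Sum.inr b) = coeff n b • a := by
  classical
  induction a using MvPolynomial.induction_on' with
  | add p q hp hq => simp only [map_add, add_mul, hp, hq, smul_add]
  | monomial m₁ α =>
    induction b using MvPolynomial.induction_on' with
    | add p q hp hq => simp only [map_add, mul_add, hp, hq, coeff_add, add_smul]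
    | monomial m₂ β =>
      rw [rename_monomial, rename_monomial, monomial_mul, sliceMap_monomial,
        mLeft_split, mRight_split, coeff_monomial]
      split_ifs with h
      · rw [smul_monomial, smul_eq_mul, mul_comm]
      · simp

theorem prod_indep {ι κ : Type*} (u : ι → MvPolynomial σ₁ K) (v : κ → MvPolynomial σ₂ K)
    (hu : LinearIndependent K u) (hv : LinearIndependent K v) (c : ι × κ →₀ K)
    (hc : (c.sum fun p k => k • (rename Sum.inl (u p.1) * rename Sum.inr (v p.2))) = 0) :
    c = 0 := by
  classical
  set A := c.support.image Prod.fst with hA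
  set B := c.support.image Prod.snd with hB
  have hsub : c.support ⊆ A ×ˢ B := by
    intro p hp
    rw [Finset.mem_product]
    exact ⟨Finset.mem_image_of_mem _ hp, Finset.mem_image_of_mem _ hp⟩
  have key : ∀ (n : σ₂ →₀ ℕ) (i), i ∈ A → (∑ j ∈ B, c (i, j) * coeff n (v j)) = 0 := by
    intro n
    have h0 := congrArg (sliceMap (K := K) n) hc
    rw [map_zero, map_finsuppSum] at h0
    simp only [map_smul, sliceMap_rename_mul, smul_smul] at h0
    rw [Finsupp.sum] at h0
    have h1 : ∑ p ∈ A ×ˢ B, (c p * coeff n (v p.2)) • u p.1 = 0 := by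
      rw [← Finset.sum_subset hsub (fun p _ hp => by
        rw [Finsupp.notMem_support_iff.mp hp, zero_mul, zero_smul] :
          ∀ p ∈ A ×ˢ B, p ∉ c.support → (c p * coeff n (v p.2)) • u p.1 = 0)]
      exact h0
    rw [Finset.sum_product] at h1
    have h2 : ∑ i ∈ A, (∑ j ∈ B, c (i, j) * coeff n (v j)) • u i = 0 := by
      rw [← h1]
      exact Finset.sum_congr rfl fun i _ => Finset.sum_smul
    exact linearIndependent_iff'.mp hu A _ h2
  have key2 : ∀ i ∈ A, ∀ j ∈ B, c (i, j) = 0 := by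
    intro i hi
    have hz : (∑ j ∈ B, c (i, j) • v j) = 0 := by
      apply MvPolynomial.ext
      intro n
      rw [coeff_sum, coeff_zero]
      rw [← key n i hi]
      exact Finset.sum_congr rfl fun j _ => coeff_smul n _ _
    exact linearIndependent_iff'.mp hv B _ hz
  ext p
  by_cases hp : p ∈ c.support
  · have := key2 p.1 (Finset.mem_image_of_mem _ hp) p.2 (Finset.mem_image_of_mem _ hp)
    simpa using this
  · simpa using Finsupp.notMem_support_iff.mp hp

end Two

end Apol
set_option maxHeartbeats 1600000

open Apol in
/-- Apolar ideal of a product of polynomials in disjoint variable sets is generated by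
the two individual apolar ideals. -/
theorem stmt1 (K : Type*) [Field K] [CharZero K] (s t : ℕ)
    (f : MvPolynomial (Fin s) K) (g : MvPolynomial (Fin t) K) :
    {Φ : MvPolynomial (Fin s ⊕ Fin t) K |
        apol Φ (rename Sum.inl f * rename Sum.inr g) = 0} =
      ↑(Ideal.span
        ((⇑(rename (Sum.inl : Fin s → Fin s ⊕ Fin t)) '' {Φ | apol Φ f = 0}) ∪
         (⇑(rename (Sum.inr : Fin t → Fin s ⊕ Fin t)) '' {Ψ | apol Ψ g = 0}))) := by
  classical
  set F : MvPolynomial (Fin s ⊕ Fin t) K := rename Sum.inl f with hF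
  set G : MvPolynomial (Fin s ⊕ Fin t) K := rename Sum.inr g with hG
  set I : Ideal (MvPolynomial (Fin s ⊕ Fin t) K) := Ideal.span
        ((⇑(rename (Sum.inl : Fin s → Fin s ⊕ Fin t)) '' {Φ | apol Φ f = 0}) ∪
         (⇑(rename (Sum.inr : Fin t → Fin s ⊕ Fin t)) '' {Ψ | apol Ψ g = 0})) with hI
  -- the two apolar evaluation maps
  set A₁ : MvPolynomial (Fin s) K →ₗ[K] MvPolynomial (Fin s) K := LinearMap.flip apolL f with hA₁
  set A₂ : MvPolynomial (Fin t) K →ₗ[K] MvPolynomial (Fin t) K := LinearMap.flip apolL g with hA₂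
  set U₁ := LinearMap.range A₁ with hU₁
  set U₂ := LinearMap.range A₂ with hU₂
  set bas₁ := Module.Basis.ofVectorSpace K U₁ with hbas₁
  set bas₂ := Module.Basis.ofVectorSpace K U₂ with hbas₂
  choose e he using fun i => LinearMap.mem_range.mp (bas₁ i).2
  choose e' he' using fun j => LinearMap.mem_range.mp (bas₂ j).2
  -- claim A : every element can be corrected into the annihilator using the lifts
  have claimA : ∀ {σ : Type} [Fintype σ] (h : MvPolynomial σ K)
      (A : MvPolynomial σ K →ₗ[K] MvPolynomial σ K) (hA : A = LinearMap.flip apolL h)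
      {ιτ : Type _} (bas : Module.Basis ιτ K (LinearMap.range A)) (E : ιτ → MvPolynomial σ K)
      (hE : ∀ i, A (E i) = ↑(bas i)) (φ : MvPolynomial σ K),
      ∃ c : ιτ →₀ K, apolL (φ - c.sum fun i k => k • E i) h = 0 := by
    intro σ _ h A hA ιτ bas E hE φ
    refine ⟨bas.repr ⟨A φ, LinearMap.mem_range_self _ _⟩, ?_⟩
    have h1 : A ((bas.repr ⟨A φ, LinearMap.mem_range_self _ _⟩).sum fun i k => k • E i) = A φ := by
      rw [map_finsuppSum]
      have h2 : ((bas.repr ⟨A φ, LinearMap.mem_range_self _ _⟩).sum fun i k => A (k • E i))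
          = (bas.repr ⟨A φ, LinearMap.mem_range_self _ _⟩).sum
              fun i k => k • ((bas i : LinearMap.range A) : MvPolynomial σ K) := by
        refine Finsupp.sum_congr fun i _ => ?_
        rw [map_smul, hE]
      rw [h2]
      have h3 := map_finsuppSum ((LinearMap.range A).subtype)
        (bas.repr ⟨A φ, LinearMap.mem_range_self _ _⟩) (fun i k => k • bas i)
      simp only [map_smul, Submodule.subtype_apply] at h3
      rw [← h3]
      have h4 : ((bas.repr ⟨A φ, LinearMap.mem_range_self _ _⟩).sum fun i k => k • bas i)
          = ⟨A φ, LinearMap.mem_range_self _ _⟩ := by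
        rw [← Finsupp.linearCombination_apply]
        exact Module.Basis.linearCombination_repr _ _
      rw [h4]
    have hAψ : ∀ ψ, apolL ψ h = A ψ := fun ψ => by rw [hA, LinearMap.flip_apply]
    rw [hAψ, map_sub, h1, sub_self]
  -- the span is contained in the annihilator
  have hIann : I ≤ ann (F * G) := by
    rw [hI, Ideal.span_le]
    rintro x (⟨Φ, hΦ, rfl⟩ | ⟨Ψ, hΨ, rfl⟩)
    · show apolL (rename Sum.inl Φ) (F * G) = 0
      have h1 : (rename Sum.inl Φ : MvPolynomial (Fin s ⊕ Fin t) K)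
          = rename Sum.inl Φ * rename Sum.inr (1 : MvPolynomial (Fin t) K) := by
        rw [map_one, mul_one]
      rw [h1, hF, hG, apolL_rename_mul, show apolL Φ f = apol Φ f from (apol_apolL _ _).symm, hΦ, map_zero, zero_mul]
    · show apolL (rename Sum.inr Ψ) (F * G) = 0
      have h1 : (rename Sum.inr Ψ : MvPolynomial (Fin s ⊕ Fin t) K)
          = rename Sum.inl (1 : MvPolynomial (Fin s) K) * rename Sum.inr Ψ := by
        rw [map_one, one_mul]
      rw [h1, hF, hG, apolL_rename_mul, show apolL Ψ g = apol Ψ g from (apol_apolL _ _).symm, hΨ, map_zero, mul_zero]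
  -- the product family
  set E : (Module.Basis.ofVectorSpaceIndex K U₁) × (Module.Basis.ofVectorSpaceIndex K U₂)
      → MvPolynomial (Fin s ⊕ Fin t) K :=
    fun p => rename Sum.inl (e p.1) * rename Sum.inr (e' p.2) with hE
  set P : Submodule K (MvPolynomial (Fin s ⊕ Fin t) K) :=
    (Submodule.restrictScalars K I) ⊔ Submodule.span K (Set.range E) with hPdef
  have hprod : ∀ (φ : MvPolynomial (Fin s) K) (ψ : MvPolynomial (Fin t) K),
      rename Sum.inl φ * rename Sum.inr ψ ∈ P := by
    intro φ ψ
    obtain ⟨c, hc⟩ := claimA f A₁ hA₁ bas₁ e he φ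
    obtain ⟨c', hc'⟩ := claimA g A₂ hA₂ bas₂ e' he' ψ
    set w₁ : MvPolynomial (Fin s ⊕ Fin t) K := rename Sum.inl (φ - c.sum fun i k => k • e i) with hw₁
    set s₁ : MvPolynomial (Fin s ⊕ Fin t) K := rename Sum.inl (c.sum fun i k => k • e i) with hs₁
    set w₂ : MvPolynomial (Fin s ⊕ Fin t) K := rename Sum.inr (ψ - c'.sum fun j k => k • e' j) with hw₂
    set s₂ : MvPolynomial (Fin s ⊕ Fin t) K := rename Sum.inr (c'.sum fun j k => k • e' j) with hs₂
    have hwI : w₁ ∈ I := by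
      rw [hI, hw₁]
      exact Ideal.subset_span (Or.inl ⟨_, by rw [Set.mem_setOf_eq, apol_apolL]; exact hc, rfl⟩)
    have hwI' : w₂ ∈ I := by
      rw [hI, hw₂]
      exact Ideal.subset_span (Or.inr ⟨_, by rw [Set.mem_setOf_eq, apol_apolL]; exact hc', rfl⟩)
    have hsplit₁ : (rename Sum.inl φ : MvPolynomial (Fin s ⊕ Fin t) K) = w₁ + s₁ := by
      rw [hw₁, hs₁, ← map_add]
      congr 1
      ring
    have hsplit₂ : (rename Sum.inr ψ : MvPolynomial (Fin s ⊕ Fin t) K) = w₂ + s₂ := by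
      rw [hw₂, hs₂, ← map_add]
      congr 1
      ring
    have expand : (w₁ + s₁) * (w₂ + s₂) = w₁ * (w₂ + s₂) + s₁ * w₂ + s₁ * s₂ := by ring
    rw [hsplit₁, hsplit₂, expand]
    refine add_mem (add_mem ?_ ?_) ?_
    · exact Submodule.mem_sup_left (I.mul_mem_right _ hwI)
    · exact Submodule.mem_sup_left (I.mul_mem_left _ hwI')
    · refine Submodule.mem_sup_right ?_
      rw [hs₁, hs₂, map_finsuppSum, map_finsuppSum, Finsupp.sum, Finsupp.sum,
        Finset.sum_mul]
      refine Submodule.sum_mem _ fun i _ => ?_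
      rw [Finset.mul_sum]
      refine Submodule.sum_mem _ fun j _ => ?_
      rw [map_smul, map_smul, smul_mul_smul_comm]
      exact Submodule.smul_mem _ _ (Submodule.subset_span ⟨(i, j), rfl⟩)
  have hP : ∀ Φ : MvPolynomial (Fin s ⊕ Fin t) K, Φ ∈ P := by
    intro Φ
    induction Φ using MvPolynomial.induction_on' with
    | add p q hp hq => exact add_mem hp hq
    | monomial u a =>
      have hdec : monomial u a
          = rename Sum.inl (monomial (mLeft u) a) * rename (Sum.inr : Fin t → Fin s ⊕ Fin t)
              (monomial (mRight u) 1) := by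
        rw [rename_monomial, rename_monomial, monomial_mul, mul_one, ← split_eq]
      rw [hdec]
      exact hprod _ _
  -- linear independence of the image bases
  have hu : LinearIndependent K
      (fun i => ((bas₁ i : U₁) : MvPolynomial (Fin s) K)) :=
    bas₁.linearIndependent.map' U₁.subtype (Submodule.ker_subtype U₁)
  have hv : LinearIndependent K
      (fun j => ((bas₂ j : U₂) : MvPolynomial (Fin t) K)) :=
    bas₂.linearIndependent.map' U₂.subtype (Submodule.ker_subtype U₂)
  -- finish
  ext Φ
  simp only [Set.mem_setOf_eq, SetLike.mem_coe]
  constructor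
  · intro hΦ
    rw [apol_apolL] at hΦ
    obtain ⟨a, haI, b, hbE, rfl⟩ := Submodule.mem_sup.mp (hP Φ)
    obtain ⟨c, hc⟩ := Finsupp.mem_span_range_iff_exists_finsupp.mp hbE
    have haI' : a ∈ I := haI
    have haAnn : apolL a (F * G) = 0 := hIann haI'
    have hb0 : apolL b (F * G) = 0 := by
      rw [map_add, LinearMap.add_apply, haAnn, zero_add] at hΦ
      exact hΦ
    have hEq : apolL b (F * G) = c.sum fun p k =>
        k • (rename Sum.inl ((bas₁ p.1 : U₁) : MvPolynomial (Fin s) K)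
          * rename Sum.inr ((bas₂ p.2 : U₂) : MvPolynomial (Fin t) K)) := by
      have : apolL b (F * G) = (LinearMap.flip apolL (F * G)) b := by
        rw [LinearMap.flip_apply]
      rw [this, ← hc, map_finsuppSum]
      refine Finsupp.sum_congr fun p _ => ?_
      rw [map_smul, LinearMap.flip_apply, hE, hF, hG, apolL_rename_mul]
      have h5 : apolL (e p.1) f = ((bas₁ p.1 : U₁) : MvPolynomial (Fin s) K) := by
        rw [← LinearMap.flip_apply (f := apolL), ← hA₁, he]
      have h6 : apolL (e' p.2) g = ((bas₂ p.2 : U₂) : MvPolynomial (Fin t) K) := by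
        rw [← LinearMap.flip_apply (f := apolL), ← hA₂, he']
      rw [h5, h6]
    have hc0 : c = 0 := by
      refine prod_indep _ _ hu hv c ?_
      rw [← hEq, hb0]
    have hb : b = 0 := by
      rw [← hc, hc0, Finsupp.sum_zero_index]
    rw [hb, add_zero]
    exact haI'
  · intro hΦ
    rw [apol_apolL]
    exact hIann hΦ
end

section
/- Let ℓ be a linear form and g a homogeneous polynomial in S = K[x_0,...,x_n], and set f = ℓg. For any homogeneous F ∈ R = K[X_0,...,X_n] of degree d ≥ 1 (identifying the linear form ℓ with the corresponding linear form in R), one has F∘f = (∇F·∇ℓ)∘g + ℓ·(F∘g), where ∇F·∇ℓ is the dot product of the gradient vectors of F and ℓ. -/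
open MvPolynomial

section Aux

variable {σ K : Type*} [Fintype σ] [DecidableEq σ] [CommRing K]

lemma pascal (p m : ℕ) (hm : 1 ≤ m) :
    (p + 1).descFactorial m = m * p.descFactorial (m - 1) + p.descFactorial m := by
  obtain ⟨k, rfl⟩ : ∃ k, m = k + 1 := ⟨m - 1, by omega⟩
  rw [Nat.succ_descFactorial_succ, Nat.descFactorial_succ]
  simp only [Nat.add_sub_cancel]
  by_cases h : k ≤ p
  · have h' : p + 1 = (k + 1) + (p - k) := by omega
    rw [h', add_mul]
  · have h0 : p.descFactorial k = 0 := Nat.descFactorial_eq_zero_iff_lt.mpr (by omega)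
    simp [h0]

lemma apol_monomial_monomial (m p : σ →₀ ℕ) (c b : K) :
    apol (monomial m c) (monomial p b) =
      if m ≤ p then
        monomial (p - m) (c * b * ∏ i, (Nat.descFactorial (p i) (m i) : K))
      else 0 := by
  have hprod : (∏ i ∈ m.support, (Nat.descFactorial (p i) (m i) : K)) =
      ∏ i, (Nat.descFactorial (p i) (m i) : K) := by
    refine Finset.prod_subset (Finset.subset_univ _) ?_
    intro i _ hi
    simp [Finsupp.notMem_support_iff.mp hi]
  have hcond : (∀ i ∈ m.support, m i ≤ p i) ↔ m ≤ p := by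
    rw [Finsupp.le_def]
    constructor
    · intro h i
      by_cases hi : i ∈ m.support
      · exact h i hi
      · simp [Finsupp.notMem_support_iff.mp hi]
    · exact fun h i _ => h i
  unfold apol
  rw [sum_monomial_eq, sum_monomial_eq, hprod]
  · simp only [hcond]
  · simp
  · simp [Finsupp.sum_zero_index]

lemma apol_zero_left (f : MvPolynomial σ K) : apol (0 : MvPolynomial σ K) f = 0 := by
  unfold apol
  rw [AddMonoidAlgebra.coeff_zero]
  exact Finsupp.sum_zero_index

lemma apol_zero_right (Φ : MvPolynomial σ K) : apol Φ (0 : MvPolynomial σ K) = 0 := by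
  unfold apol
  simp [Finsupp.sum_zero_index]

lemma apol_add_right (Φ f g : MvPolynomial σ K) :
    apol Φ (f + g) = apol Φ f + apol Φ g := by
  unfold apol
  rw [AddMonoidAlgebra.coeff_add]
  rw [← Finsupp.sum_add]
  refine Finsupp.sum_congr fun m _ => ?_
  refine Finsupp.sum_add_index' (fun p => by simp) fun p b₁ b₂ => ?_
  split_ifs with h
  · rw [← map_add]
    congr 1
    ring
  · simp

lemma apol_add_left (Φ Ψ f : MvPolynomial σ K) :
    apol (Φ + Ψ) f = apol Φ f + apol Ψ f := by
  unfold apol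
  rw [AddMonoidAlgebra.coeff_add]
  refine Finsupp.sum_add_index' (fun m => ?_) fun m c₁ c₂ => ?_
  · simp
  · rw [← Finsupp.sum_add]
    refine Finsupp.sum_congr fun p _ => ?_
    split_ifs with h
    · rw [← map_add]
      congr 1
      ring
    · simp

lemma apol_C_mul_right (Φ f : MvPolynomial σ K) (r : K) :
    apol Φ (C r * f) = C r * apol Φ f := by
  unfold apol
  rw [C_mul', C_mul', AddMonoidAlgebra.coeff_smul, Finsupp.smul_sum]
  refine Finsupp.sum_congr fun m _ => ?_
  rw [Finsupp.sum_smul_index (fun p => by simp), Finsupp.smul_sum]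
  refine Finsupp.sum_congr fun p _ => ?_
  split_ifs with h
  · rw [smul_monomial]
    congr 1
    simp only [smul_eq_mul]
    ring
  · rw [smul_zero]

lemma apol_C_mul_left (Φ f : MvPolynomial σ K) (r : K) :
    apol (C r * Φ) f = C r * apol Φ f := by
  unfold apol
  rw [C_mul', C_mul', AddMonoidAlgebra.coeff_smul, Finsupp.smul_sum]
  rw [Finsupp.sum_smul_index (fun m => by simp [Finsupp.sum_zero_index])]
  refine Finsupp.sum_congr fun m _ => ?_
  rw [Finsupp.smul_sum]
  refine Finsupp.sum_congr fun p _ => ?_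
  split_ifs with h
  · rw [smul_monomial]
    congr 1
    simp only [smul_eq_mul]
    ring
  · rw [smul_zero]

lemma key_mono (m p : σ →₀ ℕ) (c b : K) (j : σ) :
    apol (monomial m c) (X j * monomial p b) =
      apol (pderiv j (monomial m c)) (monomial p b)
        + X j * apol (monomial m c) (monomial p b) := by
  have hX : (X j : MvPolynomial σ K) * monomial p b = monomial (p + Finsupp.single j 1) b := by
    rw [X, monomial_mul, one_mul, add_comm]
  rw [hX, pderiv_monomial, apol_monomial_monomial, apol_monomial_monomial,
    apol_monomial_monomial]
  set e : σ →₀ ℕ := Finsupp.single j 1 with he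
  have h1 : m ≤ p + e ↔ m - e ≤ p := by
    simp only [Finsupp.le_def, Finsupp.tsub_apply, Finsupp.add_apply, he,
      Finsupp.single_apply]
    refine forall_congr' fun i => ?_
    rcases eq_or_ne j i with rfl | hij
    · rw [if_pos rfl]
      omega
    · simp [hij]
  by_cases h : m - e ≤ p
  · rw [if_pos (h1.mpr h), if_pos h]
    have hterm3 : (X j : MvPolynomial σ K) *
        (if m ≤ p then
          monomial (p - m) (c * b * ∏ i, (Nat.descFactorial (p i) (m i) : K)) else 0) =
        monomial (p + e - m) (c * b * ∏ i, (Nat.descFactorial (p i) (m i) : K)) := by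
      by_cases h2 : m ≤ p
      · rw [if_pos h2, X, monomial_mul, one_mul]
        have hexp : e + (p - m) = p + e - m := by
          ext i
          have h2i := Finsupp.le_def.mp h2 i
          simp only [Finsupp.add_apply, Finsupp.tsub_apply, he, Finsupp.single_apply]
          rcases eq_or_ne j i with rfl | hij
          · omega
          · simp [hij]
        rw [hexp]
      · rw [if_neg h2, mul_zero]
        symm
        obtain ⟨i, hi⟩ : ∃ i, p i < m i := by
          by_contra hc
          push_neg at hc
          exact h2 (Finsupp.le_def.mpr hc)
        have hz : (Nat.descFactorial (p i) (m i) : K) = 0 := by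
          rw [Nat.descFactorial_eq_zero_iff_lt.mpr hi, Nat.cast_zero]
        rw [show (∏ i, (Nat.descFactorial (p i) (m i) : K)) = 0 from
          Finset.prod_eq_zero (Finset.mem_univ i) hz]
        simp
    rw [hterm3]
    rcases Nat.eq_zero_or_pos (m j) with hmj | hmj
    · -- m j = 0 : derivative term vanishes
      have hme : m - e = m := by
        ext i
        simp only [Finsupp.tsub_apply, he, Finsupp.single_apply]
        rcases eq_or_ne j i with rfl | hij
        · rw [if_pos rfl]
          omega
        · simp [hij]
      have hPL : (∏ i, (Nat.descFactorial ((p + e) i) (m i) : K)) =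
          ∏ i, (Nat.descFactorial (p i) (m i) : K) := by
        refine Finset.prod_congr rfl fun i _ => ?_
        rcases eq_or_ne j i with rfl | hij
        · simp [Finsupp.add_apply, he, Finsupp.single_apply, hmj]
        · simp [Finsupp.add_apply, he, Finsupp.single_apply, hij]
      rw [hPL, hme, hmj]
      simp
    · -- m j ≥ 1
      have hE : p - (m - e) = p + e - m := by
        ext i
        simp only [Finsupp.tsub_apply, Finsupp.add_apply, he, Finsupp.single_apply]
        rcases eq_or_ne j i with rfl | hij
        · simp only [eq_self_iff_true, if_true]
          omega
        · simp [hij]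
      rw [hE, ← map_add]
      congr 1
      -- coefficient identity via Pascal
      have hmul := fun (f : σ → K) =>
        (Finset.mul_prod_erase Finset.univ f (Finset.mem_univ j)).symm
      rw [hmul fun i => (Nat.descFactorial ((p + e) i) (m i) : K),
        hmul fun i => (Nat.descFactorial (p i) ((m - e) i) : K),
        hmul fun i => (Nat.descFactorial (p i) (m i) : K)]
      have hej : (p + e) j = p j + 1 := by simp [he]
      have hmej : (m - e) j = m j - 1 := by simp [he]
      have hQ1 : (∏ i ∈ Finset.univ.erase j, (Nat.descFactorial ((p + e) i) (m i) : K)) =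
          ∏ i ∈ Finset.univ.erase j, (Nat.descFactorial (p i) (m i) : K) := by
        refine Finset.prod_congr rfl fun i hi => ?_
        have hij : j ≠ i := (Finset.ne_of_mem_erase hi).symm
        simp [Finsupp.add_apply, he, Finsupp.single_apply, hij]
      have hQ2 : (∏ i ∈ Finset.univ.erase j, (Nat.descFactorial (p i) ((m - e) i) : K)) =
          ∏ i ∈ Finset.univ.erase j, (Nat.descFactorial (p i) (m i) : K) := by
        refine Finset.prod_congr rfl fun i hi => ?_
        have hij : j ≠ i := (Finset.ne_of_mem_erase hi).symm
        simp [Finsupp.tsub_apply, he, Finsupp.single_apply, hij]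
      rw [hQ1, hQ2, hej, hmej]
      have hp : ((p j + 1).descFactorial (m j) : K) =
          (m j : K) * ((p j).descFactorial (m j - 1) : K) +
            ((p j).descFactorial (m j) : K) := by
        have := pascal (p j) (m j) hmj
        exact_mod_cast congrArg (Nat.cast : ℕ → K) this
      rw [hp]
      ring
  · rw [if_neg (fun hh => h (h1.mp hh)), if_neg h,
      if_neg (fun hh : m ≤ p => h (le_trans (tsub_le_self) hh)), mul_zero, add_zero]

lemma apol_sum_right {α : Type*} (Φ : MvPolynomial σ K) (s : Finset α)
    (f : α → MvPolynomial σ K) :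
    apol Φ (∑ i ∈ s, f i) = ∑ i ∈ s, apol Φ (f i) := by
  classical
  induction s using Finset.induction_on with
  | empty => simp [apol_zero_right]
  | insert _ _ hx ih => rw [Finset.sum_insert hx, Finset.sum_insert hx, apol_add_right, ih]

lemma apol_sum_left {α : Type*} (f : MvPolynomial σ K) (s : Finset α)
    (Φ : α → MvPolynomial σ K) :
    apol (∑ i ∈ s, Φ i) f = ∑ i ∈ s, apol (Φ i) f := by
  classical
  induction s using Finset.induction_on with
  | empty => simp [apol_zero_left]
  | insert _ _ hx ih => rw [Finset.sum_insert hx, Finset.sum_insert hx, apol_add_left, ih]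

lemma keyX (F g : MvPolynomial σ K) (j : σ) :
    apol F (X j * g) = apol (pderiv j F) g + X j * apol F g := by
  induction F using MvPolynomial.induction_on' with
  | monomial m c =>
    induction g using MvPolynomial.induction_on' with
    | monomial p b => exact key_mono m p c b j
    | add f₁ f₂ ih₁ ih₂ =>
      rw [mul_add, apol_add_right, apol_add_right, apol_add_right, ih₁, ih₂, mul_add]
      ring
  | add Φ Ψ ih₁ ih₂ =>
    rw [apol_add_left, apol_add_left, map_add, apol_add_left, ih₁, ih₂]
    ring

end Aux

/-- `F ∘ (ℓ g) = (∇F·∇ℓ) ∘ g + ℓ (F ∘ g)` for a linear form `ℓ = ∑ aᵢ xᵢ`. -/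
theorem stmt3 (K : Type*) [Field K] [CharZero K] (n : ℕ)
    (a : Fin (n + 1) → K) (g F : MvPolynomial (Fin (n + 1)) K)
    (e d : ℕ) (hg : g.IsHomogeneous e) (hF : F.IsHomogeneous d) (hd : 1 ≤ d) :
    apol F ((∑ i, C (a i) * X i) * g) =
      apol (∑ i, C (a i) * pderiv i F) g + (∑ i, C (a i) * X i) * apol F g := by
  rw [Finset.sum_mul, apol_sum_right, apol_sum_left, Finset.sum_mul, ← Finset.sum_add_distrib]
  refine Finset.sum_congr rfl fun i _ => ?_
  rw [mul_assoc, apol_C_mul_right, keyX, apol_C_mul_left, mul_add, mul_assoc]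
end

section
/- Let h ∈ S be homogeneous and g ∈ S homogeneous, and set f = gh. Let I = Ann_R(h) and I' = Ann_R(f). If D ∈ R is homogeneous of degree k with D∘f = 0 but D∘h ≠ 0, then g ∈ (J^{k-1}(h) : (D∘h)), where J^{k-1}(h) is the ideal generated by all partial derivatives of h of order k−1. -/
open MvPolynomial

/-- The `j`-th order Jacobian ideal: generated by all order-`j` partial derivatives. -/
noncomputable def jacIdeal {σ K : Type*} [CommRing K] (j : ℕ) (h : MvPolynomial σ K) :
    Ideal (MvPolynomial σ K) :=
  Ideal.span {p | ∃ m : σ →₀ ℕ, (m.sum fun _ e => e) = j ∧ p = apol (monomial m 1) h}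

section Aux
variable {σ K : Type*} [CommRing K]


theorem apol_monomial_if (m : σ →₀ ℕ) (c : K) (f : MvPolynomial σ K) :
    apol (monomial m c) f =
      (AddMonoidAlgebra.coeff f).sum fun n b =>
        if ∀ i ∈ m.support, m i ≤ n i then
          monomial (n - m) (c * b * ∏ i ∈ m.support, (Nat.descFactorial (n i) (m i) : K))
        else 0 := by
  unfold apol
  rw [← single_eq_monomial, AddMonoidAlgebra.coeff_single]
  refine Finsupp.sum_single_index ?_
  simp [Finsupp.sum]

theorem apol_monomial (m : σ →₀ ℕ) (c : K) (f : MvPolynomial σ K) :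
    apol (monomial m c) f =
      (AddMonoidAlgebra.coeff f).sum fun n b =>
        monomial (n - m) (c * b * ∏ i ∈ m.support, (Nat.descFactorial (n i) (m i) : K)) := by
  rw [apol_monomial_if]
  refine Finsupp.sum_congr fun n _ => ?_
  split_ifs with hc
  · rfl
  · push_neg at hc
    obtain ⟨i, hi, hlt⟩ := hc
    rw [Finset.prod_eq_zero hi, mul_zero, monomial_zero]
    rw [show Nat.descFactorial (n i) (m i) = 0 from Nat.descFactorial_eq_zero_iff_lt.2 hlt,
      Nat.cast_zero]

theorem apol_one_left (f : MvPolynomial σ K) : apol (monomial (0 : σ →₀ ℕ) 1) f = f := by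
  rw [apol_monomial]
  simp only [Finsupp.support_zero, Finset.prod_empty, mul_one, one_mul, tsub_zero,
    ← single_eq_monomial]
  exact AddMonoidAlgebra.sum_coeff_single f

theorem apol_monomial_smul (m : σ →₀ ℕ) (c : K) (f : MvPolynomial σ K) :
    apol (monomial m c) f = c • apol (monomial m 1) f := by
  rw [apol_monomial, apol_monomial, Finsupp.smul_sum]
  refine Finsupp.sum_congr fun n _ => ?_
  rw [smul_monomial, smul_eq_mul]
  ring_nf

theorem pderiv_apol [DecidableEq σ] (i : σ) (m : σ →₀ ℕ) (f : MvPolynomial σ K) :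
    pderiv i (apol (monomial m 1) f) = apol (monomial (m + Finsupp.single i 1) 1) f := by
  classical
  rw [apol_monomial, apol_monomial, Finsupp.sum, Finsupp.sum, map_sum]
  refine Finset.sum_congr rfl fun n _ => ?_
  rw [pderiv_monomial]
  set s : Finset σ := insert i m.support with hs
  have h1 : (∏ j ∈ m.support, (Nat.descFactorial (n j) (m j) : K)) =
      ∏ j ∈ s, (Nat.descFactorial (n j) (m j) : K) := by
    refine Finset.prod_subset (Finset.subset_insert _ _) fun j _ hj => ?_
    rw [Finsupp.notMem_support_iff.1 hj]
    simp
  have h2 : (∏ j ∈ (m + Finsupp.single i 1).support,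
        (Nat.descFactorial (n j) ((m + Finsupp.single i 1 : σ →₀ ℕ) j) : K)) =
      ∏ j ∈ s, (Nat.descFactorial (n j) ((m + Finsupp.single i 1 : σ →₀ ℕ) j) : K) := by
    refine Finset.prod_subset ?_ fun j _ hj => ?_
    · refine (Finsupp.support_add).trans ?_
      rw [hs]
      intro j hj
      rcases Finset.mem_union.1 hj with h | h
      · exact Finset.mem_insert_of_mem h
      · rw [Finsupp.support_single_ne_zero _ one_ne_zero] at h
        simp only [Finset.mem_singleton] at h
        exact h ▸ Finset.mem_insert_self _ _
    · rw [Finsupp.notMem_support_iff.1 hj]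
      simp
  rw [h1, h2]
  have hi : i ∈ s := Finset.mem_insert_self _ _
  rw [← Finset.mul_prod_erase s (fun j => (Nat.descFactorial (n j) (m j) : K)) hi,
    ← Finset.mul_prod_erase s
    (fun j => (Nat.descFactorial (n j) ((m + Finsupp.single i 1 : σ →₀ ℕ) j) : K)) hi]
  have h3 : ∀ j ∈ s.erase i, (Nat.descFactorial (n j) ((m + Finsupp.single i 1 : σ →₀ ℕ) j) : K) =
      (Nat.descFactorial (n j) (m j) : K) := by
    intro j hj
    have : j ≠ i := Finset.ne_of_mem_erase hj
    rw [Finsupp.add_apply, Finsupp.single_apply, if_neg (Ne.symm this), add_zero]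
  rw [Finset.prod_congr rfl h3]
  have h4 : n - m - Finsupp.single i 1 = n - (m + Finsupp.single i 1) := tsub_tsub n m _
  rw [h4]
  congr 1
  have h5 : (m + Finsupp.single i 1 : σ →₀ ℕ) i = m i + 1 := by simp
  rw [h5, Nat.descFactorial_succ, Finsupp.tsub_apply]
  push_cast
  ring


theorem homog_degree {h : MvPolynomial σ K} {e : ℕ} (hh : h.IsHomogeneous e)
    {n : σ →₀ ℕ} (hn : n ∈ h.support) : Finsupp.degree n = e := by
  have := hh (MvPolynomial.mem_support_iff.1 hn)
  rwa [Finsupp.degree_eq_weight_one]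

theorem degree_sum_univ [Fintype σ] (b : σ →₀ ℕ) : Finsupp.degree b = ∑ j : σ, b j := by
  rw [Finsupp.degree]
  exact Finset.sum_subset (Finset.subset_univ _) fun j _ hj => Finsupp.notMem_support_iff.1 hj

theorem degree_sub_single [Fintype σ] [DecidableEq σ] {a : σ →₀ ℕ} {i : σ} (hi : a i ≠ 0) :
    Finsupp.degree (a - Finsupp.single i 1) = Finsupp.degree a - 1 := by
  rw [degree_sum_univ, degree_sum_univ, ← Finset.add_sum_erase _ _ (Finset.mem_univ i),
    ← Finset.add_sum_erase _ (⇑a) (Finset.mem_univ i)]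
  have h1 : ∀ j ∈ Finset.univ.erase i, (a - Finsupp.single i 1 : σ →₀ ℕ) j = a j := by
    intro j hj
    rw [Finsupp.tsub_apply, Finsupp.single_apply, if_neg (Ne.symm (Finset.ne_of_mem_erase hj)),
      Nat.sub_zero]
  rw [Finset.sum_congr rfl h1, Finsupp.tsub_apply, Finsupp.single_apply, if_pos rfl]
  show (a i - 1) + (Finset.univ.erase i).sum ⇑a = (a i + (Finset.univ.erase i).sum ⇑a) - 1
  omega

theorem pderiv_isHomogeneous [DecidableEq σ] [Fintype σ] {p : MvPolynomial σ K} {d : ℕ}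
    (hp : p.IsHomogeneous d) (i : σ) : (pderiv i p).IsHomogeneous (d - 1) := by
  conv_lhs => rw [p.as_sum]
  rw [map_sum]
  apply IsHomogeneous.sum
  intro a ha
  rw [pderiv_monomial]
  by_cases h : a i = 0
  · rw [h, Nat.cast_zero, mul_zero, monomial_zero]
    exact isHomogeneous_zero _ _ _
  · apply isHomogeneous_monomial
    rw [degree_sub_single h, homog_degree hp ha]

theorem euler [Fintype σ] [DecidableEq σ] {p : MvPolynomial σ K} {d : ℕ}
    (hp : p.IsHomogeneous d) : ∑ i : σ, X i * pderiv i p = d • p := by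
  have expand : ∀ i : σ, X i * pderiv i p =
      ∑ a ∈ p.support, X i * pderiv i (monomial a (coeff a p)) := by
    intro i
    conv_lhs => rw [p.as_sum]
    rw [map_sum, Finset.mul_sum]
  rw [Finset.sum_congr rfl fun i _ => expand i, Finset.sum_comm]
  conv_rhs => rw [p.as_sum, Finset.smul_sum]
  refine Finset.sum_congr rfl fun a ha => ?_
  have key : ∀ i : σ, X i * pderiv i (monomial a (coeff a p)) =
      monomial a (coeff a p * (a i : K)) := by
    intro i
    rw [pderiv_monomial]
    by_cases h : a i = 0
    · simp [h]
    · rw [X, monomial_mul, one_mul]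
      have hone : Finsupp.single i 1 + (a - Finsupp.single i 1) = a := by
        ext j
        rw [Finsupp.add_apply, Finsupp.tsub_apply, Finsupp.single_apply]
        by_cases hj : i = j
        · subst hj; simp; omega
        · simp [hj]
      rw [hone]

  rw [Finset.sum_congr rfl fun i _ => key i, ← map_sum, ← Finset.mul_sum]
  have : ∑ i : σ, (a i : K) = (d : K) := by
    rw [← Nat.cast_sum, ← degree_sum_univ, homog_degree hp ha]
  rw [this, smul_monomial, nsmul_eq_mul, mul_comm]

theorem apol_def' (Φ f : MvPolynomial σ K) :
    apol Φ f = (AddMonoidAlgebra.coeff Φ).sum fun m c => apol (monomial m c) f := by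
  have hfun : (fun (m : σ →₀ ℕ) (c : K) => apol (monomial m c) f) =
      fun (m : σ →₀ ℕ) (c : K) =>
        (AddMonoidAlgebra.coeff f).sum fun n b =>
          if ∀ i ∈ m.support, m i ≤ n i then
            monomial (n - m) (c * b * ∏ i ∈ m.support, (Nat.descFactorial (n i) (m i) : K))
          else 0 := by
    funext m c
    exact apol_monomial_if m c f
  rw [hfun]
  rfl

theorem finsuppSum_eq_degree (d : σ →₀ ℕ) : (d.sum fun _ e => e) = Finsupp.degree d := rfl

theorem degree_add_single [Fintype σ] [DecidableEq σ] (b : σ →₀ ℕ) (i : σ) :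
    Finsupp.degree (b + Finsupp.single i 1) = Finsupp.degree b + 1 := by
  rw [degree_sum_univ, degree_sum_univ]
  simp only [Finsupp.add_apply]
  rw [Finset.sum_add_distrib]
  congr 1
  simp [Finsupp.single_apply]

theorem exists_single_decomp [DecidableEq σ] (b : σ →₀ ℕ) (hb : b ≠ 0) :
    ∃ (i : σ) (b' : σ →₀ ℕ), b = b' + Finsupp.single i 1 ∧ b i ≠ 0 := by
  obtain ⟨i, hi⟩ := Finsupp.support_nonempty_iff.2 hb
  refine ⟨i, b - Finsupp.single i 1, ?_, Finsupp.mem_support_iff.1 hi⟩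
  have hbi := Finsupp.mem_support_iff.1 hi
  ext j
  rw [Finsupp.add_apply, Finsupp.tsub_apply, Finsupp.single_apply]
  by_cases hj : i = j
  · subst hj; simp; omega
  · simp [hj]

theorem apol_decomp (Φ f : MvPolynomial σ K) :
    apol Φ f = ∑ m ∈ Φ.support, (coeff m Φ) • apol (monomial m 1) f := by
  rw [apol_def', Finsupp.sum]
  exact Finset.sum_congr rfl fun m _ => apol_monomial_smul m _ f

theorem apol_vanish [Fintype σ] {h : MvPolynomial σ K} {e : ℕ} (hh : h.IsHomogeneous e)
    {b : σ →₀ ℕ} (hb : e < Finsupp.degree b) : apol (monomial b 1) h = 0 := by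
  rw [apol_monomial_if, Finsupp.sum]
  refine Finset.sum_eq_zero fun n hn => ?_
  rw [if_neg]
  intro hc
  have h1 : Finsupp.degree b ≤ Finsupp.degree n := by
    rw [degree_sum_univ n, show Finsupp.degree b = ∑ i ∈ b.support, b i from rfl]
    calc ∑ i ∈ b.support, b i ≤ ∑ i ∈ b.support, n i := Finset.sum_le_sum hc
    _ ≤ ∑ i : σ, n i := Finset.sum_le_sum_of_subset (Finset.subset_univ _)
  have h2 := homog_degree hh hn
  omega

theorem apol_isHomogeneous [Fintype σ] [DecidableEq σ] {h : MvPolynomial σ K} {e : ℕ}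
    (hh : h.IsHomogeneous e) (b : σ →₀ ℕ) :
    (apol (monomial b 1) h).IsHomogeneous (e - Finsupp.degree b) := by
  suffices H : ∀ (N : ℕ) (b : σ →₀ ℕ), Finsupp.degree b = N →
      (apol (monomial b 1) h).IsHomogeneous (e - Finsupp.degree b) from H _ b rfl
  intro N
  induction N with
  | zero =>
    intro b hN
    have hb0 : b = 0 := (Finsupp.degree_eq_zero_iff b).1 hN
    subst hb0
    rw [apol_one_left]
    simpa using hh
  | succ N ih =>
    intro b hN
    have hb : b ≠ 0 := by
      intro h0; rw [h0, map_zero] at hN; omega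
    obtain ⟨i, b', rfl, _⟩ := exists_single_decomp b hb
    have hb' : Finsupp.degree b' = N := by
      have := degree_add_single b' i; omega
    rw [← pderiv_apol]
    have h2 := pderiv_isHomogeneous (ih b' hb') i
    rw [hb', Nat.sub_sub] at h2
    rw [degree_add_single, hb']
    exact h2

noncomputable def lowIdeal (j : ℕ) (h : MvPolynomial σ K) : Ideal (MvPolynomial σ K) :=
  Ideal.span {p | ∃ b : σ →₀ ℕ, Finsupp.degree b < j ∧ p = apol (monomial b 1) h}

theorem lowIdeal_mono {i j : ℕ} (hij : i ≤ j) (h : MvPolynomial σ K) :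
    lowIdeal i h ≤ lowIdeal j h :=
  Ideal.span_mono fun p ⟨b, hb, he⟩ => ⟨b, lt_of_lt_of_le hb hij, he⟩

theorem pderiv_mem_lowIdeal [Fintype σ] [DecidableEq σ] {j : ℕ} {h : MvPolynomial σ K} (i : σ)
    {x : MvPolynomial σ K} (hx : x ∈ lowIdeal j h) :
    x ∈ lowIdeal (j + 1) h ∧ pderiv i x ∈ lowIdeal (j + 1) h := by
  refine Submodule.span_induction ?_ ?_ ?_ ?_ hx
  · rintro p ⟨b, hb, rfl⟩
    constructor
    · exact lowIdeal_mono (Nat.le_succ j) h (Ideal.subset_span ⟨b, hb, rfl⟩)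
    · rw [pderiv_apol]
      exact Ideal.subset_span ⟨b + Finsupp.single i 1, by rw [degree_add_single]; omega, rfl⟩
  · simp only [map_zero]
    exact ⟨Ideal.zero_mem _, Ideal.zero_mem _⟩
  · intro x y _ _ hx hy
    rw [map_add]
    exact ⟨Ideal.add_mem _ hx.1 hy.1, Ideal.add_mem _ hx.2 hy.2⟩
  · intro a x _ hx
    rw [smul_eq_mul, pderiv_mul]
    exact ⟨Ideal.mul_mem_left _ _ hx.1,
      Ideal.add_mem _ (Ideal.mul_mem_left _ _ hx.1) (Ideal.mul_mem_left _ _ hx.2)⟩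

theorem leibniz_core [Fintype σ] [DecidableEq σ] (g h : MvPolynomial σ K) (m : σ →₀ ℕ) :
    apol (monomial m 1) (g * h) - g * apol (monomial m 1) h
      ∈ lowIdeal (Finsupp.degree m) h := by
  suffices H : ∀ (N : ℕ) (m : σ →₀ ℕ), Finsupp.degree m = N →
      apol (monomial m 1) (g * h) - g * apol (monomial m 1) h
        ∈ lowIdeal (Finsupp.degree m) h from H _ m rfl
  intro N
  induction N with
  | zero =>
    intro m hN
    have hm0 : m = 0 := (Finsupp.degree_eq_zero_iff m).1 hN
    subst hm0
    rw [apol_one_left, apol_one_left, sub_self]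
    exact Ideal.zero_mem _
  | succ N ih =>
    intro m hN
    have hm : m ≠ 0 := by
      intro h0; rw [h0, map_zero] at hN; omega
    obtain ⟨i, m', rfl, _⟩ := exists_single_decomp m hm
    have hm' : Finsupp.degree m' = N := by
      have := degree_add_single m' i; omega
    set A := apol (monomial m' 1) (g * h) with hA
    set B := apol (monomial m' 1) h with hB
    have key : apol (monomial (m' + Finsupp.single i 1) 1) (g * h)
        - g * apol (monomial (m' + Finsupp.single i 1) 1) h
        = pderiv i g * B + pderiv i (A - g * B) := by
      rw [← pderiv_apol, ← pderiv_apol, map_sub, pderiv_mul, ← hA, ← hB]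
      ring
    rw [key]
    have h1 : B ∈ lowIdeal (N + 1) h := Ideal.subset_span ⟨m', by omega, rfl⟩
    have h2 := (pderiv_mem_lowIdeal i (hm' ▸ ih m' hm')).2
    rw [degree_add_single, hm']
    exact Ideal.add_mem _ (Ideal.mul_mem_left _ _ h1) h2

theorem mem_jac [Fintype σ] [DecidableEq σ] {K : Type*} [Field K] [CharZero K]
    {h : MvPolynomial σ K} {e k : ℕ} (hh : h.IsHomogeneous e) (hke : k ≤ e)
    (r : ℕ) (b : σ →₀ ℕ) (hr : (k - 1) - Finsupp.degree b = r)
    (hbk : Finsupp.degree b ≤ k - 1) :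
    apol (monomial b 1) h ∈ jacIdeal (k - 1) h := by
  induction r generalizing b with
  | zero =>
    exact Ideal.subset_span ⟨b, by rw [finsuppSum_eq_degree]; omega, rfl⟩
  | succ r ih =>
    have hlt : Finsupp.degree b < k - 1 := by omega
    set p := apol (monomial b 1) h with hp
    have hom : p.IsHomogeneous (e - Finsupp.degree b) := apol_isHomogeneous hh b
    have heul := euler hom
    have hsum : (e - Finsupp.degree b) • p ∈ jacIdeal (k - 1) h := by
      rw [← heul]
      refine Ideal.sum_mem _ fun i _ => Ideal.mul_mem_left _ _ ?_
      rw [hp, pderiv_apol]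
      exact ih (b + Finsupp.single i 1) (by rw [degree_add_single]; omega)
        (by rw [degree_add_single]; omega)
    have hc : ((e - Finsupp.degree b : ℕ) : K) ≠ 0 := by
      rw [Nat.cast_ne_zero]; omega
    have hrw : p = C (((e - Finsupp.degree b : ℕ) : K))⁻¹ *
        ((e - Finsupp.degree b) • p) := by
      rw [nsmul_eq_mul, show ((e - Finsupp.degree b : ℕ) : MvPolynomial σ K)
        = C ((e - Finsupp.degree b : ℕ) : K) from (map_natCast (C : K →+* _) _).symm,
        ← mul_assoc, ← C_mul, inv_mul_cancel₀ hc, C_1, one_mul]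
    rw [hrw]
    exact Ideal.mul_mem_left _ _ hsum


end Aux

/-- If `D` is homogeneous of degree `k`, `D∘(gh) = 0` and `D∘h ≠ 0`, then
`g ∈ (J^{k-1}(h) : (D∘h))`, i.e. `g·(D∘h) ∈ J^{k-1}(h)`. -/
theorem stmt5 (K : Type*) [Field K] [CharZero K] (n : ℕ)
    (g h : MvPolynomial (Fin (n + 1)) K) (e e' : ℕ)
    (hh : h.IsHomogeneous e) (hg : g.IsHomogeneous e')
    (D : MvPolynomial (Fin (n + 1)) K) (k : ℕ) (hD : D.IsHomogeneous k)
    (hDf : apol D (g * h) = 0) (hDh : apol D h ≠ 0) :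
    g * apol D h ∈ jacIdeal (k - 1) h := by
  have hke : k ≤ e := by
    by_contra hke
    push_neg at hke
    apply hDh
    rw [apol_decomp]
    refine Finset.sum_eq_zero fun m hm => ?_
    have hdm : Finsupp.degree m = k := homog_degree hD hm
    rw [apol_vanish hh (by omega), smul_zero]
  have hmem : apol D (g * h) - g * apol D h ∈ lowIdeal k h := by
    rw [apol_decomp D (g * h), apol_decomp D h, Finset.mul_sum, ← Finset.sum_sub_distrib]
    refine Ideal.sum_mem _ fun m hm => ?_
    have hdm : Finsupp.degree m = k := homog_degree hD hm
    have hterm : coeff m D • apol (monomial m 1) (g * h)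
        - g * coeff m D • apol (monomial m 1) h
        = C (coeff m D) * (apol (monomial m 1) (g * h) - g * apol (monomial m 1) h) := by
      rw [smul_eq_C_mul, smul_eq_C_mul]
      ring
    rw [hterm]
    exact Ideal.mul_mem_left _ _ (hdm ▸ leibniz_core g h m)
  rw [hDf, zero_sub] at hmem
  have hmem2 : g * apol D h ∈ lowIdeal k h := by
    have := neg_mem hmem
    rwa [neg_neg] at this
  have hle : lowIdeal k h ≤ jacIdeal (k - 1) h := by
    rw [lowIdeal, Ideal.span_le]
    rintro p ⟨b, hb, rfl⟩
    exact mem_jac hh hke ((k - 1) - Finsupp.degree b) b rfl (by omega)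
  exact hle hmem2
end

section
/- Suppose f ∈ K[x_0,...,x_n] is a product of at least n+2 distinct linear forms defining a generic arrangement A in P^n. Factor f = gh with g, h products of these linear forms and deg(h) ≥ n+1. If the apolar ideal Ann_R(h) contains no nonzero element of degree k for some k ≤ n, then Ann_R(f) contains no nonzero element of degree k. -/
open MvPolynomial

section ApolBasics
variable {σ K : Type*} [CommRing K]

/-- The inner piece of `apol` for a single monomial of the differential operator. -/
noncomputable def apolM (m : σ →₀ ℕ) (c : K) (f : MvPolynomial σ K) : MvPolynomial σ K :=
  (AddMonoidAlgebra.coeff f).sum fun n b =>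
      if ∀ i ∈ m.support, m i ≤ n i then
        monomial (n - m) (c * b * ∏ i ∈ m.support, (Nat.descFactorial (n i) (m i) : K))
      else 0

lemma apol_eq_sum (Φ f : MvPolynomial σ K) :
    apol Φ f = (AddMonoidAlgebra.coeff Φ).sum fun m c => apolM m c f := rfl

lemma apolM_zero_right (m : σ →₀ ℕ) (c : K) : apolM m c (0 : MvPolynomial σ K) = 0 := by
  simp [apolM]

lemma apolM_C (c : K) (f : MvPolynomial σ K) : apolM 0 c f = c • f := by
  classical
  unfold apolM
  simp only [Finsupp.support_zero, Finset.prod_empty, mul_one, Finset.notMem_empty,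
    false_implies, if_true, tsub_zero]
  have : f = (AddMonoidAlgebra.coeff f).sum fun n b => monomial n b := by
    rw [sum_def]; exact (f.support_sum_monomial_coeff).symm
  conv_rhs => rw [this]
  rw [Finsupp.smul_sum]
  apply Finsupp.sum_congr
  intro n _
  simp [smul_monomial, mul_comm]

lemma apolM_add_right (m : σ →₀ ℕ) (c : K) (f g : MvPolynomial σ K) :
    apolM m c (f + g) = apolM m c f + apolM m c g := by
  classical
  unfold apolM
  rw [show AddMonoidAlgebra.coeff (f + g : MvPolynomial σ K) = AddMonoidAlgebra.coeff f + AddMonoidAlgebra.coeff g from rfl]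
  rw [Finsupp.sum_add_index]
  · intro n _; split <;> simp
  · intro n _ b1 b2
    split
    · rw [← map_add]; ring_nf
    · simp

lemma apolM_smul_right (m : σ →₀ ℕ) (c e : K) (f : MvPolynomial σ K) :
    apolM m c (e • f) = e • apolM m c f := by
  classical
  unfold apolM
  rw [show AddMonoidAlgebra.coeff (e • f : MvPolynomial σ K) = e • AddMonoidAlgebra.coeff f from rfl]
  rw [Finsupp.sum_smul_index fun n => by split <;> simp]
  rw [Finsupp.smul_sum]
  apply Finsupp.sum_congr
  intro n _
  split
  · rw [smul_monomial, smul_eq_mul]; ring_nf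
  · simp

lemma apolM_monomial_right (m : σ →₀ ℕ) (c : K) (p : σ →₀ ℕ) (q : K) :
    apolM m c (monomial p q) =
      if ∀ i ∈ m.support, m i ≤ p i then
        monomial (p - m) (c * q * ∏ i ∈ m.support, (Nat.descFactorial (p i) (m i) : K))
      else 0 := by
  classical
  unfold apolM
  rw [show AddMonoidAlgebra.coeff (monomial p q : MvPolynomial σ K) = Finsupp.single p q from rfl]
  rw [Finsupp.sum_single_index]
  split <;> simp

lemma pderiv_eq_sum [DecidableEq σ] (i : σ) (f : MvPolynomial σ K) :
    pderiv i f = ∑ n ∈ f.support, monomial (n - Finsupp.single i 1) (coeff n f * n i) := by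
  conv_lhs => rw [f.as_sum]
  rw [map_sum]
  exact Finset.sum_congr rfl fun n _ => pderiv_monomial

lemma support_cond (p n : σ →₀ ℕ) :
    (∀ i ∈ p.support, p i ≤ n i) ↔ ∀ i, p i ≤ n i := by
  constructor
  · intro h i
    by_cases hi : i ∈ p.support
    · exact h i hi
    · simp [Finsupp.notMem_support_iff.mp hi]
  · exact fun h i _ => h i

lemma apolM_step [DecidableEq σ] (m : σ →₀ ℕ) (i : σ) (c : K) (f : MvPolynomial σ K) :
    apolM (m + Finsupp.single i 1) c f = apolM m c (pderiv i f) := by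
  rw [pderiv_eq_sum]
  have hsum : apolM m c (∑ n ∈ f.support, monomial (n - Finsupp.single i 1) (coeff n f * n i))
      = ∑ n ∈ f.support, apolM m c (monomial (n - Finsupp.single i 1) (coeff n f * n i)) :=
    map_sum (AddMonoidHom.mk' (apolM m c) (apolM_add_right m c)) _ _
  rw [hsum]
  show Finsupp.sum (AddMonoidAlgebra.coeff f) _ = _
  rw [Finsupp.sum]
  apply Finset.sum_congr rfl
  intro n hn
  rw [apolM_monomial_right]
  by_cases hni : 1 ≤ n i
  · have hiff : (∀ j ∈ (m + Finsupp.single i 1).support, (m + Finsupp.single i 1 : σ →₀ ℕ) j ≤ n j)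
        ↔ (∀ j ∈ m.support, m j ≤ (n - Finsupp.single i 1 : σ →₀ ℕ) j) := by
      rw [support_cond, support_cond]
      constructor
      · intro h j
        have := h j
        rw [Finsupp.add_apply] at this
        rw [Finsupp.tsub_apply]
        by_cases hj : j = i
        · subst hj
          rw [Finsupp.single_eq_same] at this ⊢
          omega
        · rw [Finsupp.single_eq_of_ne' (Ne.symm hj)] at this ⊢
          omega
      · intro h j
        have := h j
        rw [Finsupp.tsub_apply] at this
        rw [Finsupp.add_apply]
        by_cases hj : j = i
        · subst hj
          rw [Finsupp.single_eq_same] at this ⊢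
          omega
        · rw [Finsupp.single_eq_of_ne' (Ne.symm hj)] at this ⊢
          omega
    rw [if_congr hiff rfl rfl]
    split_ifs with hcond
    · congr 1
      · rw [tsub_tsub, add_comm]
      · have hsupp : (m + Finsupp.single i 1).support = insert i m.support := by
          ext j
          simp only [Finsupp.mem_support_iff, Finsupp.add_apply, Finset.mem_insert,
            Finsupp.single_apply]
          by_cases hj : j = i
          · subst hj; simp
          · simp [if_neg (Ne.symm hj), hj]
        have key : ∏ j ∈ (m + Finsupp.single i 1).support,
              (Nat.descFactorial (n j) ((m + Finsupp.single i 1 : σ →₀ ℕ) j) : K)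
            = (n i : K) * ∏ j ∈ m.support,
              (Nat.descFactorial ((n - Finsupp.single i 1 : σ →₀ ℕ) j) (m j) : K) := by
          rw [hsupp]
          have h2 : ∏ j ∈ m.support, (Nat.descFactorial ((n - Finsupp.single i 1 : σ →₀ ℕ) j) (m j) : K)
              = ∏ j ∈ insert i m.support,
                  (Nat.descFactorial ((n - Finsupp.single i 1 : σ →₀ ℕ) j) (m j) : K) := by
            by_cases hi : i ∈ m.support
            · rw [Finset.insert_eq_self.mpr hi]
            · rw [Finset.prod_insert hi, Finsupp.notMem_support_iff.mp hi]
              simp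
          rw [h2]
          have hieq : insert i m.support = insert i (m.support.erase i) := by
            ext j
            simp only [Finset.mem_insert, Finset.mem_erase]
            tauto
          rw [hieq, Finset.prod_insert (Finset.notMem_erase i _),
            Finset.prod_insert (Finset.notMem_erase i _), ← mul_assoc]
          congr 1
          · obtain ⟨ni', hni'⟩ : ∃ ni', n i = ni' + 1 := ⟨n i - 1, by omega⟩
            rw [Finsupp.add_apply, Finsupp.tsub_apply, Finsupp.single_apply, if_pos rfl, hni']
            rw [Nat.add_sub_cancel]
            rw [Nat.succ_descFactorial_succ]
            push_cast
            ring
          · apply Finset.prod_congr rfl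
            intro j hj
            have hji : j ≠ i := Finset.ne_of_mem_erase hj
            rw [Finsupp.add_apply, Finsupp.tsub_apply, Finsupp.single_apply,
              if_neg (Ne.symm hji)]
            simp
        rw [key, show (@DFunLike.coe ((σ →₀ ℕ) →₀ K) _ _ _ (AddMonoidAlgebra.coeff f) n) = coeff n f from rfl]
        push_cast
        ring
    · rfl
  · have h0 : n i = 0 := by omega
    have hcondL : ¬ (∀ j ∈ (m + Finsupp.single i 1).support,
        (m + Finsupp.single i 1 : σ →₀ ℕ) j ≤ n j) := by
      rw [support_cond]
      push_neg
      exact ⟨i, by simp [Finsupp.add_apply, Finsupp.single_apply, h0]⟩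
    rw [if_neg hcondL]
    split
    · rw [h0]
      push_cast
      simp
    · rfl

lemma degree_single_one (i : σ) : Finsupp.degree (Finsupp.single i (1:ℕ)) = 1 := by
  classical
  rw [Finsupp.degree_apply, Finsupp.support_single_ne_zero i one_ne_zero]
  simp

lemma degree_add' (p q : σ →₀ ℕ) :
    Finsupp.degree (p + q) = Finsupp.degree p + Finsupp.degree q := by
  classical
  simp only [Finsupp.degree_eq_weight_one, map_add]

lemma apolM_mem_C {k : ℕ} (m : σ →₀ ℕ) (c : K) (g : MvPolynomial σ K)
    (hm : Finsupp.degree m = k) (hg : ∀ p, coeff p g ≠ 0 → Finsupp.degree p = k) :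
    apolM m c g ∈ (C : K →+* MvPolynomial σ K).range := by
  classical
  unfold apolM
  rw [Finsupp.sum]
  apply Subring.sum_mem
  intro p hp
  have hpd : Finsupp.degree p = k := hg p (by simpa [coeff] using hp)
  split_ifs with hcond
  · have hle : m ≤ p := by
      rw [Finsupp.le_def]
      exact (support_cond m p).mp hcond
    have hpm : p - m = 0 := by
      have h1 : m + (p - m) = p := add_tsub_cancel_of_le hle
      have h2 := degree_add' m (p - m)
      rw [h1, hm, hpd] at h2
      rw [← Finsupp.degree_eq_zero_iff]
      omega
    rw [hpm, ← C_apply]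
    exact ⟨_, rfl⟩
  · exact Subring.zero_mem _

lemma apol_mem_C {k : ℕ} (D g : MvPolynomial σ K)
    (hD : ∀ m, coeff m D ≠ 0 → Finsupp.degree m = k)
    (hg : ∀ p, coeff p g ≠ 0 → Finsupp.degree p = k) :
    apol D g ∈ (C : K →+* MvPolynomial σ K).range := by
  classical
  rw [apol_eq_sum, Finsupp.sum]
  apply Subring.sum_mem
  intro m hm
  exact apolM_mem_C m _ g (hD m (by simpa [coeff] using hm)) hg
end ApolBasics

section LinForms
variable {K : Type*} [CommRing K] {r n : ℕ}

/-- The linear form attached to row `j`. -/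
noncomputable def LF (a : Fin r → Fin (n+1) → K) (j : Fin r) : MvPolynomial (Fin (n+1)) K :=
  ∑ i, C (a j i) * X i

lemma pderiv_LF (a : Fin r → Fin (n+1) → K) (i : Fin (n+1)) (j : Fin r) :
    pderiv i (LF a j) = C (a j i) := by
  unfold LF
  rw [map_sum]
  rw [Finset.sum_eq_single i]
  · simp [pderiv_X]
  · intro t _ ht
    classical
    simp [pderiv_X, Pi.single_eq_of_ne ht]
  · simp

lemma pderiv_prod_LF (a : Fin r → Fin (n+1) → K) (i : Fin (n+1)) (U : Finset (Fin r)) :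
    pderiv i (∏ j ∈ U, LF a j) = ∑ j ∈ U, C (a j i) * ∏ j' ∈ U.erase j, LF a j' := by
  classical
  induction U using Finset.induction with
  | empty => simp
  | insert x s hx ih =>
    rw [Finset.prod_insert hx, pderiv_mul, ih, pderiv_LF]
    rw [Finset.sum_insert hx, Finset.erase_insert hx]
    rw [Finset.mul_sum]
    congr 1
    apply Finset.sum_congr rfl
    intro j hj
    have hxj : x ≠ j := fun h => hx (h ▸ hj)
    rw [Finset.erase_insert_of_ne hxj, Finset.prod_insert (fun h => hx (Finset.mem_of_mem_erase h))]
    ring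

lemma apolM_succ_prod (a : Fin r → Fin (n+1) → K)
    (m : Fin (n+1) →₀ ℕ) (i : Fin (n+1)) (c : K) (V : Finset (Fin r)) :
    apolM (m + Finsupp.single i 1) c (∏ j ∈ V, LF a j)
      = ∑ j ∈ V, C (a j i) * apolM m c (∏ j' ∈ V.erase j, LF a j') := by
  classical
  rw [apolM_step, pderiv_prod_LF]
  have hadd : apolM m c (∑ j ∈ V, C (a j i) * ∏ j' ∈ V.erase j, LF a j')
      = ∑ j ∈ V, apolM m c (C (a j i) * ∏ j' ∈ V.erase j, LF a j') :=
    map_sum (AddMonoidHom.mk' (apolM m c) (apolM_add_right m c)) _ _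
  rw [hadd]
  apply Finset.sum_congr rfl
  intro j _
  show apolM m c (C (a j i) * ∏ j' ∈ V.erase j, LF a j') = _
  rw [← smul_eq_C_mul, apolM_smul_right, smul_eq_C_mul]

lemma LF_isHomogeneous (a : Fin r → Fin (n+1) → K) (j : Fin r) :
    (LF a j).IsHomogeneous 1 := by
  apply IsHomogeneous.sum
  intro i _
  exact isHomogeneous_C_mul_X _ _

lemma prod_LF_isHomogeneous (a : Fin r → Fin (n+1) → K) (S : Finset (Fin r)) :
    (∏ j ∈ S, LF a j).IsHomogeneous S.card := by
  have := IsHomogeneous.prod S (fun j => LF a j) (fun _ => 1)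
    (fun j _ => LF_isHomogeneous a j)
  simpa using this

lemma isHomogeneous_coeff_degree {k : ℕ} {g : MvPolynomial (Fin (n+1)) K}
    (hg : g.IsHomogeneous k) : ∀ p, coeff p g ≠ 0 → Finsupp.degree p = k := by
  intro p hp
  rw [Finsupp.degree_eq_weight_one]
  exact hg hp

lemma expand (a : Fin r → Fin (n+1) → K) :
    ∀ (k : ℕ) (m : Fin (n+1) →₀ ℕ), Finsupp.degree m = k → ∀ (c : K) (U : Finset (Fin r)),
    apolM m c (∏ j ∈ U, LF a j)
      = ∑ S ∈ U.powersetCard k, apolM m c (∏ j ∈ S, LF a j) * ∏ j ∈ U \ S, LF a j := by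
  classical
  intro k
  induction k with
  | zero =>
    intro m hm c U
    have hm0 : m = 0 := (Finsupp.degree_eq_zero_iff m).mp hm
    subst hm0
    rw [Finset.powersetCard_zero, Finset.sum_singleton, Finset.prod_empty, apolM_C, apolM_C]
    rw [Finset.sdiff_empty, smul_mul_assoc, one_mul]
  | succ k IH =>
    intro m hm c U
    have hne : m ≠ 0 := by
      intro h
      rw [h, map_zero] at hm
      omega
    obtain ⟨i, hi⟩ : ∃ i, m i ≠ 0 := by
      by_contra h
      push_neg at h
      exact hne (Finsupp.ext h)
    set m' := m - Finsupp.single i 1 with hm'def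
    have hmm : m' + Finsupp.single i 1 = m := by
      ext j
      rw [Finsupp.add_apply, hm'def, Finsupp.tsub_apply]
      by_cases hj : i = j
      · subst hj
        rw [Finsupp.single_eq_same]
        omega
      · rw [Finsupp.single_eq_of_ne' hj]
        omega
    have hdeg : Finsupp.degree m' = k := by
      have h2 := degree_add' m' (Finsupp.single i 1)
      rw [hmm, hm, degree_single_one] at h2
      omega
    have hUdiff : ∀ (j : Fin r) (S : Finset (Fin r)), j ∉ S →
        U \ insert j S = U.erase j \ S := by
      intro j S _
      ext x
      simp only [Finset.mem_sdiff, Finset.mem_insert, Finset.mem_erase]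
      tauto
    calc apolM m c (∏ j ∈ U, LF a j)
        = ∑ j ∈ U, C (a j i) * apolM m' c (∏ j' ∈ U.erase j, LF a j') := by
          rw [← hmm, apolM_succ_prod]
      _ = ∑ j ∈ U, ∑ S ∈ (U.erase j).powersetCard k,
            C (a j i) * (apolM m' c (∏ j' ∈ S, LF a j') * ∏ j' ∈ U.erase j \ S, LF a j') := by
          apply Finset.sum_congr rfl
          intro j _
          rw [IH m' hdeg, Finset.mul_sum]
      _ = ∑ p ∈ U.sigma (fun j => (U.erase j).powersetCard k),
            C (a p.1 i) * (apolM m' c (∏ j' ∈ p.2, LF a j') * ∏ j' ∈ U.erase p.1 \ p.2, LF a j') := by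
          rw [Finset.sum_sigma]
      _ = ∑ q ∈ (U.powersetCard (k+1)).sigma (fun S' => S'),
            C (a q.2 i) * apolM m' c (∏ j' ∈ q.1.erase q.2, LF a j') * ∏ j' ∈ U \ q.1, LF a j' := by
          apply Finset.sum_nbij' (fun p => (⟨insert p.1 p.2, p.1⟩ : Σ _ : Finset (Fin r), Fin r))
            (fun q => (⟨q.2, q.1.erase q.2⟩ : Σ _ : Fin r, Finset (Fin r)))
          · rintro ⟨j, S⟩ hp
            rw [Finset.mem_sigma] at hp ⊢
            obtain ⟨hj, hS⟩ := hp
            rw [Finset.mem_powersetCard] at hS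
            obtain ⟨hS1, hS2⟩ := hS
            have hjS : j ∉ S := fun h => (Finset.mem_erase.mp (hS1 h)).1 rfl
            constructor
            · rw [Finset.mem_powersetCard]
              constructor
              · intro x hx
                rcases Finset.mem_insert.mp hx with rfl | hx
                · exact hj
                · exact Finset.mem_of_mem_erase (hS1 hx)
              · rw [Finset.card_insert_of_notMem hjS, hS2]
            · exact Finset.mem_insert_self _ _
          · rintro ⟨S', j⟩ hq
            rw [Finset.mem_sigma] at hq ⊢
            obtain ⟨hS', hj⟩ := hq
            rw [Finset.mem_powersetCard] at hS'
            obtain ⟨hS1, hS2⟩ := hS'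
            constructor
            · exact hS1 hj
            · rw [Finset.mem_powersetCard]
              constructor
              · exact Finset.erase_subset_erase _ hS1
              · rw [Finset.card_erase_of_mem hj, hS2]
                omega
          · rintro ⟨j, S⟩ hp
            rw [Finset.mem_sigma, Finset.mem_powersetCard] at hp
            have hjS : j ∉ S := fun h => (Finset.mem_erase.mp (hp.2.1 h)).1 rfl
            simp [Finset.erase_insert hjS]
          · rintro ⟨S', j⟩ hq
            rw [Finset.mem_sigma] at hq
            simp [Finset.insert_erase hq.2]
          · rintro ⟨j, S⟩ hp
            rw [Finset.mem_sigma, Finset.mem_powersetCard] at hp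
            have hjS : j ∉ S := fun h => (Finset.mem_erase.mp (hp.2.1 h)).1 rfl
            simp only
            rw [Finset.erase_insert hjS, hUdiff j S hjS]
            ring
      _ = ∑ S' ∈ U.powersetCard (k+1), ∑ j ∈ S',
            C (a j i) * apolM m' c (∏ j' ∈ S'.erase j, LF a j') * ∏ j' ∈ U \ S', LF a j' := by
          rw [Finset.sum_sigma]
      _ = ∑ S' ∈ U.powersetCard (k+1),
            apolM m c (∏ j ∈ S', LF a j) * ∏ j ∈ U \ S', LF a j := by
          apply Finset.sum_congr rfl
          intro S' _
          rw [← hmm, apolM_succ_prod, Finset.sum_mul]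

lemma apol_prod_expand (a : Fin r → Fin (n+1) → K) (D : MvPolynomial (Fin (n+1)) K) (k : ℕ)
    (hD : ∀ m, coeff m D ≠ 0 → Finsupp.degree m = k) (U : Finset (Fin r)) :
    apol D (∏ j ∈ U, LF a j)
      = ∑ S ∈ U.powersetCard k, apol D (∏ j ∈ S, LF a j) * ∏ j ∈ U \ S, LF a j := by
  classical
  rw [apol_eq_sum, Finsupp.sum]
  calc ∑ m ∈ D.support, apolM m (coeff m D) (∏ j ∈ U, LF a j)
      = ∑ m ∈ D.support, ∑ S ∈ U.powersetCard k,
          apolM m (coeff m D) (∏ j ∈ S, LF a j) * ∏ j ∈ U \ S, LF a j := by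
        apply Finset.sum_congr rfl
        intro m hm
        exact expand a k m (hD m (mem_support_iff.mp hm)) _ U
    _ = ∑ S ∈ U.powersetCard k, ∑ m ∈ D.support,
          apolM m (coeff m D) (∏ j ∈ S, LF a j) * ∏ j ∈ U \ S, LF a j := Finset.sum_comm
    _ = ∑ S ∈ U.powersetCard k,
          apol D (∏ j ∈ S, LF a j) * ∏ j ∈ U \ S, LF a j := by
        apply Finset.sum_congr rfl
        intro S _
        rw [apol_eq_sum, Finsupp.sum, Finset.sum_mul]
        exact Finset.sum_congr rfl fun m _ => rfl
end LinForms

section Points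
variable {K : Type*} [Field K] [Infinite K] {r n : ℕ}

/-- Dot product as a map to the dual. -/
noncomputable def Bd (K : Type*) [Field K] (N : ℕ) :
    (Fin N → K) →ₗ[K] Module.Dual K (Fin N → K) :=
  LinearMap.mk₂ K (fun v w => ∑ i, v i * w i)
    (fun m₁ m₂ w => by simp [add_mul, Finset.sum_add_distrib])
    (fun c m w => by simp [Finset.mul_sum, mul_assoc])
    (fun m w₁ w₂ => by simp [mul_add, Finset.sum_add_distrib])
    (fun c m w => by
      simp only [smul_eq_mul, Pi.smul_apply, Finset.mul_sum]
      exact Finset.sum_congr rfl fun i _ => by ring)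

lemma Bd_apply {K : Type*} [Field K] {N : ℕ} (v w : Fin N → K) :
    Bd K N v w = ∑ i, v i * w i := rfl

lemma Bd_injective (K : Type*) [Field K] (N : ℕ) : Function.Injective (Bd K N) := by
  rw [injective_iff_map_eq_zero]
  intro v hv
  funext i
  have := congrArg (fun φ => φ (Pi.single i 1)) hv
  simp only [Bd_apply] at this
  simpa [Pi.single_apply, Finset.sum_ite_eq', mul_ite] using this

lemma exists_good_point (a : Fin r → Fin (n+1) → K)
    (hgen : ∀ s : Finset (Fin r),
      Module.finrank K (Submodule.span K (a '' ↑s)) = min s.card (n + 1))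
    (k : ℕ) (hk : k ≤ n) (S : Finset (Fin r)) (hS : S.card = k) :
    ∃ p : Fin (n+1) → K, (∀ j ∈ S, ∑ i, a j i * p i = 0) ∧
      (∀ j ∉ S, ∑ i, a j i * p i ≠ 0) := by
  classical
  set W : Submodule K (Fin (n+1) → K) := ⨅ j ∈ S, LinearMap.ker (Bd K (n+1) (a j)) with hW
  have hmemW : ∀ w : Fin (n+1) → K, w ∈ W ↔ ∀ j ∈ S, Bd K (n+1) (a j) w = 0 := by
    intro w
    simp [hW, Submodule.mem_iInf, LinearMap.mem_ker]
  set Φ : Submodule K (Module.Dual K (Fin (n+1) → K)) :=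
    Submodule.span K (Bd K (n+1) '' (a '' ↑S)) with hΦ
  have hWco : W = Φ.dualCoannihilator := by
    ext w
    rw [hmemW, Submodule.mem_dualCoannihilator]
    constructor
    · intro h φ hφ
      induction hφ using Submodule.span_induction with
      | mem x hx =>
        obtain ⟨v, ⟨j, hj, rfl⟩, rfl⟩ := hx
        exact h j hj
      | zero => simp
      | add x y _ _ hx hy => simp [hx, hy]
      | smul c x _ hx => simp [hx]
    · intro h j hj
      exact h _ (Submodule.subset_span ⟨a j, ⟨j, hj, rfl⟩, rfl⟩)
  have hfun : ∀ j ∉ S, ∃ w ∈ W, Bd K (n+1) (a j) w ≠ 0 := by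
    intro j hj
    by_contra h
    push_neg at h
    have hmem : Bd K (n+1) (a j) ∈ W.dualAnnihilator := by
      rw [Submodule.mem_dualAnnihilator]
      exact h
    rw [hWco, Subspace.dualCoannihilator_dualAnnihilator_eq] at hmem
    have hmap : Φ = Submodule.map (Bd K (n+1)) (Submodule.span K (a '' ↑S)) := by
      rw [hΦ, Submodule.map_span]
    rw [hmap] at hmem
    obtain ⟨x, hx, hxe⟩ := hmem
    have hxa : x = a j := Bd_injective K (n+1) hxe
    subst hxa
    have h1 := hgen S
    have h2 := hgen (insert j S)
    rw [Finset.card_insert_of_notMem hj, hS] at h2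
    rw [hS] at h1
    have hins : (a '' ↑(insert j S)) = insert (a j) (a '' ↑S) := by
      rw [Finset.coe_insert, Set.image_insert_eq]
    rw [hins, Submodule.span_insert_eq_span hx, h1] at h2
    omega
  set badset : Finset (Subspace K W) :=
    (Finset.univ \ S).image
      (fun j => LinearMap.ker ((Bd K (n+1) (a j)).comp W.subtype)) with hbad
  have htop : (⊤ : Subspace K W) ∉ badset := by
    rw [hbad]
    simp only [Finset.mem_image, Finset.mem_sdiff, Finset.mem_univ, true_and]
    rintro ⟨j, hj, hker⟩
    obtain ⟨w, hwW, hwne⟩ := hfun j hj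
    have : (⟨w, hwW⟩ : W) ∈ LinearMap.ker ((Bd K (n+1) (a j)).comp W.subtype) := by
      rw [hker]; trivial
    rw [LinearMap.mem_ker] at this
    exact hwne this
  have hcover := Subspace.biUnion_ne_univ_of_top_notMem htop
  have : ∃ w : W, ∀ p ∈ badset, w ∉ (p : Set W) := by
    by_contra h
    push_neg at h
    apply hcover
    ext w
    simp only [Set.mem_iUnion, Set.mem_univ, iff_true]
    obtain ⟨p, hp, hwp⟩ := h w
    exact ⟨p, hp, hwp⟩
  obtain ⟨w, hw⟩ := this
  refine ⟨(w : Fin (n+1) → K), ?_, ?_⟩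
  · intro j hj
    have := (hmemW (w : Fin (n+1) → K)).mp w.2 j hj
    rwa [Bd_apply] at this
  · intro j hj
    have hne : w ∉ (LinearMap.ker ((Bd K (n+1) (a j)).comp W.subtype) : Set W) := by
      apply hw
      rw [hbad]
      simp only [Finset.mem_image, Finset.mem_sdiff, Finset.mem_univ, true_and]
      exact ⟨j, hj, rfl⟩
    intro hzero
    apply hne
    rw [SetLike.mem_coe, LinearMap.mem_ker, LinearMap.comp_apply]
    rw [show W.subtype w = (w : Fin (n+1) → K) from rfl]
    rw [Bd_apply]
    exact hzero
end Points

lemma eval_LF {K : Type*} [CommRing K] {r n : ℕ} (a : Fin r → Fin (n+1) → K)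
    (p : Fin (n+1) → K) (j : Fin r) :
    eval p (LF a j) = ∑ i, a j i * p i := by
  simp [LF]

/-- Propagation of vanishing of graded pieces of apolar ideals for generic arrangements:
if `f = gh` is a product of ≥ n+2 distinct linear forms forming a generic arrangement,
`deg h ≥ n+1`, and `Ann(h)_k = 0` for some `k ≤ n`, then `Ann(f)_k = 0`. -/
theorem stmt9 (K : Type*) [Field K] [CharZero K] [IsAlgClosed K] (n r : ℕ)
    (hr : n + 2 ≤ r) (a : Fin r → Fin (n + 1) → K) (ha : ∀ j, a j ≠ 0)
    (hdist : ∀ j j' : Fin r, j ≠ j' → ∀ c : K, a j ≠ c • a j')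
    (hgen : ∀ s : Finset (Fin r),
      Module.finrank K (Submodule.span K (a '' ↑s)) = min s.card (n + 1))
    (T : Finset (Fin r)) (hT : n + 1 ≤ T.card)
    (k : ℕ) (hk : k ≤ n)
    (hAnnh : ∀ D : MvPolynomial (Fin (n + 1)) K, D.IsHomogeneous k →
      apol D (∏ j ∈ T, ∑ i, C (a j i) * X i) = 0 → D = 0) :
    ∀ D : MvPolynomial (Fin (n + 1)) K, D.IsHomogeneous k →
      apol D (∏ j, ∑ i, C (a j i) * X i) = 0 → D = 0 := by
  classical
  intro D hD h0
  have hdc : ∀ m, coeff m D ≠ 0 → Finsupp.degree m = k := isHomogeneous_coeff_degree hD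
  have hLF : ∀ (U : Finset (Fin r)), (∏ j ∈ U, (∑ i, C (a j i) * X i : MvPolynomial (Fin (n+1)) K))
      = ∏ j ∈ U, LF a j := fun U => rfl
  rw [show (∏ j, (∑ i, C (a j i) * X i : MvPolynomial (Fin (n+1)) K))
      = ∏ j ∈ Finset.univ, LF a j from rfl] at h0
  have hexp := apol_prod_expand a D k hdc Finset.univ
  rw [h0] at hexp
  -- each coefficient vanishes
  have key : ∀ S ∈ Finset.univ.powersetCard k, apol D (∏ j ∈ S, LF a j) = 0 := by
    intro S₀ hS₀
    have hcard : S₀.card = k := (Finset.mem_powersetCard.mp hS₀).2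
    obtain ⟨p, hp0, hpne⟩ := exists_good_point a hgen k hk S₀ hcard
    have heval := congrArg (eval p) hexp.symm
    rw [map_zero, map_sum] at heval
    have heval2 : ∑ S ∈ Finset.univ.powersetCard k,
        eval p (apol D (∏ j ∈ S, LF a j)) * ∏ j ∈ Finset.univ \ S, eval p (LF a j) = 0 := by
      rw [← heval]
      apply Finset.sum_congr rfl
      intro S _
      rw [map_mul, map_prod]
    rw [Finset.sum_eq_single S₀] at heval2
    · -- the product factor is nonzero
      have hprodne : ∏ j ∈ Finset.univ \ S₀, eval p (LF a j) ≠ 0 := by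
        apply Finset.prod_ne_zero_iff.mpr
        intro j hj
        rw [eval_LF]
        exact hpne j (Finset.mem_sdiff.mp hj).2
      have hev0 : eval p (apol D (∏ j ∈ S₀, LF a j)) = 0 :=
        by
          rcases mul_eq_zero.mp heval2 with h | h
          · exact h
          · exact absurd h hprodne
      obtain ⟨e, he⟩ := apol_mem_C (k := k) D (∏ j ∈ S₀, LF a j) hdc
        (by
          have := prod_LF_isHomogeneous a S₀
          rw [hcard] at this
          exact isHomogeneous_coeff_degree this)
      rw [← he] at hev0 ⊢
      rw [eval_C] at hev0
      rw [hev0, map_zero]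
    · intro S hS hSne
      have hScard : S.card = k := (Finset.mem_powersetCard.mp hS).2
      obtain ⟨j, hjS₀, hjS⟩ : ∃ j ∈ S₀, j ∉ S := by
        by_contra hcon
        push_neg at hcon
        have hsub : S₀ ⊆ S := hcon
        exact hSne (Finset.eq_of_subset_of_card_le hsub (by omega)).symm
      apply mul_eq_zero_of_right
      apply Finset.prod_eq_zero (Finset.mem_sdiff.mpr ⟨Finset.mem_univ j, hjS⟩)
      rw [eval_LF]
      exact hp0 j hjS₀
    · intro h
      exact absurd hS₀ h
  -- conclude for T
  have hT0 : apol D (∏ j ∈ T, LF a j) = 0 := by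
    rw [apol_prod_expand a D k hdc T]
    apply Finset.sum_eq_zero
    intro S hS
    have hScard : S.card = k := (Finset.mem_powersetCard.mp hS).2
    rw [key S (Finset.mem_powersetCard.mpr ⟨Finset.subset_univ S, hScard⟩), zero_mul]
  exact hAnnh D hD hT0
end

section
/- Let A be a generic arrangement of at least n+1 hyperplanes in P^n and f = Q(A) its defining polynomial (the product of its defining linear forms). Then the initial degree of the apolar ideal satisfies α(Ann_R(f)) ≥ min{|A| − n + 1, n + 1}, where |A| is the number of hyperplanes. -/
open MvPolynomial

set_option linter.unusedSectionVars false
set_option linter.unusedVariables false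
set_option linter.deprecated false

namespace ApolarProof

variable {σ : Type*} {K : Type*} [CommRing K]

lemma summand_eq (m n : σ →₀ ℕ) (c b : K) :
    (if ∀ i ∈ m.support, m i ≤ n i then
        monomial (n - m) (c * b * ∏ i ∈ m.support, (Nat.descFactorial (n i) (m i) : K))
      else 0)
    = monomial (n - m) (c * b * ∏ i ∈ m.support, (Nat.descFactorial (n i) (m i) : K)) := by
  split_ifs with h
  · rfl
  · push_neg at h
    obtain ⟨i, hi, hlt⟩ := h
    rw [Finset.prod_eq_zero hi (by rw [Nat.descFactorial_of_lt hlt, Nat.cast_zero])]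
    simp

lemma apol_def' (Φ f : MvPolynomial σ K) :
    apol Φ f = (AddMonoidAlgebra.coeff Φ).sum fun m c => (AddMonoidAlgebra.coeff f).sum fun n b =>
      monomial (n - m) (c * b * ∏ i ∈ m.support, (Nat.descFactorial (n i) (m i) : K)) := by
  unfold apol
  exact Finsupp.sum_congr fun m _ => Finsupp.sum_congr fun n _ => summand_eq m n _ _

lemma apol_monomial_monomial (m n : σ →₀ ℕ) (c b : K) :
    apol (monomial m c) (monomial n b)
      = monomial (n - m) (c * b * ∏ i ∈ m.support, (Nat.descFactorial (n i) (m i) : K)) := by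
  rw [apol_def', sum_monomial_eq (by simp [Finsupp.sum]), sum_monomial_eq (by simp)]

lemma apol_add_left (Φ Ψ f : MvPolynomial σ K) :
    apol (Φ + Ψ) f = apol Φ f + apol Ψ f := by
  rw [apol_def', apol_def', apol_def']
  rw [AddMonoidAlgebra.coeff_add, Finsupp.sum_add_index' (by intro a; simp [Finsupp.sum]) ?_]
  intro m c₁ c₂
  rw [← Finsupp.sum_add]
  exact Finsupp.sum_congr fun n _ => by rw [← map_add, add_mul, add_mul]

lemma apol_add_right (Φ f g : MvPolynomial σ K) :
    apol Φ (f + g) = apol Φ f + apol Φ g := by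
  rw [apol_def', apol_def', apol_def', ← Finsupp.sum_add]
  refine Finsupp.sum_congr fun m _ => ?_
  rw [AddMonoidAlgebra.coeff_add, Finsupp.sum_add_index' (by intro a; simp) ?_]
  intro n b₁ b₂
  rw [← map_add, mul_add, add_mul]

lemma apol_zero_left (f : MvPolynomial σ K) : apol 0 f = 0 := by
  rw [apol_def']; exact Finsupp.sum_zero_index

lemma apol_zero_right (Φ : MvPolynomial σ K) : apol Φ 0 = 0 := by
  rw [apol_def']
  have : ∀ m (c : K), ((AddMonoidAlgebra.coeff (0 : MvPolynomial σ K)).sum fun n b =>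
      monomial (n - m) (c * b * ∏ i ∈ m.support, (Nat.descFactorial (n i) (m i) : K)))
      = (0 : MvPolynomial σ K) := fun m c => Finsupp.sum_zero_index
  calc ((AddMonoidAlgebra.coeff Φ).sum fun m c => (AddMonoidAlgebra.coeff (0 : MvPolynomial σ K)).sum fun n b =>
          monomial (n - m) (c * b * ∏ i ∈ m.support, (Nat.descFactorial (n i) (m i) : K)))
      = (AddMonoidAlgebra.coeff Φ).sum fun _ _ => (0 : MvPolynomial σ K) := Finsupp.sum_congr fun m hm => this m _
    _ = 0 := Finset.sum_const_zero

lemma apol_C_left (c : K) (f : MvPolynomial σ K) : apol (C c) f = c • f := by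
  induction f using MvPolynomial.induction_on' with
  | monomial n b =>
    rw [show (C c : MvPolynomial σ K) = monomial 0 c from rfl, apol_monomial_monomial]
    simp [smul_monomial]
  | add p q hp hq => rw [apol_add_right, hp, hq, smul_add]

lemma apol_one_left (f : MvPolynomial σ K) : apol 1 f = f := by
  rw [show (1 : MvPolynomial σ K) = C 1 from rfl, apol_C_left, one_smul]

lemma apol_X_left (i : σ) (f : MvPolynomial σ K) : apol (X i) f = pderiv i f := by
  induction f using MvPolynomial.induction_on' with
  | monomial n b =>
    rw [show (X i : MvPolynomial σ K) = monomial (Finsupp.single i 1) 1 from rfl,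
      apol_monomial_monomial, pderiv_monomial,
      Finsupp.support_single_ne_zero i one_ne_zero]
    simp
  | add p q hp hq => rw [apol_add_right, hp, hq, map_add]

lemma Nat.descFactorial_add' (N k' k : ℕ) :
    N.descFactorial (k' + k) = N.descFactorial k' * (N - k').descFactorial k := by
  induction k with
  | zero => simp
  | succ k ih =>
    rw [← add_assoc, Nat.descFactorial_succ, ih, Nat.descFactorial_succ, Nat.sub_sub]
    ring

lemma apol_mul (Φ Ψ f : MvPolynomial σ K) :
    apol (Φ * Ψ) f = apol Φ (apol Ψ f) := by
  classical
  induction Φ using MvPolynomial.induction_on' with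
  | add p q hp hq => rw [add_mul, apol_add_left, apol_add_left, hp, hq]
  | monomial m c =>
  induction Ψ using MvPolynomial.induction_on' with
  | add p q hp hq => rw [mul_add, apol_add_left, hp, hq, apol_add_left, apol_add_right]
  | monomial m' c' =>
  induction f using MvPolynomial.induction_on' with
  | add p q hp hq => rw [apol_add_right, apol_add_right, apol_add_right, hp, hq]
  | monomial n b =>
  rw [monomial_mul, apol_monomial_monomial, apol_monomial_monomial, apol_monomial_monomial]
  rw [tsub_tsub, add_comm m' m]
  congr 1
  classical
  set u := m.support ∪ m'.support with hu
  have h1 : ∏ i ∈ (m + m').support, (Nat.descFactorial (n i) ((m + m') i) : K)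
      = ∏ i ∈ u, (Nat.descFactorial (n i) ((m + m') i) : K) := by
    refine Finset.prod_subset Finsupp.support_add fun i _ hi => ?_
    rw [Finsupp.notMem_support_iff.mp hi]
    simp
  have h2 : ∏ i ∈ m'.support, (Nat.descFactorial (n i) (m' i) : K)
      = ∏ i ∈ u, (Nat.descFactorial (n i) (m' i) : K) := by
    refine Finset.prod_subset Finset.subset_union_right fun i _ hi => ?_
    rw [Finsupp.notMem_support_iff.mp hi]
    simp
  have h3 : ∏ i ∈ m.support, (Nat.descFactorial ((n - m') i) (m i) : K)
      = ∏ i ∈ u, (Nat.descFactorial ((n - m') i) (m i) : K) := by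
    refine Finset.prod_subset Finset.subset_union_left fun i _ hi => ?_
    rw [Finsupp.notMem_support_iff.mp hi]
    simp
  have h4 : ∏ i ∈ u, (Nat.descFactorial (n i) ((m + m') i) : K)
      = (∏ i ∈ u, (Nat.descFactorial (n i) (m' i) : K))
        * ∏ i ∈ u, (Nat.descFactorial ((n - m') i) (m i) : K) := by
    rw [← Finset.prod_mul_distrib]
    refine Finset.prod_congr rfl fun i _ => ?_
    rw [Finsupp.add_apply, Finsupp.tsub_apply, add_comm, Nat.descFactorial_add']
    push_cast
    ring
  rw [h1, h2, h3, h4]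
  ring


lemma apol_smul_left (c : K) (Φ f : MvPolynomial σ K) :
    apol (c • Φ) f = c • apol Φ f := by
  rw [smul_eq_C_mul, apol_mul, apol_C_left]

lemma apol_smul_right (c : K) (Φ f : MvPolynomial σ K) :
    apol Φ (c • f) = c • apol Φ f := by
  rw [← apol_C_left, ← apol_mul, mul_comm, apol_mul, apol_C_left]

lemma apol_sum_left {ι : Type*} (s : Finset ι) (Φ : ι → MvPolynomial σ K)
    (f : MvPolynomial σ K) : apol (∑ i ∈ s, Φ i) f = ∑ i ∈ s, apol (Φ i) f := by
  classical
  induction s using Finset.induction with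
  | empty => simp [apol_zero_left]
  | insert _ _ hj ih =>
    rw [Finset.sum_insert hj, Finset.sum_insert hj, apol_add_left, ih]

lemma apol_mul_X (Ψ : MvPolynomial σ K) (i : σ) (g : MvPolynomial σ K) :
    apol (Ψ * X i) g = apol Ψ (pderiv i g) := by
  rw [apol_mul, apol_X_left]

lemma apol_one_right (D : MvPolynomial σ K) : apol D 1 = C (constantCoeff D) := by
  classical
  induction D using MvPolynomial.induction_on' with
  | monomial m c =>
    rw [show (1 : MvPolynomial σ K) = monomial 0 1 from rfl, apol_monomial_monomial,
      constantCoeff_monomial]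
    rcases eq_or_ne m 0 with rfl | hm
    · simp
    · obtain ⟨i, hi⟩ := Finsupp.support_nonempty_iff.mpr hm
      rw [Finset.prod_eq_zero hi (by
        rw [show (0 : σ →₀ ℕ) i = 0 from rfl, Nat.descFactorial_of_lt]
        · simp
        · have := Finsupp.mem_support_iff.mp hi; omega)]
      simp [if_neg hm]
  | add p q hp hq => rw [apol_add_left, hp, hq, map_add, map_add]

section Fin
variable [Fintype σ]

noncomputable def Lf (v : σ → K) : MvPolynomial σ K := ∑ i, C (v i) * X i

lemma apol_Lf (v : σ → K) (f : MvPolynomial σ K) :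
    apol (Lf v) f = ∑ i, v i • pderiv i f := by
  rw [Lf, apol_sum_left]
  exact Finset.sum_congr rfl fun i _ => by
    rw [← smul_eq_C_mul, apol_smul_left, apol_X_left]

lemma pderiv_Lf [DecidableEq σ] (i : σ) (v : σ → K) : pderiv i (Lf v) = C (v i) := by
  rw [Lf, map_sum]
  rw [Finset.sum_eq_single i (fun j _ hj => by simp [pderiv_X_of_ne hj]) (by simp)]
  simp

lemma apol_Lf_C (v : σ → K) (c : K) : apol (Lf v) (C c) = 0 := by
  rw [apol_Lf]
  simp [pderiv_C]

lemma apol_Lf_mul_X [DecidableEq σ] (v : σ → K) (p : MvPolynomial σ K) (i : σ) :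
    apol (Lf v) (p * X i) = apol (Lf v) p * X i + v i • p := by
  rw [apol_Lf, apol_Lf]
  have h : ∀ x, v x • pderiv x (p * X i)
      = v x • pderiv x p * X i + v x • (p * pderiv x (X i)) := by
    intro x; rw [pderiv_mul, smul_add, smul_mul_assoc]
  simp only [h, Finset.sum_add_distrib]
  congr 1
  · rw [Finset.sum_mul]
  · rw [Finset.sum_eq_single i (fun j _ hj => by rw [pderiv_X_of_ne (Ne.symm hj)]; simp)
      (by simp)]
    simp

lemma apol_leibniz (v : σ → K) (D g : MvPolynomial σ K) :
    apol D (Lf v * g) = Lf v * apol D g + apol (apol (Lf v) D) g := by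
  classical
  induction D using MvPolynomial.induction_on generalizing g with
  | C c => rw [apol_C_left, apol_C_left, apol_Lf_C, apol_zero_left, add_zero, mul_smul_comm]
  | add p q hp hq =>
    rw [apol_add_left, apol_add_left, hp, hq, apol_add_right, apol_add_left, mul_add]
    ring
  | mul_X p i hp =>
    rw [apol_mul_X, pderiv_mul, pderiv_Lf, apol_add_right, ← smul_eq_C_mul,
      apol_smul_right, hp (pderiv i g), apol_Lf_mul_X, apol_add_left, apol_mul_X,
      apol_smul_left, apol_mul_X]
    abel

end Fin

section Expansion
variable [Fintype σ] {ι : Type*} [DecidableEq ι]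

lemma expansion (w : ι → σ → K) (J : Finset ι) (D : MvPolynomial σ K) :
    apol D (∏ j ∈ J, Lf (w j)) = ∑ S ∈ J.powerset,
      (∏ j ∈ J \ S, Lf (w j)) * C (constantCoeff (apol (∏ j ∈ S, Lf (w j)) D)) := by
  induction J using Finset.induction_on generalizing D with
  | empty => simp [apol_one_right, apol_one_left]
  | @insert j₀ J hj ih =>
    have hdisj : Disjoint J.powerset (J.powerset.image (insert j₀)) := by
      rw [Finset.disjoint_left]
      intro S hS hS'
      obtain ⟨S', hS', rfl⟩ := Finset.mem_image.mp hS'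
      exact hj (Finset.mem_powerset.mp hS (Finset.mem_insert_self j₀ S'))
    have hinj : ∀ x ∈ J.powerset, ∀ y ∈ J.powerset, insert j₀ x = insert j₀ y → x = y := by
      intro x hx y hy hxy
      have hx' : j₀ ∉ x := fun h => hj (Finset.mem_powerset.mp hx h)
      have hy' : j₀ ∉ y := fun h => hj (Finset.mem_powerset.mp hy h)
      rw [← Finset.erase_insert hx', hxy, Finset.erase_insert hy']
    rw [Finset.prod_insert hj, apol_leibniz, ih D, ih (apol (Lf (w j₀)) D),
      Finset.powerset_insert, Finset.sum_union hdisj, Finset.sum_image hinj,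
      Finset.mul_sum]
    congr 1
    · refine Finset.sum_congr rfl fun S hS => ?_
      have hS' : S ⊆ J := Finset.mem_powerset.mp hS
      have h1 : insert j₀ J \ S = insert j₀ (J \ S) := by
        ext x
        simp only [Finset.mem_sdiff, Finset.mem_insert]
        constructor
        · rintro ⟨h | h, h2⟩
          · exact Or.inl h
          · exact Or.inr ⟨h, h2⟩
        · rintro (rfl | ⟨h, h2⟩)
          · exact ⟨Or.inl rfl, fun hc => hj (hS' hc)⟩
          · exact ⟨Or.inr h, h2⟩
      rw [h1, Finset.prod_insert (fun h => hj (Finset.mem_sdiff.mp h).1)]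
      ring
    · refine Finset.sum_congr rfl fun S hS => ?_
      have hS' : S ⊆ J := Finset.mem_powerset.mp hS
      have h2 : insert j₀ J \ insert j₀ S = J \ S := by
        ext x
        simp only [Finset.mem_sdiff, Finset.mem_insert, not_or]
        constructor
        · rintro ⟨h | h, h2, h3⟩
          · exact absurd h h2
          · exact ⟨h, h3⟩
        · rintro ⟨h, h2⟩
          exact ⟨Or.inr h, fun hc => hj (hc ▸ h), h2⟩
      have h3 : apol (∏ j ∈ insert j₀ S, Lf (w j)) D
          = apol (∏ j ∈ S, Lf (w j)) (apol (Lf (w j₀)) D) := by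
        rw [Finset.prod_insert (fun h => hj (hS' h)), mul_comm, apol_mul]
      rw [h2, h3]

end Expansion

section Homog

lemma degree_add (m n : σ →₀ ℕ) : (m + n).degree = m.degree + n.degree := by
  simp only [Finsupp.degree_eq_weight_one]
  exact map_add _ m n

lemma degree_sub_add {m n : σ →₀ ℕ} (h : m ≤ n) :
    (n - m).degree + m.degree = n.degree := by
  rw [← degree_add, tsub_add_cancel_of_le h]

lemma prod_desc_eq_zero {m n : σ →₀ ℕ} (hmn : ¬ m ≤ n) :
    (∏ i ∈ m.support, (Nat.descFactorial (n i) (m i) : K)) = 0 := by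
  rw [Finsupp.le_def] at hmn
  push_neg at hmn
  obtain ⟨i, hi⟩ := hmn
  have him : i ∈ m.support := Finsupp.mem_support_iff.mpr (by omega)
  exact Finset.prod_eq_zero him (by rw [Nat.descFactorial_of_lt hi, Nat.cast_zero])

lemma apol_isHomogeneous {Φ f : MvPolynomial σ K} {e d k : ℕ}
    (hΦ : Φ.IsHomogeneous e) (hf : f.IsHomogeneous d) (hk : k + e = d) :
    (apol Φ f).IsHomogeneous k := by
  rw [apol_def', Finsupp.sum]
  refine IsHomogeneous.sum _ _ _ fun m hm => ?_
  rw [Finsupp.sum]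
  refine IsHomogeneous.sum _ _ _ fun n hn => ?_
  have hm' : m.degree = e := by
    by_contra hc
    exact MvPolynomial.mem_support_iff.mp hm (hΦ.coeff_eq_zero hc)
  have hn' : n.degree = d := by
    by_contra hc
    exact MvPolynomial.mem_support_iff.mp hn (hf.coeff_eq_zero hc)
  by_cases hmn : m ≤ n
  · refine isHomogeneous_monomial _ ?_
    have := degree_sub_add hmn
    omega
  · rw [prod_desc_eq_zero hmn, mul_zero, map_zero]
    exact isHomogeneous_zero _ _ _

lemma apol_eq_zero_of_lt {Φ f : MvPolynomial σ K} {e d : ℕ}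
    (hΦ : Φ.IsHomogeneous e) (hf : f.IsHomogeneous d) (hlt : d < e) :
    apol Φ f = 0 := by
  rw [apol_def', Finsupp.sum]
  refine Finset.sum_eq_zero fun m hm => ?_
  rw [Finsupp.sum]
  refine Finset.sum_eq_zero fun n hn => ?_
  have hm' : m.degree = e := by
    by_contra hc
    exact MvPolynomial.mem_support_iff.mp hm (hΦ.coeff_eq_zero hc)
  have hn' : n.degree = d := by
    by_contra hc
    exact MvPolynomial.mem_support_iff.mp hn (hf.coeff_eq_zero hc)
  have hmn : ¬ m ≤ n := by
    intro hle
    have := degree_sub_add hle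
    omega
  rw [prod_desc_eq_zero hmn, mul_zero, map_zero]

lemma isHomogeneous_Lf [Fintype σ] (v : σ → K) : (Lf v).IsHomogeneous 1 := by
  refine IsHomogeneous.sum _ _ _ fun i _ => ?_
  simpa using (isHomogeneous_C σ (v i)).mul (isHomogeneous_X K i)

lemma eq_C_of_isHomogeneous_zero {D : MvPolynomial σ K} (hD : D.IsHomogeneous 0) :
    D = C (constantCoeff D) := by
  ext m
  rcases eq_or_ne m 0 with rfl | hm
  · simp [constantCoeff_eq]
  · rw [hD.coeff_eq_zero (by rwa [ne_eq, Finsupp.degree_eq_zero_iff])]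
    classical
    rw [coeff_C, if_neg (fun h => hm h.symm)]

end Homog

section LfBasic
variable [Fintype σ]

lemma coeff_Lf [DecidableEq σ] (v : σ → K) (t : σ) :
    coeff (Finsupp.single t 1) (Lf v) = v t := by
  rw [Lf, coeff_sum]
  rw [Finset.sum_eq_single t (fun j _ hj => ?_) (by simp)]
  · rw [coeff_C_mul, coeff_X', if_pos rfl, mul_one]
  · rw [coeff_C_mul, coeff_X', if_neg (fun h =>
      hj ((Finsupp.single_left_inj one_ne_zero).mp h)), mul_zero]

lemma Lf_ne_zero {v : σ → K} (hv : v ≠ 0) : Lf v ≠ 0 := by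
  classical
  obtain ⟨t, ht⟩ := Function.ne_iff.mp hv
  intro h
  apply ht
  have := coeff_Lf v t
  rw [h] at this
  simpa using this.symm

lemma eval_Lf (y : σ → K) (v : σ → K) : eval y (Lf v) = ∑ i, v i * y i := by
  simp [Lf]

lemma Lf_add (v w : σ → K) : Lf (v + w) = Lf v + Lf w := by
  rw [Lf, Lf, Lf, ← Finset.sum_add_distrib]
  exact Finset.sum_congr rfl fun i _ => by rw [Pi.add_apply, map_add, add_mul]

lemma Lf_smul (c : K) (v : σ → K) : Lf (c • v) = C c * Lf v := by
  rw [Lf, Lf, Finset.mul_sum]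
  exact Finset.sum_congr rfl fun i _ => by
    rw [Pi.smul_apply, smul_eq_mul, map_mul, mul_assoc]

lemma Lf_single [DecidableEq σ] (i : σ) : Lf (Pi.single i (1:K)) = X i := by
  rw [Lf, Finset.sum_eq_single i (fun j _ hj => by simp [Pi.single_eq_of_ne hj]) (by simp)]
  simp

end LfBasic

section PDerivZero
variable [CharZero K] [IsDomain K]

lemma eq_zero_of_pderiv_eq_zero {D : MvPolynomial σ K} {d : ℕ}
    (hD : D.IsHomogeneous d) (hd : d ≠ 0) (h : ∀ i, pderiv i D = 0) : D = 0 := by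
  classical
  ext m
  rw [coeff_zero]
  by_contra hc
  have hm : m.degree = d := by
    by_contra hdeg; exact hc (hD.coeff_eq_zero hdeg)
  have hm0 : m ≠ 0 := by
    intro h0; rw [h0] at hm; rw [map_zero] at hm; omega
  obtain ⟨i, hi⟩ := Finsupp.support_nonempty_iff.mpr hm0
  have hmi : m i ≠ 0 := Finsupp.mem_support_iff.mp hi
  have key : coeff (m - Finsupp.single i 1) (pderiv i D) = coeff m D * (m i : K) := by
    conv_lhs => rw [D.as_sum, map_sum]
    rw [coeff_sum]
    rw [Finset.sum_eq_single m (fun u hu hum => ?_) (fun hnm => absurd (mem_support_iff.mpr hc) hnm)]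
    · rw [pderiv_monomial, coeff_monomial, if_pos rfl]
    · rw [pderiv_monomial, coeff_monomial]
      split_ifs with hEq
      · rcases eq_or_ne (u i) 0 with h0 | h0
        · rw [h0]; push_cast; ring
          
        · exfalso; apply hum
          ext j
          rcases eq_or_ne j i with rfl | hji
          · have := congrArg (fun f : σ →₀ ℕ => f j) hEq
            simp only [Finsupp.tsub_apply, Finsupp.single_eq_same] at this
            have hmi' : 1 ≤ m j := Nat.one_le_iff_ne_zero.mpr hmi
            have hui' : 1 ≤ u j := Nat.one_le_iff_ne_zero.mpr h0
            omega
          · have := congrArg (fun f : σ →₀ ℕ => f j) hEq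
            simp only [Finsupp.tsub_apply, Finsupp.single_eq_of_ne hji,
              Nat.sub_zero] at this
            exact this
      · rfl
  rw [h i, coeff_zero] at key
  have : (m i : K) ≠ 0 := Nat.cast_ne_zero.mpr hmi
  exact hc (by
    rcases mul_eq_zero.mp key.symm with h | h
    · exact h
    · exact absurd h this)

end PDerivZero

section Point
variable {K : Type*} [Field K] [CharZero K] {n r : ℕ}

/-- The standard pairing on `Fin m → K` as a bilinear map. -/
noncomputable def pr (m : ℕ) : (Fin m → K) →ₗ[K] (Fin m → K) →ₗ[K] K :=
  LinearMap.mk₂ K (fun v x => ∑ i, v i * x i)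
    (fun v w x => by simp [add_mul, Finset.sum_add_distrib])
    (fun c v x => by simp [Finset.mul_sum, mul_assoc])
    (fun v x y => by simp [mul_add, Finset.sum_add_distrib])
    (fun c v x => by
      simp only [Pi.smul_apply, smul_eq_mul, Finset.mul_sum]
      exact Finset.sum_congr rfl fun i _ => by ring)

lemma pr_apply (m : ℕ) (v x : Fin m → K) : pr m v x = ∑ i, v i * x i := rfl

lemma pr_inj (m : ℕ) {v : Fin m → K} (h : pr m v = 0) : v = 0 := by
  funext i
  have := congrFun (congrArg (fun f : (Fin m → K) →ₗ[K] K => ⇑f) h) (Pi.single i 1)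
  simp only [pr_apply, LinearMap.zero_apply] at this
  rw [Finset.sum_eq_single i (fun j _ hj => by simp [Pi.single_eq_of_ne hj])
    (by simp)] at this
  simpa using this

lemma exists_good_point (a : Fin r → Fin (n + 1) → K)
    (hgen : ∀ s : Finset (Fin r),
      Module.finrank K (Submodule.span K (a '' ↑s)) = min s.card (n + 1))
    (T : Finset (Fin r)) (hT : T.card ≤ n) :
    ∃ p : Fin (n + 1) → K,
      (∀ j ∈ T, ∑ i, a j i * p i = 0) ∧ (∀ k ∉ T, ∑ i, a k i * p i ≠ 0) := by
  classical
  let W : Submodule K (Fin (n + 1) → K) :=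
    ⨅ (j : T), LinearMap.ker (pr (n + 1) (a j.1))
  have claimA : ∀ k ∉ T, ∃ x ∈ W, pr (n + 1) (a k) x ≠ 0 := by
    intro k hk
    by_contra hcon
    push_neg at hcon
    have hker : W ≤ LinearMap.ker (pr (n + 1) (a k)) :=
      fun x hx => LinearMap.mem_ker.mpr (hcon x hx)
    have hspan : pr (n + 1) (a k) ∈
        Submodule.span K (Set.range fun j : T => pr (n + 1) (a j.1)) :=
      mem_span_of_iInf_ker_le_ker hker
    have hrange : (Set.range fun j : T => pr (n + 1) (a j.1))
        = ⇑(pr (n + 1)) '' (a '' ↑T) := by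
      rw [Set.image_image]
      ext ψ
      constructor
      · rintro ⟨⟨j, hj⟩, rfl⟩; exact ⟨j, hj, rfl⟩
      · rintro ⟨j, hj, rfl⟩; exact ⟨⟨j, hj⟩, rfl⟩
    rw [hrange, Submodule.span_image] at hspan
    obtain ⟨w, hw, hweq⟩ := hspan
    have hak : a k ∈ Submodule.span K (a '' ↑T) := by
      have hker0 : pr (n + 1) (w - a k) = 0 := by
        rw [map_sub, hweq]; simp
      have hw0 : w = a k := sub_eq_zero.mp (pr_inj (n + 1) hker0)
      rwa [hw0] at hw
    have h1 : Submodule.span K (a '' ↑(insert k T)) = Submodule.span K (a '' ↑T) := by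
      rw [Finset.coe_insert, Set.image_insert_eq, Submodule.span_insert_eq_span hak]
    have h2 := hgen (insert k T)
    rw [h1, hgen T, Finset.card_insert_of_notMem hk] at h2
    simp only [min_def] at h2
    split_ifs at h2 <;> omega
  let Dm := Module.finrank K W
  let bW : Module.Basis (Fin Dm) K W := Module.finBasis K W
  have hvec : ∀ k ∉ T, (fun t => pr (n + 1) (a k) (bW t : Fin (n + 1) → K)) ≠ 0 := by
    intro k hk h0
    obtain ⟨x, hxW, hxk⟩ := claimA k hk
    apply hxk
    have hx : x = ∑ t, bW.repr ⟨x, hxW⟩ t • (bW t : Fin (n + 1) → K) := by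
      have := congrArg Subtype.val (bW.sum_repr ⟨x, hxW⟩)
      rw [Submodule.coe_sum] at this
      exact this.symm
    rw [hx, map_sum]
    refine Finset.sum_eq_zero fun t _ => ?_
    rw [map_smul, congrFun h0 t]; simp
  have hGne : (∏ k ∈ Tᶜ, Lf (fun t => pr (n + 1) (a k) (bW t : Fin (n + 1) → K))
      : MvPolynomial (Fin Dm) K) ≠ 0 :=
    Finset.prod_ne_zero_iff.mpr fun k hk => Lf_ne_zero (hvec k (Finset.mem_compl.mp hk))
  obtain ⟨y, hy⟩ : ∃ y : Fin Dm → K,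
      eval y (∏ k ∈ Tᶜ, Lf (fun t => pr (n + 1) (a k) (bW t : Fin (n + 1) → K))) ≠ 0 := by
    by_contra hcon
    push_neg at hcon
    exact hGne (MvPolynomial.funext fun x => by rw [hcon x, map_zero])
  refine ⟨((∑ t, y t • bW t : W) : Fin (n + 1) → K), fun j hj => ?_, fun k hk => ?_⟩
  · have hmem := (∑ t, y t • bW t : W).2
    have hj' := (Submodule.mem_iInf (fun j : T => LinearMap.ker (pr (n + 1) (a j.1)))).mp
      hmem ⟨j, hj⟩
    have := LinearMap.mem_ker.mp hj'
    rw [pr_apply] at this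
    exact this
  · have heval : pr (n + 1) (a k) ((∑ t, y t • bW t : W) : Fin (n + 1) → K)
        = eval y (Lf (fun t => pr (n + 1) (a k) (bW t : Fin (n + 1) → K))) := by
      rw [eval_Lf]
      have hco : ((∑ t, y t • bW t : W) : Fin (n + 1) → K)
          = ∑ t, y t • (bW t : Fin (n + 1) → K) := by simp
      rw [hco, map_sum]
      exact Finset.sum_congr rfl fun t _ => by rw [map_smul, smul_eq_mul, mul_comm]
    have hne : eval y (Lf (fun t => pr (n + 1) (a k) (bW t : Fin (n + 1) → K))) ≠ 0 := by
      intro h0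
      apply hy
      rw [map_prod]
      exact Finset.prod_eq_zero (Finset.mem_compl.mpr hk) h0
    rw [← pr_apply]
    rw [heval]
    exact hne
end Point

section Main
variable {K : Type*} [Field K] [CharZero K] {n r : ℕ}

lemma prod_Lf_isHomogeneous {ι : Type*} (w : ι → Fin (n+1) → K) (S : Finset ι) :
    (∏ j ∈ S, Lf (w j)).IsHomogeneous S.card := by
  have := IsHomogeneous.prod S (fun j => Lf (w j)) (fun _ => 1)
    (fun j _ => isHomogeneous_Lf (w j))
  simpa using this

lemma lemN (a : Fin r → Fin (n + 1) → K)
    (hgen : ∀ s : Finset (Fin r),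
      Module.finrank K (Submodule.span K (a '' ↑s)) = min s.card (n + 1)) :
    ∀ d (T : Finset (Fin r)) (D : MvPolynomial (Fin (n + 1)) K),
      n + d ≤ T.card → D.IsHomogeneous d →
      (∀ S ⊆ T, S.card = d → constantCoeff (apol (∏ j ∈ S, Lf (a j)) D) = 0) →
      D = 0 := by
  classical
  intro d
  induction d with
  | zero =>
    intro T D hcard hD hS
    have h0 := hS ∅ (Finset.empty_subset T) Finset.card_empty
    rw [Finset.prod_empty, apol_one_left] at h0
    rw [eq_C_of_isHomogeneous_zero hD, h0, map_zero]
  | succ d ih =>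
    intro T D hcard hD hS
    have hDj : ∀ j ∈ T, apol (Lf (a j)) D = 0 := by
      intro j hj
      refine ih (T.erase j) (apol (Lf (a j)) D) ?_ ?_ ?_
      · rw [Finset.card_erase_of_mem hj]; omega
      · exact apol_isHomogeneous (isHomogeneous_Lf (a j)) hD rfl
      · intro S hSsub hScard
        have hjS : j ∉ S := fun h => (Finset.mem_erase.mp (hSsub h)).1 rfl
        have : apol (∏ j' ∈ S, Lf (a j')) (apol (Lf (a j)) D)
            = apol (∏ j' ∈ insert j S, Lf (a j')) D := by
          rw [Finset.prod_insert hjS, mul_comm, apol_mul]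
        rw [this]
        refine hS (insert j S) ?_ ?_
        · intro x hx
          rcases Finset.mem_insert.mp hx with rfl | hx'
          · exact hj
          · exact (Finset.mem_erase.mp (hSsub hx')).2
        · rw [Finset.card_insert_of_notMem hjS, hScard]
    -- span argument
    obtain ⟨s, hsub, hscard⟩ := Finset.exists_subset_card_eq (s := T) (n := n + 1) (by omega)
    have hspan : Submodule.span K (a '' ↑s) = ⊤ := by
      apply Submodule.eq_top_of_finrank_eq
      rw [hgen s, hscard, Module.finrank_fintype_fun_eq_card, Fintype.card_fin]
      omega
    let Λ : (Fin (n + 1) → K) →ₗ[K] MvPolynomial (Fin (n + 1)) K :=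
      { toFun := fun v => apol (Lf v) D
        map_add' := fun v w => by
          show apol (Lf (v + w)) D = apol (Lf v) D + apol (Lf w) D
          rw [Lf_add, apol_add_left]
        map_smul' := fun c v => by
          show apol (Lf (c • v)) D = c • apol (Lf v) D
          rw [Lf_smul, apol_mul, apol_C_left] }
    have hΛ : ∀ v, Λ v = 0 := by
      intro v
      have hle : Submodule.span K (a '' ↑s) ≤ LinearMap.ker Λ := by
        rw [Submodule.span_le]
        rintro _ ⟨j, hj, rfl⟩
        exact LinearMap.mem_ker.mpr (hDj j (hsub hj))
      have hv : v ∈ Submodule.span K (a '' ↑s) := by rw [hspan]; trivial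
      exact LinearMap.mem_ker.mp (hle hv)
    have hpd : ∀ i, pderiv i D = 0 := by
      intro i
      have := hΛ (Pi.single i 1)
      rw [show Λ (Pi.single i 1) = apol (Lf (Pi.single i (1:K))) D from rfl,
        Lf_single, apol_X_left] at this
      exact this
    exact eq_zero_of_pderiv_eq_zero hD (Nat.succ_ne_zero d) hpd

lemma lemM (a : Fin r → Fin (n + 1) → K)
    (hgen : ∀ s : Finset (Fin r),
      Module.finrank K (Submodule.span K (a '' ↑s)) = min s.card (n + 1))
    (d : ℕ) (hdn : d ≤ n) (T : Finset (Fin r)) (hcard : n + d ≤ T.card)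
    (D : MvPolynomial (Fin (n + 1)) K) (hD : D.IsHomogeneous d)
    (h0 : apol D (∏ j ∈ T, Lf (a j)) = 0) : D = 0 := by
  classical
  refine lemN a hgen d T D hcard hD ?_
  intro T' hT'sub hT'card
  obtain ⟨p, hp0, hpne⟩ := exists_good_point a hgen T' (by omega)
  have hexp := expansion (fun j => a j) T D
  rw [h0] at hexp
  have heval := congrArg (eval p) hexp.symm
  rw [map_zero, map_sum] at heval
  rw [Finset.sum_eq_single T' ?_ ?_] at heval
  · -- heval : eval p (term T') = 0
    rw [map_mul, eval_C, map_prod] at heval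
    have hprodne : (∏ j ∈ T \ T', eval p (Lf (a j))) ≠ 0 := by
      refine Finset.prod_ne_zero_iff.mpr fun j hj => ?_
      rw [eval_Lf]
      exact hpne j (Finset.mem_sdiff.mp hj).2
    rcases mul_eq_zero.mp heval with h | h
    · exact absurd h hprodne
    · exact h
  · intro S hSmem hSne
    rcases lt_trichotomy S.card (d) with hlt | heq | hgt
    · -- degree d - S.card > 0, constant coeff vanishes
      rw [map_mul, eval_C]
      have hhom : (apol (∏ j ∈ S, Lf (a j)) D).IsHomogeneous (d - S.card) :=
        apol_isHomogeneous (prod_Lf_isHomogeneous _ S) hD (by omega)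
      have : constantCoeff (apol (∏ j ∈ S, Lf (a j)) D) = 0 := by
        rw [constantCoeff_eq]
        exact hhom.coeff_eq_zero (by rw [map_zero]; omega)
      rw [this, mul_zero]
    · -- same card, S ≠ T' : some j ∈ T' \ S kills the product
      have : ¬ T' ⊆ S := by
        intro hsub
        exact hSne (Finset.eq_of_subset_of_card_le hsub (by omega)).symm
      obtain ⟨j, hjT', hjS⟩ := Finset.not_subset.mp this
      have hjTS : j ∈ T \ S := Finset.mem_sdiff.mpr ⟨hT'sub hjT', hjS⟩
      rw [map_mul, map_prod]
      rw [Finset.prod_eq_zero hjTS (by rw [eval_Lf]; exact hp0 j hjT'), zero_mul]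
    · -- card > d : apol vanishes
      have : apol (∏ j ∈ S, Lf (a j)) D = 0 :=
        apol_eq_zero_of_lt (prod_Lf_isHomogeneous _ S) hD hgt
      rw [this, map_zero, map_zero, mul_zero, map_zero]
  · intro hT'mem
    exact absurd (Finset.mem_powerset.mpr hT'sub) hT'mem

end Main

end ApolarProof

open ApolarProof in
/-- Initial degree bound for the apolar ideal of a generic arrangement of at least
`n+1` hyperplanes in `ℙⁿ`: `α(Ann(f)) ≥ min(|A| - n + 1, n + 1)`, i.e. all graded
components of the apolar ideal in degrees below this bound vanish. -/
theorem stmt10 (K : Type*) [Field K] [CharZero K] [IsAlgClosed K] (n r : ℕ)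
    (hr : n + 1 ≤ r) (a : Fin r → Fin (n + 1) → K) (ha : ∀ j, a j ≠ 0)
    (hdist : ∀ j j' : Fin r, j ≠ j' → ∀ c : K, a j ≠ c • a j')
    (hgen : ∀ s : Finset (Fin r),
      Module.finrank K (Submodule.span K (a '' ↑s)) = min s.card (n + 1)) :
    ∀ d < min (r - n + 1) (n + 1), ∀ D : MvPolynomial (Fin (n + 1)) K,
      D.IsHomogeneous d → apol D (∏ j, ∑ i, C (a j i) * X i) = 0 → D = 0 := by
  intro d hd D hD h0
  rw [lt_min_iff] at hd
  refine lemM a hgen d (by omega) Finset.univ ?_ D hD ?_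
  · rw [Finset.card_univ, Fintype.card_fin]; omega
  · exact h0
end

section
/- The Waring rank of the defining polynomial of a generic arrangement A ⊂ P^n with at least n+1 hyperplanes is at least min{C(|A|, n), C(2n, n)}, where C(a,b) denotes the binomial coefficient. -/
open MvPolynomial

section avoid
variable {K : Type*} [Field K] {V : Type*} [AddCommGroup V] [Module K V]

lemma exists_forall_ne_zero [Infinite K] {ι : Type*} (s : Finset ι) (g : ι → V →ₗ[K] K)
    (hg : ∀ j ∈ s, g j ≠ 0) : ∃ v : V, ∀ j ∈ s, g j v ≠ 0 := by
  classical
  induction s using Finset.cons_induction with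
  | empty => exact ⟨0, by simp⟩
  | cons j₀ s hj₀ ih =>
    obtain ⟨v, hv⟩ := ih fun j hj => hg j (Finset.mem_cons_of_mem hj)
    have hgj₀ : g j₀ ≠ 0 := hg j₀ (Finset.mem_cons_self _ _)
    obtain ⟨w, hw⟩ : ∃ w, g j₀ w ≠ 0 := by
      by_contra h
      push_neg at h
      exact hgj₀ (LinearMap.ext fun x => h x)
    obtain ⟨cc, hcc⟩ := Infinite.exists_notMem_finset
      ((Finset.cons j₀ s hj₀).image fun j => -(g j v) / (g j w))
    refine ⟨v + cc • w, fun j hj => ?_⟩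
    rw [map_add, map_smul, smul_eq_mul]
    intro hzero
    by_cases hw0 : g j w = 0
    · rw [hw0, mul_zero, add_zero] at hzero
      rcases Finset.mem_cons.mp hj with rfl | hj'
      · exact hw hw0
      · exact hv j hj' hzero
    · apply hcc
      refine Finset.mem_image.mpr ⟨j, hj, ?_⟩
      rw [div_eq_iff hw0]
      linear_combination -hzero
end avoid

section dot
variable {K : Type*} [Field K] {m : ℕ}

noncomputable def dotL (v : Fin m → K) : (Fin m → K) →ₗ[K] K :=
  ∑ i, v i • LinearMap.proj i

lemma dotL_apply (v p : Fin m → K) : dotL v p = ∑ i, v i * p i := by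
  simp [dotL]

noncomputable def dotLM : (Fin m → K) →ₗ[K] ((Fin m → K) →ₗ[K] K) where
  toFun := dotL
  map_add' x y := by
    ext p
    simp [dotL_apply, add_mul, Finset.sum_add_distrib]
  map_smul' cst x := by
    ext p
    simp [dotL_apply, Finset.mul_sum, mul_assoc]

lemma dotLM_injective : Function.Injective (dotLM (K := K) (m := m)) := by
  intro x y h
  funext i
  have := congrArg (fun f => f (Pi.single i 1)) h
  simpa [dotLM, dotL_apply, Pi.single_apply, mul_ite, Finset.sum_ite_eq'] using this

end dot

section point
variable {K : Type*} [Field K] [CharZero K] {n r : ℕ}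

lemma exists_point (a : Fin r → Fin (n + 1) → K)
    (hgen : ∀ s : Finset (Fin r),
      Module.finrank K (Submodule.span K (a '' ↑s)) = min s.card (n + 1))
    (U : Finset (Fin r)) (hU : U.card ≤ n) :
    ∃ p : Fin (n + 1) → K, (∀ j ∈ U, ∑ i, a j i * p i = 0) ∧
      (∀ j ∉ U, ∑ i, a j i * p i ≠ 0) := by
  classical
  set S : Submodule K (Fin (n + 1) → K) := ⨅ j : U, LinearMap.ker (dotL (a j)) with hS
  have hres : ∀ j₀ ∉ U, ∃ x ∈ S, dotL (a j₀) x ≠ 0 := by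
    intro j₀ hj₀
    by_contra h
    push_neg at h
    have hker : S ≤ LinearMap.ker (dotL (a j₀)) := fun x hx => h x hx
    have hspan : dotLM (a j₀) ∈ Submodule.span K (Set.range fun j : U => dotLM (a j)) :=
      mem_span_of_iInf_ker_le_ker (L := fun j : U => dotL (a j)) hker
    have himg : (Set.range fun j : U => dotLM (a j))
        = dotLM '' (a '' (↑U : Set (Fin r))) := by
      rw [Set.image_image, Set.image_eq_range]
      rfl
    rw [himg, Submodule.span_image] at hspan
    obtain ⟨y, hy, hyeq⟩ := Submodule.mem_map.mp hspan
    have hmem : a j₀ ∈ Submodule.span K (a '' (↑U : Set (Fin r))) := by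
      rwa [dotLM_injective hyeq] at hy
    have h1 := hgen U
    have h2 := hgen (insert j₀ U)
    rw [Finset.coe_insert, Set.image_insert_eq,
      Submodule.span_insert_eq_span hmem] at h2
    rw [Finset.card_insert_of_notMem hj₀] at h2
    rw [h1] at h2
    omega
  have hrestr : ∀ j ∈ Uᶜ, (dotL (a j)).domRestrict S ≠ 0 := by
    intro j hj
    obtain ⟨x, hxS, hx⟩ := hres j (Finset.mem_compl.mp hj)
    intro hzero
    have := congrArg (fun f => f (⟨x, hxS⟩ : S)) hzero
    simp only [LinearMap.domRestrict_apply, LinearMap.zero_apply] at this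
    exact hx this
  obtain ⟨v, hv⟩ := exists_forall_ne_zero (K := K) (V := S) Uᶜ
    (fun j => (dotL (a j)).domRestrict S) hrestr
  refine ⟨(v : Fin (n + 1) → K), fun j hj => ?_, fun j hj => ?_⟩
  · have hvS : (v : Fin (n + 1) → K) ∈ S := v.2
    have h2 := (Submodule.mem_iInf (fun j : U => LinearMap.ker (dotL (a j)))).mp hvS ⟨j, hj⟩
    rw [LinearMap.mem_ker, dotL_apply] at h2
    exact h2
  · have := hv j (Finset.mem_compl.mpr hj)
    rw [LinearMap.domRestrict_apply, dotL_apply] at this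
    exact this

end point

section poly
variable {R : Type*} [CommRing R] {ι : Type*}

lemma natDegree_linprod (s : Finset ι) (u v : ι → R) :
    (∏ j ∈ s, (Polynomial.C (u j) + Polynomial.C (v j) * Polynomial.X)).natDegree ≤ s.card := by
  refine le_trans (Polynomial.natDegree_prod_le s _) ?_
  have h1 : ∀ j ∈ s, (Polynomial.C (u j) + Polynomial.C (v j) * Polynomial.X).natDegree ≤ 1 := by
    intro j _
    refine (Polynomial.natDegree_add_le _ _).trans ?_
    simp only [Polynomial.natDegree_C, max_le_iff]
    exact ⟨Nat.zero_le _, (Polynomial.natDegree_C_mul_le _ _).trans Polynomial.natDegree_X_le⟩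
  calc ∑ j ∈ s, (Polynomial.C (u j) + Polynomial.C (v j) * Polynomial.X).natDegree
      ≤ ∑ _j ∈ s, 1 := Finset.sum_le_sum (f := fun j => (Polynomial.C (u j) + Polynomial.C (v j) * Polynomial.X).natDegree) (g := fun _ => 1) h1
    _ = s.card := by simp

lemma coeff_linprod (s : Finset ι) (u v : ι → R) :
    (∏ j ∈ s, (Polynomial.C (u j) + Polynomial.C (v j) * Polynomial.X)).coeff s.card
      = ∏ j ∈ s, v j := by
  classical
  induction s using Finset.cons_induction with
  | empty => simp
  | cons j s hj ih =>
    rw [Finset.prod_cons, Finset.card_cons, Finset.prod_cons, add_mul, mul_assoc]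
    have hdeg : (∏ j ∈ s, (Polynomial.C (u j) + Polynomial.C (v j) * Polynomial.X)).natDegree
        < s.card + 1 := Nat.lt_succ_of_le (natDegree_linprod s u v)
    rw [Polynomial.coeff_add, Polynomial.coeff_C_mul, Polynomial.coeff_C_mul,
      Polynomial.coeff_X_mul, Polynomial.coeff_eq_zero_of_natDegree_lt hdeg, ih, mul_zero,
      zero_add]
end poly

section lf
variable {K : Type*} [CommRing K] {n : ℕ}

noncomputable def lf : (Fin (n + 1) → K) →ₗ[K] MvPolynomial (Fin (n + 1)) K :=
  ∑ i, (LinearMap.proj i : (Fin (n + 1) → K) →ₗ[K] K).smulRight (X i)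

lemma lf_apply (v : Fin (n + 1) → K) : lf v = ∑ i, C (v i) * X i := by
  simp [lf, smul_eq_C_mul]

lemma phi_linform (p v : Fin (n + 1) → K) :
    MvPolynomial.aeval
      (fun i => Polynomial.C (X i) + Polynomial.C (C (p i)) * Polynomial.X :
        Fin (n + 1) → Polynomial (MvPolynomial (Fin (n + 1)) K))
      (∑ i, C (v i) * X i)
    = Polynomial.C (∑ i, C (v i) * X i)
      + Polynomial.C (C (∑ i, v i * p i)) * Polynomial.X := by
  rw [map_sum]
  have hterm : ∀ i : Fin (n + 1),
      MvPolynomial.aeval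
        (fun i => Polynomial.C (X i) + Polynomial.C (C (p i)) * Polynomial.X :
          Fin (n + 1) → Polynomial (MvPolynomial (Fin (n + 1)) K))
        (C (v i) * X i)
      = Polynomial.C (C (v i) * X i) + Polynomial.C (C (v i * p i)) * Polynomial.X := by
    intro i
    rw [map_mul, aeval_X, aeval_C]
    have halg : (algebraMap K (Polynomial (MvPolynomial (Fin (n + 1)) K))) (v i)
        = Polynomial.C (C (v i)) := rfl
    rw [halg, mul_add, ← Polynomial.C_mul, ← mul_assoc, ← Polynomial.C_mul, ← C_mul]
  rw [Finset.sum_congr rfl fun i _ => hterm i, Finset.sum_add_distrib, ← map_sum,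
    ← Finset.sum_mul, ← map_sum, ← map_sum]

end lf

lemma coeff_linpow {R : Type*} [CommRing R] (u w : R) (rr e : ℕ) (he : e ≤ rr) :
    ((Polynomial.C u + Polynomial.C w * Polynomial.X) ^ rr).coeff e
      = u ^ (rr - e) * w ^ e * (rr.choose e : R) := by
  rw [add_pow, Polynomial.finset_sum_coeff]
  have hterm : ∀ i ∈ Finset.range (rr + 1),
      (Polynomial.C u ^ i * (Polynomial.C w * Polynomial.X) ^ (rr - i)
        * (rr.choose i : Polynomial R)).coeff e
      = if rr - i = e then u ^ i * w ^ (rr - i) * (rr.choose i : R) else 0 := by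
    intro i _
    rw [mul_pow, ← Polynomial.C_pow, ← Polynomial.C_pow, ← Polynomial.C_eq_natCast]
    have h1 : Polynomial.C (u ^ i) * (Polynomial.C (w ^ (rr - i)) * Polynomial.X ^ (rr - i))
          * Polynomial.C ((rr.choose i : R))
        = Polynomial.C (u ^ i * w ^ (rr - i) * (rr.choose i : R)) * Polynomial.X ^ (rr - i) := by
      rw [Polynomial.C_mul, Polynomial.C_mul]
      ring
    rw [h1, Polynomial.coeff_C_mul, Polynomial.coeff_X_pow]
    simp only [mul_ite, mul_one, mul_zero]
    congr 1
    simp [eq_comm]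
  rw [Finset.sum_congr rfl hterm]
  rw [Finset.sum_eq_single (rr - e)]
  · have h2 : rr - (rr - e) = e := by omega
    rw [h2, if_pos rfl, Nat.choose_symm he]
  · intro i hi hne
    rw [if_neg]
    intro h
    apply hne
    have hirr : i ≤ rr := Nat.lt_succ_iff.mp (Finset.mem_range.mp hi)
    omega
  · intro h
    exact absurd (Finset.mem_range.mpr (by omega)) h
section extras
variable {K : Type*} [CommRing K] {n : ℕ}

lemma lf_single (i : Fin (n + 1)) : lf (Pi.single i (1 : K)) = X i := by
  classical
  rw [lf_apply, Finset.sum_eq_single i]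
  · simp
  · intro i' _ hne
    rw [Pi.single_eq_of_ne hne]
    simp
  · simp

lemma multiset_prod_X (s : Multiset (Fin (n + 1))) :
    ((s.map X).prod : MvPolynomial (Fin (n + 1)) K)
      = monomial (Multiset.toFinsupp s) 1 := by
  refine Multiset.induction_on s ?_ ?_
  · simp [monomial_zero']
  · intro i s ih
    rw [Multiset.map_cons, Multiset.prod_cons, ih]
    have h1 : Multiset.toFinsupp (i ::ₘ s) = Finsupp.single i 1 + Multiset.toFinsupp s := by
      rw [← Multiset.singleton_add, Multiset.toFinsupp_add, Multiset.toFinsupp_singleton]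
    rw [h1, monomial_single_add, pow_one]

end extras

/-- Waring rank lower bound for a generic arrangement of at least `n+1` hyperplanes:
any Waring decomposition of its defining polynomial uses at least
`min(C(|A|,n), C(2n,n))` powers of linear forms. -/
theorem stmt12 (K : Type*) [Field K] [CharZero K] [IsAlgClosed K] (n r : ℕ)
    (hr : n + 1 ≤ r) (a : Fin r → Fin (n + 1) → K) (ha : ∀ j, a j ≠ 0)
    (hdist : ∀ j j' : Fin r, j ≠ j' → ∀ c : K, a j ≠ c • a j')
    (hgen : ∀ s : Finset (Fin r),
      Module.finrank K (Submodule.span K (a '' ↑s)) = min s.card (n + 1)) :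
    ∀ (k : ℕ) (c : Fin k → K) (b : Fin k → Fin (n + 1) → K),
      (∏ j, ∑ i, C (a j i) * X i) = ∑ m, c m • (∑ i, C (b m i) * X i) ^ r →
      min (Nat.choose r n) (Nat.choose (2 * n) n) ≤ k := by
  intro k c b heq
  classical
  set d := min (r - n) n with hd
  have hdn : d ≤ n := min_le_right _ _
  have hdr' : d ≤ r - n := min_le_left _ _
  have hdnr : d + n ≤ r := by omega
  set W : Submodule K (MvPolynomial (Fin (n + 1)) K) :=
    Submodule.span K (Set.range fun m : Fin k => (∑ i, C (b m i) * X i) ^ d) with hW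
  haveI hWfd : FiniteDimensional K W := FiniteDimensional.span_of_finite K (Set.finite_range _)
  -- Step 1 : products over a `d`-subset of the arrangement lie in `W`
  have hbase : ∀ U : Finset (Fin r), U.card = d →
      (∏ j ∈ U, (∑ i, C (a j i) * X i)) ∈ W := by
    intro U hUcard
    obtain ⟨p, hp0, hpne⟩ := exists_point a hgen U (by omega)
    have hUc_card : Uᶜ.card = r - d := by
      rw [Finset.card_compl, Fintype.card_fin, hUcard]
    have happ := congrArg (fun q => Polynomial.coeff
      ((MvPolynomial.aeval (fun i => Polynomial.C (X i) + Polynomial.C (C (p i)) * Polynomial.X :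
        Fin (n + 1) → Polynomial (MvPolynomial (Fin (n + 1)) K))) q) (r - d)) heq
    have hLHS : Polynomial.coeff
        ((MvPolynomial.aeval (fun i => Polynomial.C (X i) + Polynomial.C (C (p i)) * Polynomial.X :
          Fin (n + 1) → Polynomial (MvPolynomial (Fin (n + 1)) K)))
          (∏ j, ∑ i, C (a j i) * X i)) (r - d)
        = (∏ j ∈ U, (∑ i, C (a j i) * X i)) * C (∏ j ∈ Uᶜ, ∑ i, a j i * p i) := by
      rw [map_prod]
      have hfac : ∀ j : Fin r,
          (MvPolynomial.aeval (fun i => Polynomial.C (X i) + Polynomial.C (C (p i)) * Polynomial.X :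
            Fin (n + 1) → Polynomial (MvPolynomial (Fin (n + 1)) K))) (∑ i, C (a j i) * X i)
          = Polynomial.C (∑ i, C (a j i) * X i)
            + Polynomial.C (C (∑ i, a j i * p i)) * Polynomial.X :=
        fun j => phi_linform p (a j)
      simp only [hfac]
      rw [← Finset.prod_mul_prod_compl U]
      have hprodU : (∏ j ∈ U, (Polynomial.C (∑ i, C (a j i) * X i)
            + Polynomial.C (C (∑ i, a j i * p i)) * Polynomial.X))
          = Polynomial.C (∏ j ∈ U, (∑ i, C (a j i) * X i)) := by
        have hC : ∀ j ∈ U, Polynomial.C (∑ i, C (a j i) * X i)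
              + Polynomial.C (C (∑ i, a j i * p i)) * Polynomial.X
            = Polynomial.C (∑ i, C (a j i) * X i) := fun j hj => by
          rw [hp0 j hj]; simp
        rw [Finset.prod_congr rfl hC]
        exact (map_prod (Polynomial.C : MvPolynomial (Fin (n + 1)) K →+* Polynomial (MvPolynomial (Fin (n + 1)) K)) _ U).symm
      rw [hprodU, Polynomial.coeff_C_mul, ← hUc_card, coeff_linprod Uᶜ _ _, ← map_prod]
    have hRHS : Polynomial.coeff
        ((MvPolynomial.aeval (fun i => Polynomial.C (X i) + Polynomial.C (C (p i)) * Polynomial.X :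
          Fin (n + 1) → Polynomial (MvPolynomial (Fin (n + 1)) K)))
          (∑ m, c m • (∑ i, C (b m i) * X i) ^ r)) (r - d)
        = ∑ m, (c m * ((∑ i, b m i * p i) ^ (r - d) * (r.choose (r - d) : K)))
            • ((∑ i, C (b m i) * X i) ^ d) := by
      rw [map_sum, Polynomial.finset_sum_coeff]
      refine Finset.sum_congr rfl fun m _ => ?_
      rw [map_smul, map_pow, phi_linform p (b m), Polynomial.coeff_smul,
        coeff_linpow _ _ r (r - d) (by omega)]
      have h3 : r - (r - d) = d := by omega
      rw [h3, ← C_pow, ← map_natCast (C : K →+* MvPolynomial (Fin (n + 1)) K),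
        smul_eq_C_mul, smul_eq_C_mul]
      simp only [C_mul]
      ring
    rw [hLHS, hRHS] at happ
    have hκ : (∏ j ∈ Uᶜ, ∑ i, a j i * p i) ≠ 0 :=
      Finset.prod_ne_zero_iff.mpr fun j hj => hpne j (Finset.mem_compl.mp hj)
    have hmem : (∏ j ∈ U, (∑ i, C (a j i) * X i)) * C (∏ j ∈ Uᶜ, ∑ i, a j i * p i) ∈ W := by
      rw [happ]
      exact Submodule.sum_mem _ fun m _ => Submodule.smul_mem _ _
        (Submodule.subset_span ⟨m, rfl⟩)
    have hrw : (∏ j ∈ U, (∑ i, C (a j i) * X i))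
        = (∏ j ∈ Uᶜ, ∑ i, a j i * p i)⁻¹
          • ((∏ j ∈ U, (∑ i, C (a j i) * X i)) * C (∏ j ∈ Uᶜ, ∑ i, a j i * p i)) := by
      rw [mul_comm, ← smul_eq_C_mul, smul_smul, inv_mul_cancel₀ hκ, one_smul]
    rw [hrw]
    exact Submodule.smul_mem _ _ hmem
  -- Step 2 : multiply by arbitrary variables
  have hstep : ∀ s : Multiset (Fin (n + 1)), ∀ U : Finset (Fin r),
      Multiset.card s + U.card = d →
      (∏ j ∈ U, (∑ i, C (a j i) * X i)) * (s.map X).prod ∈ W := by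
    intro s
    refine Multiset.induction_on s ?_ ?_
    · intro U hcard
      simp only [Multiset.card_zero, zero_add] at hcard
      simpa using hbase U hcard
    · intro i s ih U hcard
      simp only [Multiset.card_cons] at hcard
      have hUc : n + 1 ≤ Uᶜ.card := by
        rw [Finset.card_compl, Fintype.card_fin]
        omega
      obtain ⟨s₀, hs₀sub, hs₀card⟩ := Finset.exists_subset_card_eq hUc
      have htop : Submodule.span K (a '' (↑s₀ : Set (Fin r))) = ⊤ := by
        apply Submodule.eq_top_of_finrank_eq
        rw [hgen s₀, hs₀card, Module.finrank_pi, Fintype.card_fin]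
        simp
      have hXi : Pi.single i (1 : K) ∈ Submodule.span K (a '' (↑s₀ : Set (Fin r))) := by
        rw [htop]; trivial
      rw [Set.image_eq_range] at hXi
      obtain ⟨lam, hlam⟩ := (Submodule.mem_span_range_iff_exists_fun K).mp hXi
      have hXi2 : (X i : MvPolynomial (Fin (n + 1)) K)
          = ∑ j : (↑s₀ : Set (Fin r)), lam j • (∑ i', C (a (j : Fin r) i') * X i') := by
        have h4 := congrArg (lf (K := K) (n := n)) hlam
        rw [map_sum, lf_single] at h4
        simp only [map_smul, lf_apply] at h4
        exact h4.symm
      rw [Multiset.map_cons, Multiset.prod_cons, hXi2]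
      have hre : (∏ j ∈ U, (∑ i', C (a j i') * X i')) *
          ((∑ j : (↑s₀ : Set (Fin r)), lam j • (∑ i', C (a (j : Fin r) i') * X i'))
            * (Multiset.map X s).prod)
          = ∑ j : (↑s₀ : Set (Fin r)), lam j •
            (((∑ i', C (a (j : Fin r) i') * X i') * ∏ j' ∈ U, (∑ i', C (a j' i') * X i'))
              * (Multiset.map X s).prod) := by
        rw [Finset.sum_mul, Finset.mul_sum]
        refine Finset.sum_congr rfl fun j _ => ?_
        rw [smul_eq_C_mul, smul_eq_C_mul]
        ring
      rw [hre]
      refine Submodule.sum_mem _ fun j _ => Submodule.smul_mem _ _ ?_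
      have hjU : (j : Fin r) ∉ U := Finset.mem_compl.mp (hs₀sub (Finset.mem_coe.mp j.2))
      have hins : (∑ i' : Fin (n + 1), C (a (j : Fin r) i') * X i')
            * ∏ j' ∈ U, (∑ i' : Fin (n + 1), C (a j' i') * X i')
          = ∏ j' ∈ insert (j : Fin r) U, (∑ i' : Fin (n + 1), C (a j' i') * X i') :=
        (Finset.prod_insert (f := fun j' : Fin r => ∑ i' : Fin (n + 1), C (a j' i') * X i') hjU).symm
      rw [hins]
      exact ih (insert (j : Fin r) U) (by rw [Finset.card_insert_of_notMem hjU]; omega)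
  -- Step 3 : all monomials of degree `d` are in `W`
  have hmem : ∀ mm : Sym (Fin (n + 1)) d,
      (monomial (Multiset.toFinsupp (mm : Multiset (Fin (n + 1)))) 1 :
        MvPolynomial (Fin (n + 1)) K) ∈ W := by
    intro mm
    have h7 := hstep (mm : Multiset (Fin (n + 1))) ∅ (by simp [mm.2])
    simpa [multiset_prod_X] using h7
  -- Step 4 : linear independence and counting
  have hcard_sym : Fintype.card (Sym (Fin (n + 1)) d) = (n + d).choose d := by
    rw [Sym.card_sym_eq_choose, Fintype.card_fin]
    congr 1
    omega
  have hinj : Function.Injective (fun mm : Sym (Fin (n + 1)) d =>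
      (Multiset.toFinsupp (mm : Multiset (Fin (n + 1))) : Fin (n + 1) →₀ ℕ)) := by
    intro x y h
    refine Sym.coe_injective ?_
    have := congrArg (Multiset.toFinsupp (α := Fin (n + 1))).symm h
    simpa using this
  have hli : LinearIndependent K (fun mm : Sym (Fin (n + 1)) d =>
      (monomial (Multiset.toFinsupp (mm : Multiset (Fin (n + 1)))) 1 :
        MvPolynomial (Fin (n + 1)) K)) := by
    have h5 := (MvPolynomial.basisMonomials (Fin (n + 1)) K).linearIndependent.comp _ hinj
    have h6 : (⇑(MvPolynomial.basisMonomials (Fin (n + 1)) K) ∘ fun mm : Sym (Fin (n + 1)) d =>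
        (Multiset.toFinsupp (mm : Multiset (Fin (n + 1))) : Fin (n + 1) →₀ ℕ))
        = fun mm : Sym (Fin (n + 1)) d =>
          (monomial (Multiset.toFinsupp (mm : Multiset (Fin (n + 1)))) 1 :
            MvPolynomial (Fin (n + 1)) K) := by
      funext mm
      simp [Function.comp, coe_basisMonomials]
    rwa [h6] at h5
  have hle1 : (n + d).choose d ≤ Module.finrank K W := by
    rw [← hcard_sym, ← finrank_span_eq_card hli]
    exact Submodule.finrank_mono (Submodule.span_le.mpr (Set.range_subset_iff.mpr hmem))
  have hle2 : Module.finrank K W ≤ k := by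
    rw [hW]
    refine le_trans (finrank_span_le_card _) ?_
    rw [Set.toFinset_range]
    exact le_trans Finset.card_image_le (by simp)
  rcases le_total (r - n) n with hc | hc
  · have hdeq : d = r - n := min_eq_left hc
    have h8 : (n + d).choose d = r.choose n := by
      rw [hdeq]
      have h9 : n + (r - n) = r := by omega
      rw [h9]
      exact Nat.choose_symm (by omega)
    calc min (r.choose n) ((2 * n).choose n) ≤ r.choose n := min_le_left _ _
      _ = (n + d).choose d := h8.symm
      _ ≤ Module.finrank K W := hle1
      _ ≤ k := hle2
  · have hdeq : d = n := min_eq_right hc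
    have h8 : (n + d).choose d = (2 * n).choose n := by rw [hdeq]; congr 1; omega
    calc min (r.choose n) ((2 * n).choose n) ≤ (2 * n).choose n := min_le_right _ _
      _ = (n + d).choose d := h8.symm
      _ ≤ Module.finrank K W := hle1
      _ ≤ k := hle2
end

section
/- If an arrangement A in P^2 is irreducible (not a product of lower-dimensional arrangements after any linear change of coordinates), then its defining polynomial has four factors, no three of which are linearly dependent; consequently there is a linear change of variables so that Q(A) = xyz(x+y+z)ℓ_1⋯ℓ_t for some linear forms ℓ_i. -/
open MvPolynomial

/-- An arrangement of lines in ℙ², given by coefficient vectors `a j` of its defining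
linear forms, is reducible if after an invertible linear change of coordinates each
defining linear form involves only variables from a nontrivial subset `S` of the
coordinates or only variables from its complement. -/
def ArrReducible {K : Type*} [Field K] {r : ℕ} (a : Fin r → Fin 3 → K) : Prop :=
  ∃ M : Matrix (Fin 3) (Fin 3) K, IsUnit M.det ∧
    ∃ S : Finset (Fin 3), S.Nonempty ∧ S ≠ Finset.univ ∧
      ∀ j : Fin r, (∀ i ∉ S, Matrix.vecMul (a j) M i = 0) ∨
        (∀ i ∈ S, Matrix.vecMul (a j) M i = 0)


section Helpers
variable {K : Type*} [Field K]

def LI3 (u v w : Fin 3 → K) : Prop :=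
  ∀ c0 c1 c2 : K, c0 • u + c1 • v + c2 • w = 0 → c0 = 0 ∧ c1 = 0 ∧ c2 = 0

def LI2 (v w : Fin 3 → K) : Prop :=
  ∀ c0 c1 : K, c0 • v + c1 • w = 0 → c0 = 0 ∧ c1 = 0

def stdRow (i : Fin 3) : Fin 3 → K := fun j => if i = j then 1 else 0

lemma stdRow_same (i : Fin 3) : (stdRow i : Fin 3 → K) i = 1 := by simp [stdRow]

lemma stdRow_ne {i j : Fin 3} (h : i ≠ j) : (stdRow i : Fin 3 → K) j = 0 := by
  simp [stdRow, h]

lemma combo_apply {u v w : Fin 3 → K} {c0 c1 c2 : K}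
    (h : c0 • u + c1 • v + c2 • w = 0) (i : Fin 3) :
    c0 * u i + c1 * v i + c2 * w i = 0 := by
  have := congrFun h i
  simpa using this

lemma li_ee {p q s : Fin 3} (hpq : p ≠ q) (hps : p ≠ s) (hqs : q ≠ s)
    {v : Fin 3 → K} (hv : v s ≠ 0) : LI3 (stdRow p) (stdRow q) v := by
  intro c0 c1 c2 h
  have hs := combo_apply h s
  rw [stdRow_ne hps, stdRow_ne hqs] at hs
  have hc2 : c2 = 0 := by
    have : c2 * v s = 0 := by linear_combination hs
    exact (mul_eq_zero.1 this).resolve_right hv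
  have hp := combo_apply h p
  rw [stdRow_same, stdRow_ne (Ne.symm hpq)] at hp
  have hq := combo_apply h q
  rw [stdRow_same, stdRow_ne hpq] at hq
  subst hc2
  exact ⟨by linear_combination hp, by linear_combination hq, rfl⟩

lemma li_evw {p q s : Fin 3} (hpq : p ≠ q) (hps : p ≠ s) (hqs : q ≠ s)
    {v w : Fin 3 → K} (hvq : v q ≠ 0) (hwq : w q = 0) (hws : w s ≠ 0) :
    LI3 (stdRow p) v w := by
  intro c0 c1 c2 h
  have hq := combo_apply h q
  rw [stdRow_ne hpq, hwq] at hq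
  have hc1 : c1 = 0 := by
    have : c1 * v q = 0 := by linear_combination hq
    exact (mul_eq_zero.1 this).resolve_right hvq
  have hs := combo_apply h s
  rw [stdRow_ne hps] at hs
  subst hc1
  have hc2 : c2 = 0 := by
    have : c2 * w s = 0 := by linear_combination hs
    exact (mul_eq_zero.1 this).resolve_right hws
  subst hc2
  have hp := combo_apply h p
  rw [stdRow_same] at hp
  exact ⟨by linear_combination hp, rfl, rfl⟩

lemma li_evw2 {p q s : Fin 3} (hpq : p ≠ q) (hps : p ≠ s) (hqs : q ≠ s)
    {v w : Fin 3 → K} (hvq : v q = 0) (hwq : w q ≠ 0) (hvs : v s ≠ 0) :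
    LI3 (stdRow p) v w := by
  intro c0 c1 c2 h
  have hq := combo_apply h q
  rw [stdRow_ne hpq, hvq] at hq
  have hc2 : c2 = 0 := by
    have : c2 * w q = 0 := by linear_combination hq
    exact (mul_eq_zero.1 this).resolve_right hwq
  subst hc2
  have hs := combo_apply h s
  rw [stdRow_ne hps] at hs
  have hc1 : c1 = 0 := by
    have : c1 * v s = 0 := by linear_combination hs
    exact (mul_eq_zero.1 this).resolve_right hvs
  subst hc1
  have hp := combo_apply h p
  rw [stdRow_same] at hp
  exact ⟨by linear_combination hp, rfl, rfl⟩

lemma zero_of_dep {p q m : Fin 3} (hpq : p ≠ q) (hmp : m ≠ p) (hmq : m ≠ q)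
    {v : Fin 3 → K} (hdep : ¬ LI3 (stdRow p) (stdRow q) v) : v m = 0 := by
  unfold LI3 at hdep
  push_neg at hdep
  obtain ⟨c0, c1, c2, hc, hne⟩ := hdep
  by_cases hc2 : c2 = 0
  · subst hc2
    exfalso
    have hp := combo_apply hc p
    rw [stdRow_same, stdRow_ne (Ne.symm hpq)] at hp
    have hq := combo_apply hc q
    rw [stdRow_same, stdRow_ne hpq] at hq
    exact hne (by linear_combination hp) (by linear_combination hq) rfl
  · have hm := combo_apply hc m
    rw [stdRow_ne (Ne.symm hmp), stdRow_ne (Ne.symm hmq)] at hm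
    have : c2 * v m = 0 := by linear_combination hm
    exact (mul_eq_zero.1 this).resolve_left hc2

lemma LI3.ne01 {u v w : Fin 3 → K} (h : LI3 u v w) : u ≠ v := by
  intro he
  have := h 1 (-1) 0 (by rw [he]; funext i; simp)
  exact one_ne_zero this.1

lemma LI3.ne02 {u v w : Fin 3 → K} (h : LI3 u v w) : u ≠ w := by
  intro he
  have := h 1 0 (-1) (by rw [he]; funext i; simp)
  exact one_ne_zero this.1

lemma LI3.ne12 {u v w : Fin 3 → K} (h : LI3 u v w) : v ≠ w := by
  intro he
  have := h 0 1 (-1) (by rw [he]; funext i; simp)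
  exact one_ne_zero this.2.1

lemma li3_std : LI3 (stdRow 0) (stdRow 1) (stdRow 2 : Fin 3 → K) := by
  intro c0 c1 c2 h
  have h0 := combo_apply h 0
  have h1 := combo_apply h 1
  have h2 := combo_apply h 2
  simp [stdRow] at h0 h1 h2
  exact ⟨h0, h1, h2⟩

lemma minor_of_li2 {v w : Fin 3 → K} (h : LI2 v w) :
    ∃ p q : Fin 3, v p * w q - v q * w p ≠ 0 := by
  by_contra hmin
  push_neg at hmin
  by_cases hv : v = 0
  · have := h 1 0 (by rw [hv]; funext i; simp)
    exact one_ne_zero this.1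
  · obtain ⟨i0, hi0⟩ := Function.ne_iff.1 hv
    simp only [Pi.zero_apply] at hi0
    have := h (w i0) (-(v i0)) (by
      funext j
      have := hmin j i0
      simp only [Pi.add_apply, Pi.smul_apply, smul_eq_mul, Pi.zero_apply]
      linear_combination this)
    exact hi0 (by linear_combination -this.2)

lemma li3_of_minor {v w : Fin 3 → K} {p q : Fin 3}
    (hmin : v p * w q - v q * w p ≠ 0) : ∃ u : Fin 3 → K, LI3 u v w := by
  have hpq : p ≠ q := by rintro rfl; exact hmin (by ring)
  obtain ⟨m, hmp, hmq⟩ := (by decide : ∀ p q : Fin 3, p ≠ q → ∃ m, m ≠ p ∧ m ≠ q) p q hpq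
  refine ⟨stdRow m, ?_⟩
  intro c0 c1 c2 h
  have hp := combo_apply h p
  rw [stdRow_ne hmp] at hp
  have hq := combo_apply h q
  rw [stdRow_ne hmq] at hq
  have hc1 : c1 = 0 := by
    have : c1 * (v p * w q - v q * w p) = 0 := by linear_combination w q * hp - w p * hq
    exact (mul_eq_zero.1 this).resolve_right hmin
  have hc2 : c2 = 0 := by
    have : c2 * (v p * w q - v q * w p) = 0 := by linear_combination (-(v q)) * hp + v p * hq
    exact (mul_eq_zero.1 this).resolve_right hmin
  subst hc1; subst hc2
  have hm := combo_apply h m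
  rw [stdRow_same] at hm
  exact ⟨by linear_combination hm, rfl, rfl⟩

lemma li2_single {v : Fin 3 → K} {i0 i1 : Fin 3} (h : v i0 ≠ 0) (hne : i1 ≠ i0) :
    LI2 v (stdRow i1) := by
  intro c0 c1 hc
  have h0 := congrFun hc i0
  simp only [Pi.add_apply, Pi.smul_apply, smul_eq_mul, Pi.zero_apply] at h0
  rw [stdRow_ne hne] at h0
  have hc0 : c0 = 0 := by
    have : c0 * v i0 = 0 := by linear_combination h0
    exact (mul_eq_zero.1 this).resolve_right h
  subst hc0
  have h1 := congrFun hc i1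
  simp only [Pi.add_apply, Pi.smul_apply, smul_eq_mul, Pi.zero_apply] at h1
  rw [stdRow_same] at h1
  exact ⟨rfl, by linear_combination h1⟩

lemma one_row (i : Fin 3) : (1 : Matrix (Fin 3) (Fin 3) K) i = stdRow i := by
  funext j; simp [Matrix.one_apply, stdRow]


lemma vecMul_expand (v : Fin 3 → K) (M : Matrix (Fin 3) (Fin 3) K) (j : Fin 3) :
    Matrix.vecMul v M j = v 0 * M 0 j + v 1 * M 1 j + v 2 * M 2 j := by
  simp [Matrix.vecMul, dotProduct, Fin.sum_univ_three]


lemma vecMul_of (v u w x : Fin 3 → K) :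
    Matrix.vecMul v (Matrix.of ![u, w, x]) = v 0 • u + v 1 • w + v 2 • x := by
  funext j
  simp [vecMul_expand, Matrix.of_apply]


lemma vecMul_combo (c0 c1 c2 : K) (x y z : Fin 3 → K) (M : Matrix (Fin 3) (Fin 3) K) :
    Matrix.vecMul (c0 • x + c1 • y + c2 • z) M
      = c0 • Matrix.vecMul x M + c1 • Matrix.vecMul y M + c2 • Matrix.vecMul z M := by
  funext j; simp [vecMul_expand]; ring


lemma vecMul_smul' (c : K) (v : Fin 3 → K) (M : Matrix (Fin 3) (Fin 3) K) :
    Matrix.vecMul (c • v) M = c • Matrix.vecMul v M := by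
  funext j; simp [vecMul_expand]; ring


lemma rowmul (A C : Matrix (Fin 3) (Fin 3) K) (i : Fin 3) :
    Matrix.vecMul (A i) C = (A * C) i := by
  funext j; simp [Matrix.mul_apply, vecMul_expand, Fin.sum_univ_three]


lemma det_ne_iff_LI3 (u v w : Fin 3 → K) :
    (Matrix.of ![u, v, w]).det ≠ 0 ↔ LI3 u v w := by
  rw [Ne, ← Matrix.exists_vecMul_eq_zero_iff]
  constructor
  · intro h c0 c1 c2 hc
    by_contra hne
    apply h
    refine ⟨![c0, c1, c2], ?_, ?_⟩
    · intro h0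
      apply hne
      refine ⟨congrFun h0 0, congrFun h0 1, congrFun h0 2⟩
    · rw [vecMul_of]; simpa using hc
  · rintro h ⟨v, hv, hv0⟩
    rw [vecMul_of] at hv0
    obtain ⟨h0, h1, h2⟩ := h _ _ _ hv0
    exact hv (by funext i; fin_cases i <;> assumption)

end Helpers

section Red
variable {K : Type*} [Field K]

lemma vecMul_combo2 (c d : K) (y z : Fin 3 → K) (M : Matrix (Fin 3) (Fin 3) K) :
    Matrix.vecMul (c • y + d • z) M = c • Matrix.vecMul y M + d • Matrix.vecMul z M := by
  funext j; simp [vecMul_expand]; ring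

lemma red_construct {r : ℕ} (a : Fin r → Fin 3 → K) (u v w : Fin 3 → K)
    (h3 : LI3 u v w) (hall : ∀ k, ∃ c d : K, a k = c • v + d • w) :
    ArrReducible a := by
  set B := Matrix.of ![u, v, w] with hB
  have hBu : IsUnit B.det := isUnit_iff_ne_zero.2 ((det_ne_iff_LI3 u v w).2 h3)
  have hBB' : B * B⁻¹ = 1 := Matrix.mul_nonsing_inv B hBu
  have hrow1 : Matrix.vecMul v B⁻¹ = stdRow 1 := by
    have hv : v = B 1 := rfl
    rw [hv, rowmul, hBB', one_row]
  have hrow2 : Matrix.vecMul w B⁻¹ = stdRow 2 := by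
    have hw : w = B 2 := rfl
    rw [hw, rowmul, hBB', one_row]
  refine ⟨B⁻¹, Matrix.isUnit_nonsing_inv_det B hBu, {1, 2}, ⟨1, by decide⟩, by decide, ?_⟩
  intro k
  left
  intro i hi
  have hi0 : i = 0 := by
    have : ∀ i : Fin 3, i ∉ ({1, 2} : Finset (Fin 3)) → i = 0 := by decide
    exact this i hi
  subst hi0
  obtain ⟨c, d, hk⟩ := hall k
  rw [hk, vecMul_combo2, hrow1, hrow2]
  simp [stdRow]
end Red

section CaseB
variable {K : Type*} [Field K] {r : ℕ}

lemma inj4 {α : Type*} {w x y z : α} (h1 : w ≠ x) (h2 : w ≠ y) (h3 : w ≠ z)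
    (h4 : x ≠ y) (h5 : x ≠ z) (h6 : y ≠ z) : Function.Injective ![w, x, y, z] := by
  intro i j hij
  fin_cases i <;> fin_cases j <;> simp_all

lemma caseB (a : Fin r → Fin 3 → K)
    (hdist : ∀ j j' : Fin r, j ≠ j' → ∀ c : K, a j ≠ c • a j')
    (k0 k1 k2 : Fin r) (h012 : LI3 (a k0) (a k1) (a k2))
    (hgood : ∀ k : Fin 4 → Fin r, Function.Injective k →
      ∃ x y z : Fin 4, x < y ∧ y < z ∧ ¬ LI3 (a (k x)) (a (k y)) (a (k z))) :
    ArrReducible a := by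
  have h01 : k0 ≠ k1 := fun h => h012.ne01 (by rw [h])
  have h02 : k0 ≠ k2 := fun h => h012.ne02 (by rw [h])
  have h12 : k1 ≠ k2 := fun h => h012.ne12 (by rw [h])
  set κ : Fin 3 → Fin r := ![k0, k1, k2] with hκdef
  set B := Matrix.of ![a k0, a k1, a k2] with hBdef
  have hBu : IsUnit B.det := isUnit_iff_ne_zero.2 ((det_ne_iff_LI3 _ _ _).2 h012)
  have hBB' : B * B⁻¹ = 1 := Matrix.mul_nonsing_inv B hBu
  have hB'B : B⁻¹ * B = 1 := Matrix.nonsing_inv_mul B hBu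
  set d : Fin r → Fin 3 → K := fun k => Matrix.vecMul (a k) B⁻¹ with hd
  have hda : ∀ k, Matrix.vecMul (d k) B = a k := by
    intro k
    simp only [hd]
    rw [Matrix.vecMul_vecMul, hB'B, Matrix.vecMul_one]
  have hκa : ∀ m : Fin 3, a (κ m) = B m := by
    intro m; fin_cases m <;> rfl
  have hdκ : ∀ m : Fin 3, d (κ m) = stdRow m := by
    intro m
    simp only [hd]
    rw [hκa m, rowmul, hBB', one_row]
  have Ld : ∀ p q s : Fin r, LI3 (d p) (d q) (d s) → LI3 (a p) (a q) (a s) := by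
    intro p q s h c0 c1 c2 hc
    refine h c0 c1 c2 ?_
    simp only [hd]
    rw [← vecMul_combo, hc, Matrix.zero_vecMul]
  have Lda : ∀ p q s : Fin r, ¬ LI3 (a p) (a q) (a s) → ¬ LI3 (d p) (d q) (d s) :=
    fun p q s hn h => hn (Ld p q s h)
  have hs0 : d k0 = stdRow 0 := hdκ 0
  have hs1 : d k1 = stdRow 1 := hdκ 1
  have hs2 : d k2 = stdRow 2 := hdκ 2
  have key : ∀ k, k ≠ k0 → k ≠ k1 → k ≠ k2 → ∃ m : Fin 3, d k m = 0 := by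
    intro k hk0 hk1 hk2
    obtain ⟨x, y, z, hxy, hyz, hdep⟩ := hgood ![k0, k1, k2, k]
      (inj4 h01 h02 (Ne.symm hk0) h12 (Ne.symm hk1) (Ne.symm hk2))
    have hcase : (x = 0 ∧ y = 1 ∧ z = 2) ∨ (x = 0 ∧ y = 1 ∧ z = 3) ∨
        (x = 0 ∧ y = 2 ∧ z = 3) ∨ (x = 1 ∧ y = 2 ∧ z = 3) := by
      clear hdep
      revert hxy hyz
      fin_cases x <;> fin_cases y <;> fin_cases z <;> decide
    have e0 : (![k0, k1, k2, k] : Fin 4 → Fin r) 0 = k0 := rfl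
    have e1 : (![k0, k1, k2, k] : Fin 4 → Fin r) 1 = k1 := rfl
    have e2 : (![k0, k1, k2, k] : Fin 4 → Fin r) 2 = k2 := rfl
    have e3 : (![k0, k1, k2, k] : Fin 4 → Fin r) 3 = k := rfl
    rcases hcase with ⟨hx, hy, hz⟩ | ⟨hx, hy, hz⟩ | ⟨hx, hy, hz⟩ | ⟨hx, hy, hz⟩ <;>
      subst hx <;> subst hy <;> subst hz
    · rw [e0, e1, e2] at hdep
      exact absurd h012 hdep
    · rw [e0, e1, e3] at hdep
      have hD := Lda _ _ _ hdep
      rw [hs0, hs1] at hD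
      exact ⟨2, zero_of_dep (by decide) (by decide) (by decide) hD⟩
    · rw [e0, e2, e3] at hdep
      have hD := Lda _ _ _ hdep
      rw [hs0, hs2] at hD
      exact ⟨1, zero_of_dep (by decide) (by decide) (by decide) hD⟩
    · rw [e1, e2, e3] at hdep
      have hD := Lda _ _ _ hdep
      rw [hs1, hs2] at hD
      exact ⟨0, zero_of_dep (by decide) (by decide) (by decide) hD⟩
  have third : ∀ m m' : Fin 3, m ≠ m' → ∃ m'', m'' ≠ m ∧ m'' ≠ m' := by decide
  have hκmem : ∀ m : Fin 3, κ m = k0 ∨ κ m = k1 ∨ κ m = k2 := by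
    intro m
    fin_cases m
    · exact Or.inl rfl
    · exact Or.inr (Or.inl rfl)
    · exact Or.inr (Or.inr rfl)
  have hκinj : ∀ m m' : Fin 3, m ≠ m' → κ m ≠ κ m' := by
    intro m m' hne heq
    have hstd : (stdRow m : Fin 3 → K) = stdRow m' := by
      rw [← hdκ m, ← hdκ m', heq]
    have := congrFun hstd m
    rw [stdRow_same, stdRow_ne (Ne.symm hne)] at this
    exact one_ne_zero this
  have hκne : ∀ (m : Fin 3) (k : Fin r), k ≠ k0 → k ≠ k1 → k ≠ k2 → κ m ≠ k := by
    intro m k hk0 hk1 hk2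
    rcases hκmem m with h | h | h <;> rw [h] <;> exact Ne.symm (by assumption)
  have uniq : ∀ k, k ≠ k0 → k ≠ k1 → k ≠ k2 →
      ∀ m m' : Fin 3, m ≠ m' → d k m = 0 → d k m' = 0 → False := by
    intro k hk0 hk1 hk2 m m' hmm' hm hm'
    obtain ⟨m'', hm''1, hm''2⟩ := third m m' hmm'
    have hrepr : d k = d k m'' • stdRow m'' := by
      funext i
      have hi : i = m ∨ i = m' ∨ i = m'' := by
        have h' : ∀ i m m' m'' : Fin 3, m ≠ m' → m'' ≠ m → m'' ≠ m' →
            i = m ∨ i = m' ∨ i = m'' := by decide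
        exact h' i m m' m'' hmm' hm''1 hm''2
      rcases hi with rfl | rfl | rfl
      · rw [hm]; simp [stdRow_ne hm''1]
      · rw [hm']; simp [stdRow_ne hm''2]
      · simp [stdRow_same]
    have hak : a k = d k m'' • a (κ m'') := by
      have h5 : Matrix.vecMul (stdRow m'' : Fin 3 → K) B = a (κ m'') := by
        rw [← hdκ m'', hda]
      conv_lhs => rw [← hda k, hrepr]
      rw [vecMul_smul', h5]
    exact hdist k (κ m'') (Ne.symm (hκne m'' k hk0 hk1 hk2)) (d k m'') hak
  have claim : ∀ k k', k ≠ k0 → k ≠ k1 → k ≠ k2 → k' ≠ k0 → k' ≠ k1 → k' ≠ k2 →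
      ∀ m m' : Fin 3, m ≠ m' → d k m = 0 → d k' m' = 0 → False := by
    intro k k' hk0 hk1 hk2 hk0' hk1' hk2' m m' hmm' hdkm hdk'm'
    have hkk' : k ≠ k' := by
      rintro rfl
      exact uniq k hk0 hk1 hk2 m m' hmm' hdkm hdk'm'
    obtain ⟨m'', hm''m, hm''m'⟩ := third m m' hmm'
    have hv1 : d k m' ≠ 0 := fun h => uniq k hk0 hk1 hk2 m m' hmm' hdkm h
    have hv2 : d k m'' ≠ 0 := fun h => uniq k hk0 hk1 hk2 m m'' (Ne.symm hm''m) hdkm h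
    have hw1 : d k' m ≠ 0 := fun h => uniq k' hk0' hk1' hk2' m m' hmm' h hdk'm'
    have hw2 : d k' m'' ≠ 0 := fun h =>
      uniq k' hk0' hk1' hk2' m' m'' (Ne.symm hm''m') hdk'm' h
    obtain ⟨x, y, z, hxy, hyz, hdep⟩ := hgood ![κ m, κ m', k, k']
      (inj4 (hκinj m m' hmm') (hκne m k hk0 hk1 hk2) (hκne m k' hk0' hk1' hk2')
        (hκne m' k hk0 hk1 hk2) (hκne m' k' hk0' hk1' hk2') hkk')
    have hcase : (x = 0 ∧ y = 1 ∧ z = 2) ∨ (x = 0 ∧ y = 1 ∧ z = 3) ∨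
        (x = 0 ∧ y = 2 ∧ z = 3) ∨ (x = 1 ∧ y = 2 ∧ z = 3) := by
      clear hdep
      revert hxy hyz
      fin_cases x <;> fin_cases y <;> fin_cases z <;> decide
    have e0 : (![κ m, κ m', k, k'] : Fin 4 → Fin r) 0 = κ m := rfl
    have e1 : (![κ m, κ m', k, k'] : Fin 4 → Fin r) 1 = κ m' := rfl
    have e2 : (![κ m, κ m', k, k'] : Fin 4 → Fin r) 2 = k := rfl
    have e3 : (![κ m, κ m', k, k'] : Fin 4 → Fin r) 3 = k' := rfl
    rcases hcase with ⟨hx, hy, hz⟩ | ⟨hx, hy, hz⟩ | ⟨hx, hy, hz⟩ | ⟨hx, hy, hz⟩ <;>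
      subst hx <;> subst hy <;> subst hz
    · rw [e0, e1, e2] at hdep
      refine hdep (Ld _ _ _ ?_)
      rw [hdκ m, hdκ m']
      exact li_ee hmm' (Ne.symm hm''m) (Ne.symm hm''m') hv2
    · rw [e0, e1, e3] at hdep
      refine hdep (Ld _ _ _ ?_)
      rw [hdκ m, hdκ m']
      exact li_ee hmm' (Ne.symm hm''m) (Ne.symm hm''m') hw2
    · rw [e0, e2, e3] at hdep
      refine hdep (Ld _ _ _ ?_)
      rw [hdκ m]
      exact li_evw hmm' (Ne.symm hm''m) (Ne.symm hm''m') hv1 hdk'm' hw2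
    · rw [e1, e2, e3] at hdep
      refine hdep (Ld _ _ _ ?_)
      rw [hdκ m']
      exact li_evw2 (Ne.symm hmm') (Ne.symm hm''m') (Ne.symm hm''m) hdkm hw1 hv2
  have hm0 : ∃ m0 : Fin 3, ∀ k, k ≠ k0 → k ≠ k1 → k ≠ k2 → d k m0 = 0 := by
    by_cases hex : ∃ k, k ≠ k0 ∧ k ≠ k1 ∧ k ≠ k2
    · obtain ⟨ks, hks0, hks1, hks2⟩ := hex
      obtain ⟨m0, hm0⟩ := key ks hks0 hks1 hks2
      refine ⟨m0, fun k h0 h1 h2 => ?_⟩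
      obtain ⟨m, hm⟩ := key k h0 h1 h2
      by_cases hmm : m = m0
      · subst hmm; exact hm
      · exact (claim k ks h0 h1 h2 hks0 hks1 hks2 m m0 hmm hm hm0).elim
    · push_neg at hex
      exact ⟨0, fun k h0 h1 h2 => absurd (hex k h0 h1) h2⟩
  obtain ⟨m0, hall0⟩ := hm0
  refine ⟨B⁻¹, Matrix.isUnit_nonsing_inv_det B hBu, {m0}ᶜ, ?_, ?_, ?_⟩
  · have h' : ∀ m0 : Fin 3, ({m0}ᶜ : Finset (Fin 3)).Nonempty := by decide
    exact h' m0
  · have h' : ∀ m0 : Fin 3, ({m0}ᶜ : Finset (Fin 3)) ≠ Finset.univ := by decide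
    exact h' m0
  · intro k
    by_cases hk : k ≠ k0 ∧ k ≠ k1 ∧ k ≠ k2
    · left
      intro i hi
      have hi' : i = m0 := by simpa using hi
      subst hi'
      exact hall0 k hk.1 hk.2.1 hk.2.2
    · have hk' : k = k0 ∨ k = k1 ∨ k = k2 := by
        by_contra h'
        push_neg at h'
        exact hk ⟨h'.1, h'.2.1, h'.2.2⟩
      have hsrow : ∃ mi : Fin 3, d k = stdRow mi := by
        rcases hk' with rfl | rfl | rfl
        · exact ⟨0, hs0⟩
        · exact ⟨1, hs1⟩
        · exact ⟨2, hs2⟩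
      obtain ⟨mi, hsm⟩ := hsrow
      by_cases hm : mi = m0
      · right
        intro i hi
        have hi' : i ≠ m0 := by simpa using hi
        show d k i = 0
        rw [hsm]
        exact stdRow_ne (by rw [hm]; exact Ne.symm hi')
      · left
        intro i hi
        have hi' : i = m0 := by simpa using hi
        show d k i = 0
        rw [hsm, hi']
        exact stdRow_ne hm
end CaseB

section Main
variable {K : Type*} [Field K] {r : ℕ}

lemma exists_good (a : Fin r → Fin 3 → K) (ha : ∀ j, a j ≠ 0)
    (hdist : ∀ j j' : Fin r, j ≠ j' → ∀ c : K, a j ≠ c • a j')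
    (hirr : ¬ ArrReducible a) :
    ∃ k : Fin 4 → Fin r, Function.Injective k ∧
      ∀ x y z : Fin 4, x < y → y < z → LI3 (a (k x)) (a (k y)) (a (k z)) := by
  by_contra hgood
  push_neg at hgood
  apply hirr
  by_cases hT : ∃ p q s : Fin r, LI3 (a p) (a q) (a s)
  · obtain ⟨k0, k1, k2, h012⟩ := hT
    exact caseB a hdist k0 k1 k2 h012 hgood
  · push_neg at hT
    by_cases hr : r = 0
    · subst hr
      exact red_construct a (stdRow 0) (stdRow 1) (stdRow 2) li3_std (fun k => Fin.elim0 k)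
    · set k₀ : Fin r := ⟨0, Nat.pos_of_ne_zero hr⟩ with hk₀
      by_cases hp : ∃ p q, LI2 (a p) (a q)
      · obtain ⟨p, q, h2⟩ := hp
        have hall : ∀ k, ∃ c e : K, a k = c • a p + e • a q := by
          intro k
          have hdep := hT p q k
          unfold LI3 at hdep
          push_neg at hdep
          obtain ⟨c0, c1, c2, hc, hne⟩ := hdep
          by_cases hc2 : c2 = 0
          · subst hc2
            obtain ⟨h0', h1'⟩ := h2 c0 c1 (by simpa using hc)
            exact absurd rfl (hne h0' h1')
          · refine ⟨-c0 / c2, -c1 / c2, ?_⟩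
            funext i
            have hci := combo_apply hc i
            simp only [Pi.add_apply, Pi.smul_apply, smul_eq_mul]
            field_simp
            linear_combination hci
        obtain ⟨pp, qq, hmin⟩ := minor_of_li2 h2
        obtain ⟨u, h3⟩ := li3_of_minor hmin
        exact red_construct a u (a p) (a q) h3 hall
      · push_neg at hp
        obtain ⟨i0, hi0⟩ := Function.ne_iff.1 (ha k₀)
        simp only [Pi.zero_apply] at hi0
        obtain ⟨i1, hne1⟩ := (by decide : ∀ i0 : Fin 3, ∃ i1 : Fin 3, i1 ≠ i0) i0
        have h2 : LI2 (a k₀) (stdRow i1) := li2_single hi0 hne1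
        have hall : ∀ k, ∃ c e : K, a k = c • a k₀ + e • (stdRow i1 : Fin 3 → K) := by
          intro k
          have hdep := hp k₀ k
          unfold LI2 at hdep
          push_neg at hdep
          obtain ⟨c0, c1, hc, hne'⟩ := hdep
          by_cases hc1 : c1 = 0
          · subst hc1
            exfalso
            have hc0 : c0 ≠ 0 := fun h => hne' h rfl
            have : c0 • a k₀ = 0 := by simpa using hc
            rcases smul_eq_zero.1 this with h | h
            · exact hc0 h
            · exact ha k₀ h
          · refine ⟨-c0 / c1, 0, ?_⟩
            funext i
            have hci := congrFun hc i
            simp only [Pi.add_apply, Pi.smul_apply, smul_eq_mul, Pi.zero_apply] at hci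
            simp only [Pi.add_apply, Pi.smul_apply, smul_eq_mul]
            field_simp
            linear_combination hci
        obtain ⟨pp, qq, hmin⟩ := minor_of_li2 h2
        obtain ⟨u, h3⟩ := li3_of_minor hmin
        exact red_construct a u (a k₀) (stdRow i1) h3 hall

lemma li3_li {u v w : Fin 3 → K} (h : LI3 u v w) : LinearIndependent K ![u, v, w] := by
  rw [Fintype.linearIndependent_iff]
  intro g hg
  rw [Fin.sum_univ_three] at hg
  simp only [Matrix.cons_val_zero, Matrix.cons_val_one, Matrix.head_cons,
    Matrix.cons_val_two, Matrix.tail_cons] at hg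
  obtain ⟨h0, h1, h2⟩ := h _ _ _ hg
  intro i
  fin_cases i
  exacts [h0, h1, h2]

end Main

/-- An irreducible arrangement in ℙ² has four defining linear forms no three of which
are linearly dependent; consequently after a linear change of variables its defining
polynomial has the form `xyz(x+y+z)·ℓ₁⋯ℓ_t`. -/
theorem stmt13 (K : Type*) [Field K] [CharZero K] [IsAlgClosed K] (r : ℕ)
    (a : Fin r → Fin 3 → K) (ha : ∀ j, a j ≠ 0)
    (hdist : ∀ j j' : Fin r, j ≠ j' → ∀ c : K, a j ≠ c • a j')
    (hirr : ¬ ArrReducible a) :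
    ∃ j : Fin 4 → Fin r, Function.Injective j ∧
      (∀ s : Finset (Fin 4), s.card = 3 →
        LinearIndependent K fun m : s => a (j m.1)) ∧
      ∃ M : Matrix (Fin 3) (Fin 3) K, IsUnit M.det ∧
        ∃ c : Fin 4 → K, (∀ m, c m ≠ 0) ∧
          Matrix.vecMul (a (j 0)) M = c 0 • (Pi.single (0 : Fin 3) (1 : K) : Fin 3 → K) ∧
          Matrix.vecMul (a (j 1)) M = c 1 • (Pi.single (1 : Fin 3) (1 : K) : Fin 3 → K) ∧
          Matrix.vecMul (a (j 2)) M = c 2 • (Pi.single (2 : Fin 3) (1 : K) : Fin 3 → K) ∧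
          Matrix.vecMul (a (j 3)) M = c 3 • (fun _ : Fin 3 => (1 : K)) := by
  obtain ⟨j, hinj, hgood⟩ := exists_good a ha hdist hirr
  refine ⟨j, hinj, ?_, ?_⟩
  · -- the Finset triple condition
    intro s hs
    obtain ⟨x, y, z, hxy, hyz, hsxyz⟩ :=
      (by decide : ∀ s : Finset (Fin 4), s.card = 3 →
        ∃ x y z : Fin 4, x < y ∧ y < z ∧ s = {x, y, z}) s hs
    have hxyne : x ≠ y := ne_of_lt hxy
    have hyzne : y ≠ z := ne_of_lt hyz
    have hxzne : x ≠ z := ne_of_lt (lt_trans hxy hyz)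
    have hli3 : LinearIndependent K ![a (j x), a (j y), a (j z)] :=
      li3_li (hgood x y z hxy hyz)
    subst hsxyz
    have hmx : x ∈ ({x, y, z} : Finset (Fin 4)) := by simp
    have hmy : y ∈ ({x, y, z} : Finset (Fin 4)) := by simp
    have hmz : z ∈ ({x, y, z} : Finset (Fin 4)) := by simp
    let e : Fin 3 ≃ {v // v ∈ ({x, y, z} : Finset (Fin 4))} :=
      { toFun := ![⟨x, hmx⟩, ⟨y, hmy⟩, ⟨z, hmz⟩]
        invFun := fun m => if m.1 = x then 0 else if m.1 = y then 1 else 2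
        left_inv := by
          intro i
          fin_cases i <;> simp [hxyne.symm, hxzne.symm, hyzne.symm]
        right_inv := by
          intro m
          have hm := m.2
          rw [Finset.mem_insert, Finset.mem_insert, Finset.mem_singleton] at hm
          beta_reduce
          rcases hm with h | h | h
          · rw [if_pos h]
            exact Subtype.ext h.symm
          · have hne : m.1 ≠ x := by rw [h]; exact hxyne.symm
            rw [if_neg hne, if_pos h]
            exact Subtype.ext h.symm
          · have hne : m.1 ≠ x := by rw [h]; exact hxzne.symm
            have hne2 : m.1 ≠ y := by rw [h]; exact hyzne.symm
            rw [if_neg hne, if_neg hne2]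
            exact Subtype.ext h.symm }
    refine (linearIndependent_equiv e).1 ?_
    have heq : (fun m : {v // v ∈ ({x, y, z} : Finset (Fin 4))} => a (j m.1)) ∘ e
        = ![a (j x), a (j y), a (j z)] := by
      funext i
      fin_cases i <;> rfl
    rw [heq]
    exact hli3
  · -- the normalization
    set B2 := Matrix.of ![a (j 0), a (j 1), a (j 2)] with hB2
    have h012 := hgood 0 1 2 (by decide) (by decide)
    have h013 := hgood 0 1 3 (by decide) (by decide)
    have h023 := hgood 0 2 3 (by decide) (by decide)
    have h123 := hgood 1 2 3 (by decide) (by decide)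
    have hBu : IsUnit B2.det := isUnit_iff_ne_zero.2 ((det_ne_iff_LI3 _ _ _).2 h012)
    have hBB' : B2 * B2⁻¹ = 1 := Matrix.mul_nonsing_inv B2 hBu
    have hB'B : B2⁻¹ * B2 = 1 := Matrix.nonsing_inv_mul B2 hBu
    set d3 : Fin 3 → K := Matrix.vecMul (a (j 3)) B2⁻¹ with hd3
    have hrow0 : Matrix.vecMul (a (j 0)) B2⁻¹ = stdRow 0 := by
      have h' : a (j 0) = B2 0 := rfl
      rw [h', rowmul, hBB', one_row]
    have hrow1 : Matrix.vecMul (a (j 1)) B2⁻¹ = stdRow 1 := by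
      have h' : a (j 1) = B2 1 := rfl
      rw [h', rowmul, hBB', one_row]
    have hrow2 : Matrix.vecMul (a (j 2)) B2⁻¹ = stdRow 2 := by
      have h' : a (j 2) = B2 2 := rfl
      rw [h', rowmul, hBB', one_row]
    have hback : Matrix.vecMul d3 B2 = a (j 3) := by
      rw [hd3, Matrix.vecMul_vecMul, hB'B, Matrix.vecMul_one]
    have hexp : a (j 3) = d3 0 • a (j 0) + d3 1 • a (j 1) + d3 2 • a (j 2) := by
      rw [← hback, hB2]
      exact vecMul_of d3 _ _ _
    have hc30 : d3 0 ≠ 0 := by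
      intro hm
      have h' := h123 (d3 1) (d3 2) (-1) (by
        rw [hexp, hm]
        funext i
        simp only [Pi.add_apply, Pi.smul_apply, smul_eq_mul, Pi.zero_apply, neg_mul,
          one_mul, Pi.neg_apply]
        ring)
      exact one_ne_zero (neg_eq_zero.1 h'.2.2)
    have hc31 : d3 1 ≠ 0 := by
      intro hm
      have h' := h023 (d3 0) (d3 2) (-1) (by
        rw [hexp, hm]
        funext i
        simp only [Pi.add_apply, Pi.smul_apply, smul_eq_mul, Pi.zero_apply, neg_mul,
          one_mul, Pi.neg_apply]
        ring)
      exact one_ne_zero (neg_eq_zero.1 h'.2.2)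
    have hc32 : d3 2 ≠ 0 := by
      intro hm
      have h' := h013 (d3 0) (d3 1) (-1) (by
        rw [hexp, hm]
        funext i
        simp only [Pi.add_apply, Pi.smul_apply, smul_eq_mul, Pi.zero_apply, neg_mul,
          one_mul, Pi.neg_apply]
        ring)
      exact one_ne_zero (neg_eq_zero.1 h'.2.2)
    have hc3 : ∀ m : Fin 3, d3 m ≠ 0 := by
      intro m
      fin_cases m
      exacts [hc30, hc31, hc32]
    refine ⟨B2⁻¹ * Matrix.diagonal (fun i => (d3 i)⁻¹), ?_, ![(d3 0)⁻¹, (d3 1)⁻¹, (d3 2)⁻¹, 1], ?_, ?_, ?_, ?_, ?_⟩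
    · rw [Matrix.det_mul]
      refine IsUnit.mul (Matrix.isUnit_nonsing_inv_det B2 hBu) ?_
      rw [Matrix.det_diagonal]
      refine isUnit_iff_ne_zero.2 (Finset.prod_ne_zero_iff.2 fun i _ => inv_ne_zero (hc3 i))
    · intro m
      fin_cases m
      exacts [inv_ne_zero hc30, inv_ne_zero hc31, inv_ne_zero hc32, one_ne_zero]
    · rw [← Matrix.vecMul_vecMul, hrow0]
      funext i'
      rw [Matrix.vecMul_diagonal]
      by_cases h : i' = 0
      · subst h
        simp [stdRow_same, Pi.single_eq_same]
      · simp [stdRow_ne (Ne.symm h), Pi.single_eq_of_ne h]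
    · rw [← Matrix.vecMul_vecMul, hrow1]
      funext i'
      rw [Matrix.vecMul_diagonal]
      by_cases h : i' = 1
      · subst h
        simp [stdRow_same, Pi.single_eq_same]
      · simp [stdRow_ne (Ne.symm h), Pi.single_eq_of_ne h]
    · rw [← Matrix.vecMul_vecMul, hrow2]
      funext i'
      rw [Matrix.vecMul_diagonal]
      by_cases h : i' = 2
      · subst h
        simp [stdRow_same, Pi.single_eq_same]
      · simp [stdRow_ne (Ne.symm h), Pi.single_eq_of_ne h]
    · rw [← Matrix.vecMul_vecMul, ← hd3]
      funext i'
      rw [Matrix.vecMul_diagonal]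
      simp [mul_inv_cancel₀ (hc3 i')]
end

section
/- Let f_1 = xyz(x+y+z)(x+αy+ᾱz)(x+ᾱy+αz) with α = exp(2πi/3), and let ℓ_1 = αx+y+z, ℓ_2 = ᾱx+y+z, ℓ_3 = x+αy+z, ℓ_4 = x+ᾱy+z, ℓ_5 = x+y+αz, ℓ_6 = x+y+ᾱz. Then f_1 = ((2α+1)/270)·(−ℓ_1⁶+ℓ_2⁶−ℓ_3⁶+ℓ_4⁶−ℓ_5⁶+ℓ_6⁶); in particular f_1 has Waring rank at most 6. -/
open MvPolynomial

set_option maxHeartbeats 2000000 in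
/-- Explicit Waring decomposition of `f₁ = xyz(x+y+z)(x+αy+ᾱz)(x+ᾱy+αz)`,
`α = exp(2πi/3)`, as a combination of six sixth powers of linear forms; in particular
`f₁` has Waring rank at most 6. -/
theorem stmt16 :
    let α : ℂ := Complex.exp (2 * Real.pi * Complex.I / 3)
    let ac : ℂ := (starRingEnd ℂ) α
    let f₁ : MvPolynomial (Fin 3) ℂ :=
      X 0 * X 1 * X 2 * (X 0 + X 1 + X 2) *
        (X 0 + C α * X 1 + C ac * X 2) * (X 0 + C ac * X 1 + C α * X 2)
    let ℓ₁ : MvPolynomial (Fin 3) ℂ := C α * X 0 + X 1 + X 2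
    let ℓ₂ : MvPolynomial (Fin 3) ℂ := C ac * X 0 + X 1 + X 2
    let ℓ₃ : MvPolynomial (Fin 3) ℂ := X 0 + C α * X 1 + X 2
    let ℓ₄ : MvPolynomial (Fin 3) ℂ := X 0 + C ac * X 1 + X 2
    let ℓ₅ : MvPolynomial (Fin 3) ℂ := X 0 + X 1 + C α * X 2
    let ℓ₆ : MvPolynomial (Fin 3) ℂ := X 0 + X 1 + C ac * X 2
    f₁ = C ((2 * α + 1) / 270) *
        (-ℓ₁ ^ 6 + ℓ₂ ^ 6 - ℓ₃ ^ 6 + ℓ₄ ^ 6 - ℓ₅ ^ 6 + ℓ₆ ^ 6) ∧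
    ∃ (c : Fin 6 → ℂ) (b : Fin 6 → Fin 3 → ℂ),
      f₁ = ∑ j, c j • (∑ i, C (b j i) * X i) ^ 6 := by
  intro α ac f₁ ℓ₁ ℓ₂ ℓ₃ ℓ₄ ℓ₅ ℓ₆
  have h3 : α ^ 3 = 1 := by
    show Complex.exp (2 * Real.pi * Complex.I / 3) ^ 3 = 1
    rw [← Complex.exp_nat_mul]
    rw [show ((3 : ℕ) : ℂ) * (2 * Real.pi * Complex.I / 3) = 2 * Real.pi * Complex.I by
      push_cast; ring]
    exact Complex.exp_two_pi_mul_I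
  have hne : α ≠ 1 := by
    intro h
    rw [Complex.exp_eq_one_iff] at h
    obtain ⟨n, hn⟩ := h
    have hπ : (Real.pi : ℂ) ≠ 0 := by
      exact_mod_cast Real.pi_ne_zero
    have hI : Complex.I ≠ 0 := Complex.I_ne_zero
    have h2 : (2 * (Real.pi : ℂ) * Complex.I) ≠ 0 := by
      simp [Real.pi_ne_zero, Complex.I_ne_zero, Complex.ofReal_ne_zero]
    have h1 : ((1 : ℂ) / 3) = (n : ℂ) :=
      mul_left_cancel₀ h2 (by linear_combination hn)
    have h3 : ((3 * n : ℤ) : ℂ) = 1 := by push_cast; linear_combination -3 * h1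
    have : (3 * n : ℤ) = 1 := by exact_mod_cast h3
    omega
  have hA : α ^ 2 + α + 1 = 0 := by
    have hz : (α - 1) * (α ^ 2 + α + 1) = 0 := by linear_combination h3
    rcases mul_eq_zero.mp hz with h | h
    · exact absurd (sub_eq_zero.mp h) hne
    · exact h
  have habs : ‖α‖ = 1 := by
    rw [Complex.norm_exp]
    norm_num [Complex.div_re, Complex.mul_re, Complex.mul_im]
  have h1 : α * ac = 1 := by
    show α * (starRingEnd ℂ) α = 1
    rw [Complex.mul_conj]
    rw [Complex.normSq_eq_norm_sq, habs]
    norm_num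
  have hac : ac = α ^ 2 := by linear_combination α ^ 2 * h1 - ac * h3
  have key : f₁ = C ((2 * α + 1) / 270) *
      (-ℓ₁ ^ 6 + ℓ₂ ^ 6 - ℓ₃ ^ 6 + ℓ₄ ^ 6 - ℓ₅ ^ 6 + ℓ₆ ^ 6) := by
    apply MvPolynomial.funext
    intro v
    show eval v (X 0 * X 1 * X 2 * (X 0 + X 1 + X 2) *
        (X 0 + C α * X 1 + C ac * X 2) * (X 0 + C ac * X 1 + C α * X 2)) = _
    simp only [ℓ₁, ℓ₂, ℓ₃, ℓ₄, ℓ₅, ℓ₆, map_add, map_mul, map_pow, map_sub, map_neg,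
      eval_C, eval_X, map_one]
    rw [hac]
    set A := α with hAdef
    linear_combination (v 0^3*v 1*v 2^2 + v 0^3*v 1^2*v 2 + v 0^4*v 1*v 2 + (1/45:ℂ)*A*v 1*v 2^5 + (1/45:ℂ)*A*v 1^5*v 2 + (1/45:ℂ)*A*v 0*v 2^5 + (2/9:ℂ)*A*v 0*v 1*v 2^4 + (2/9:ℂ)*A*v 0*v 1^2*v 2^3 + (2/9:ℂ)*A*v 0*v 1^3*v 2^2 + (2/9:ℂ)*A*v 0*v 1^4*v 2 + (1/45:ℂ)*A*v 0*v 1^5 + (11/9:ℂ)*A*v 0^2*v 1*v 2^3 + (2:ℂ)*A*v 0^2*v 1^2*v 2^2 + (11/9:ℂ)*A*v 0^2*v 1^3*v 2 + (2/9:ℂ)*A*v 0^3*v 1*v 2^2 + (2/9:ℂ)*A*v 0^3*v 1^2*v 2 + (-7/9:ℂ)*A*v 0^4*v 1*v 2 + (1/45:ℂ)*A*v 0^5*v 2 + (1/45:ℂ)*A*v 0^5*v 1 + (1/18:ℂ)*A^2*v 1^2*v 2^4 + (1/18:ℂ)*A^2*v 1^4*v 2^2 + (11/9:ℂ)*A^2*v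 0*v 1^2*v 2^3 + (11/9:ℂ)*A^2*v 0*v 1^3*v 2^2 + (1/18:ℂ)*A^2*v 0^2*v 2^4 + (2/9:ℂ)*A^2*v 0^2*v 1*v 2^3 + (2:ℂ)*A^2*v 0^2*v 1^2*v 2^2 + (2/9:ℂ)*A^2*v 0^2*v 1^3*v 2 + (1/18:ℂ)*A^2*v 0^2*v 1^4 + (2/9:ℂ)*A^2*v 0^3*v 1*v 2^2 + (2/9:ℂ)*A^2*v 0^3*v 1^2*v 2 + (1/18:ℂ)*A^2*v 0^4*v 2^2 + (1/18:ℂ)*A^2*v 0^4*v 1^2 + (-1/15:ℂ)*A^3*v 1*v 2^5 + (1/18:ℂ)*A^3*v 1^2*v 2^4 + (4/27:ℂ)*A^3*v 1^3*v 2^3 + (1/18:ℂ)*A^3*v 1^4*v 2^2 + (-1/15:ℂ)*A^3*v 1^5*v 2 + (-1/15:ℂ)*A^3*v 0*v 2^5 + (1/3:ℂ)*A^3*v 0*v 1*v 2^4 + (-2/9:ℂ)*A^3*v 0*v 1^2*v 2^3 + (-2/9:ℂ)*A^3*v 0*v 1^3*v 2^2 + (1/3:ℂ)*A^3*v 0*v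 1^4*v 2 + (-1/15:ℂ)*A^3*v 0*v 1^5 + (1/18:ℂ)*A^3*v 0^2*v 2^4 + (-2/9:ℂ)*A^3*v 0^2*v 1*v 2^3 + (-2:ℂ)*A^3*v 0^2*v 1^2*v 2^2 + (-2/9:ℂ)*A^3*v 0^2*v 1^3*v 2 + (1/18:ℂ)*A^3*v 0^2*v 1^4 + (4/27:ℂ)*A^3*v 0^3*v 2^3 + (-2/9:ℂ)*A^3*v 0^3*v 1*v 2^2 + (-2/9:ℂ)*A^3*v 0^3*v 1^2*v 2 + (4/27:ℂ)*A^3*v 0^3*v 1^3 + (1/18:ℂ)*A^3*v 0^4*v 2^2 + (1/3:ℂ)*A^3*v 0^4*v 1*v 2 + (1/18:ℂ)*A^3*v 0^4*v 1^2 + (-1/15:ℂ)*A^3*v 0^5*v 2 + (-1/15:ℂ)*A^3*v 0^5*v 1 + (1/15:ℂ)*A^4*v 1*v 2^5 + (-1/9:ℂ)*A^4*v 1^2*v 2^4 + (4/27:ℂ)*A^4*v 1^3*v 2^3 + (-1/9:ℂ)*A^4*v 1^4*v 2^2 + (1/15:ℂ)*A^4*v 1^5*v 2 + (1/15:ℂ)*A^4*v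 0*v 2^5 + (-2/9:ℂ)*A^4*v 0*v 1*v 2^4 + (2/9:ℂ)*A^4*v 0*v 1^2*v 2^3 + (2/9:ℂ)*A^4*v 0*v 1^3*v 2^2 + (-2/9:ℂ)*A^4*v 0*v 1^4*v 2 + (1/15:ℂ)*A^4*v 0*v 1^5 + (-1/9:ℂ)*A^4*v 0^2*v 2^4 + (2/9:ℂ)*A^4*v 0^2*v 1*v 2^3 + (2/9:ℂ)*A^4*v 0^2*v 1^3*v 2 + (-1/9:ℂ)*A^4*v 0^2*v 1^4 + (4/27:ℂ)*A^4*v 0^3*v 2^3 + (2/9:ℂ)*A^4*v 0^3*v 1*v 2^2 + (2/9:ℂ)*A^4*v 0^3*v 1^2*v 2 + (4/27:ℂ)*A^4*v 0^3*v 1^3 + (-1/9:ℂ)*A^4*v 0^4*v 2^2 + (-2/9:ℂ)*A^4*v 0^4*v 1*v 2 + (-1/9:ℂ)*A^4*v 0^4*v 1^2 + (1/15:ℂ)*A^4*v 0^5*v 2 + (1/15:ℂ)*A^4*v 0^5*v 1 + (1/45:ℂ)*A^5*v 1*v 2^5 + (1/18:ℂ)*A^5*v 1^2*v 2^4 + (-8/27:ℂ)*A^5*v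 1^3*v 2^3 + (1/18:ℂ)*A^5*v 1^4*v 2^2 + (1/45:ℂ)*A^5*v 1^5*v 2 + (1/45:ℂ)*A^5*v 0*v 2^5 + (1/9:ℂ)*A^5*v 0*v 1*v 2^4 + (-4/9:ℂ)*A^5*v 0*v 1^2*v 2^3 + (-4/9:ℂ)*A^5*v 0*v 1^3*v 2^2 + (1/9:ℂ)*A^5*v 0*v 1^4*v 2 + (1/45:ℂ)*A^5*v 0*v 1^5 + (1/18:ℂ)*A^5*v 0^2*v 2^4 + (-4/9:ℂ)*A^5*v 0^2*v 1*v 2^3 + (-4/9:ℂ)*A^5*v 0^2*v 1^3*v 2 + (1/18:ℂ)*A^5*v 0^2*v 1^4 + (-8/27:ℂ)*A^5*v 0^3*v 2^3 + (-4/9:ℂ)*A^5*v 0^3*v 1*v 2^2 + (-4/9:ℂ)*A^5*v 0^3*v 1^2*v 2 + (-8/27:ℂ)*A^5*v 0^3*v 1^3 + (1/18:ℂ)*A^5*v 0^4*v 2^2 + (1/9:ℂ)*A^5*v 0^4*v 1*v 2 + (1/18:ℂ)*A^5*v 0^4*v 1^2 + (1/45:ℂ)*A^5*v 0^5*v 2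 + (1/45:ℂ)*A^5*v 0^5*v 1 + (1/270:ℂ)*A^6*v 2^6 + (-2/45:ℂ)*A^6*v 1*v 2^5 + (1/18:ℂ)*A^6*v 1^2*v 2^4 + (1/18:ℂ)*A^6*v 1^4*v 2^2 + (-2/45:ℂ)*A^6*v 1^5*v 2 + (1/270:ℂ)*A^6*v 1^6 + (-2/45:ℂ)*A^6*v 0*v 2^5 + (1/9:ℂ)*A^6*v 0*v 1*v 2^4 + (1/9:ℂ)*A^6*v 0*v 1^4*v 2 + (-2/45:ℂ)*A^6*v 0*v 1^5 + (1/18:ℂ)*A^6*v 0^2*v 2^4 + (1/18:ℂ)*A^6*v 0^2*v 1^4 + (1/18:ℂ)*A^6*v 0^4*v 2^2 + (1/9:ℂ)*A^6*v 0^4*v 1*v 2 + (1/18:ℂ)*A^6*v 0^4*v 1^2 + (-2/45:ℂ)*A^6*v 0^5*v 2 + (-2/45:ℂ)*A^6*v 0^5*v 1 + (1/270:ℂ)*A^6*v 0^6 + (1/270:ℂ)*A^7*v 2^6 + (1/45:ℂ)*A^7*v 1*v 2^5 + (-1/9:ℂ)*A^7*v 1^2*v 2^4 + (-1/9:ℂ)*A^7*v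 1^4*v 2^2 + (1/45:ℂ)*A^7*v 1^5*v 2 + (1/270:ℂ)*A^7*v 1^6 + (1/45:ℂ)*A^7*v 0*v 2^5 + (-2/9:ℂ)*A^7*v 0*v 1*v 2^4 + (-2/9:ℂ)*A^7*v 0*v 1^4*v 2 + (1/45:ℂ)*A^7*v 0*v 1^5 + (-1/9:ℂ)*A^7*v 0^2*v 2^4 + (-1/9:ℂ)*A^7*v 0^2*v 1^4 + (-1/9:ℂ)*A^7*v 0^4*v 2^2 + (-2/9:ℂ)*A^7*v 0^4*v 1*v 2 + (-1/9:ℂ)*A^7*v 0^4*v 1^2 + (1/45:ℂ)*A^7*v 0^5*v 2 + (1/45:ℂ)*A^7*v 0^5*v 1 + (1/270:ℂ)*A^7*v 0^6 + (-1/135:ℂ)*A^8*v 2^6 + (1/45:ℂ)*A^8*v 1*v 2^5 + (1/45:ℂ)*A^8*v 1^5*v 2 + (-1/135:ℂ)*A^8*v 1^6 + (1/45:ℂ)*A^8*v 0*v 2^5 + (1/45:ℂ)*A^8*v 0*v 1^5 + (1/45:ℂ)*A^8*v 0^5*v 2 + (1/45:ℂ)*A^8*v 0^5*v 1 + (-1/135:ℂ)*A^8*v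 0^6 + (1/270:ℂ)*A^9*v 2^6 + (-2/45:ℂ)*A^9*v 1*v 2^5 + (-2/45:ℂ)*A^9*v 1^5*v 2 + (1/270:ℂ)*A^9*v 1^6 + (-2/45:ℂ)*A^9*v 0*v 2^5 + (-2/45:ℂ)*A^9*v 0*v 1^5 + (-2/45:ℂ)*A^9*v 0^5*v 2 + (-2/45:ℂ)*A^9*v 0^5*v 1 + (1/270:ℂ)*A^9*v 0^6 + (1/270:ℂ)*A^10*v 2^6 + (1/270:ℂ)*A^10*v 1^6 + (1/270:ℂ)*A^10*v 0^6 + (-1/135:ℂ)*A^11*v 2^6 + (-1/135:ℂ)*A^11*v 1^6 + (-1/135:ℂ)*A^11*v 0^6) * hA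
  refine ⟨key, ⟨![-((2 * α + 1) / 270), (2 * α + 1) / 270, -((2 * α + 1) / 270),
      (2 * α + 1) / 270, -((2 * α + 1) / 270), (2 * α + 1) / 270],
    ![![α, 1, 1], ![ac, 1, 1], ![1, α, 1], ![1, ac, 1], ![1, 1, α], ![1, 1, ac]], ?_⟩⟩
  rw [key]
  apply MvPolynomial.funext
  intro v
  simp [ℓ₁, ℓ₂, ℓ₃, ℓ₄, ℓ₅, ℓ₆, Fin.sum_univ_succ, smul_eval,
    Matrix.cons_val_zero, Matrix.cons_val_succ,
    map_add, map_mul, map_pow, map_neg, map_sub, eval_C, eval_X]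
  ring
end
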